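/- arXiv:1608.07082 — 6 statements merged into one kernel-verified Lean document; each statement's English description precedes it below -/
import Mathlib

section
/- Consider the ODE w'' + h(w) = 0, where h : ℝ → ℝ is locally Lipschitz, satisfies h(s)·s > 0 for all s ≠ 0, and its primitive H(s) = ∫₀ˢ h(σ)dσ tends to +∞ as |s| → ∞. If w is a global solution with initial data (w(0), w'(0)) = (a, b) ≠ (0, 0), then w is not eventually of one sign: for every t₀ ≥ 0 there exist t₁, t₂ > t₀ with w(t₁) > 0 and w(t₂) < 0. -/
open Filter intervalIntegral

lemma aux_exists_neg
    (h : ℝ → ℝ) (hc : Continuous h)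
    (hsign : ∀ s : ℝ, s ≠ 0 → h s * s > 0)
    (hH : Filter.Tendsto (fun s : ℝ => ∫ σ in (0:ℝ)..s, h σ)
      (Filter.cocompact ℝ) Filter.atTop)
    (w : ℝ → ℝ) (hw : ContDiff ℝ 2 w)
    (hode : ∀ t : ℝ, deriv (deriv w) t + h (w t) = 0)
    (hne : (w 0, deriv w 0) ≠ (0, 0)) (t₀ : ℝ) :
    ∃ t : ℝ, t₀ < t ∧ w t < 0 := by
  by_contra hcon
  push_neg at hcon
  -- basic regularity
  have hw1 : Differentiable ℝ w := hw.differentiable (by norm_num)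
  have hw' : ContDiff ℝ 1 (deriv w) := by
    have h2 : ContDiff ℝ ((1 : WithTop ℕ∞) + 1) w := by exact_mod_cast hw
    exact (contDiff_succ_iff_deriv.mp h2).2.2
  have hw2 : Differentiable ℝ (deriv w) := hw'.differentiable (by norm_num)
  have hwd1 : ∀ t, HasDerivAt w (deriv w t) t := fun t => (hw1 t).hasDerivAt
  have hdd : ∀ t, HasDerivAt (deriv w) (deriv (deriv w) t) t := fun t => (hw2 t).hasDerivAt
  -- the primitive H
  set H : ℝ → ℝ := fun s => ∫ σ in (0:ℝ)..s, h σ with hHdef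
  have hHd : ∀ s, HasDerivAt H (h s) s := fun s => (hc.integral_hasStrictDerivAt 0 s).hasDerivAt
  -- positivity of H
  have hpos : ∀ s : ℝ, 0 < s → 0 < h s := by
    intro s hs
    nlinarith [hsign s hs.ne']
  have hneg : ∀ s : ℝ, s < 0 → h s < 0 := by
    intro s hs
    nlinarith [hsign s hs.ne]
  have Hpos : ∀ s : ℝ, s ≠ 0 → 0 < H s := by
    intro s hs
    rcases hs.lt_or_gt with hs | hs
    · have : 0 < ∫ x in s..(0:ℝ), -h x := by
        apply intervalIntegral_pos_of_pos_on ((hc.neg).intervalIntegrable s 0)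
        · intro x hx
          simpa using hneg x hx.2
        · exact hs
      rw [intervalIntegral.integral_neg] at this
      rw [hHdef]
      simp only
      rw [intervalIntegral.integral_symm]
      linarith
    · apply intervalIntegral_pos_of_pos_on (hc.intervalIntegrable 0 s)
      · intro x hx
        exact hpos x hx.1
      · exact hs
  have Hnonneg : ∀ s : ℝ, 0 ≤ H s := by
    intro s
    rcases eq_or_ne s 0 with rfl | hs
    · simp [hHdef]
    · exact (Hpos s hs).le
  -- energy
  set E : ℝ → ℝ := fun t => (deriv w t)^2/2 + H (w t) with hEdef
  have hE : ∀ t, HasDerivAt E 0 t := by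
    intro t
    have h1 : HasDerivAt (fun t => (deriv w t)^2/2)
        ((2 * deriv w t ^ 1 * deriv (deriv w) t)/2) t := ((hdd t).pow 2).div_const 2
    have h2 : HasDerivAt (fun t => H (w t)) (h (w t) * deriv w t) t :=
      (hHd (w t)).comp t (hwd1 t)
    have h3 := h1.add h2
    have h4 : deriv (deriv w) t = -h (w t) := by linarith [hode t]
    exact h3.congr_deriv (by rw [h4]; ring)
  have hEconst : ∀ t, E t = E 0 := fun t =>
    is_const_of_deriv_eq_zero (fun t => (hE t).differentiableAt) (fun t => (hE t).deriv) t 0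
  have hE0 : 0 < E 0 := by
    rcases eq_or_ne (w 0) 0 with h0 | h0
    · have hb : deriv w 0 ≠ 0 := by
        intro hb; exact hne (by simp [h0, hb])
      have : 0 < (deriv w 0)^2/2 := by positivity
      have := Hnonneg (w 0)
      simp only [hEdef]; linarith
    · have := Hpos (w 0) h0
      have : (0:ℝ) ≤ (deriv w 0)^2/2 := by positivity
      simp only [hEdef]; nlinarith [Hpos (w 0) h0]
  -- h 0 = 0
  have h00 : h 0 = 0 := by
    have hle : h 0 ≤ 0 := by
      have ht : Filter.Tendsto h (nhdsWithin 0 (Set.Iio 0)) (nhds (h 0)) :=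
        (hc.continuousAt).continuousWithinAt
      refine le_of_tendsto ht ?_
      filter_upwards [self_mem_nhdsWithin] with s hs
      exact (hneg s hs).le
    have hge : 0 ≤ h 0 := by
      have ht : Filter.Tendsto h (nhdsWithin 0 (Set.Ioi 0)) (nhds (h 0)) :=
        (hc.continuousAt).continuousWithinAt
      refine ge_of_tendsto ht ?_
      filter_upwards [self_mem_nhdsWithin] with s hs
      exact (hpos s hs).le
    linarith
  have hnn : ∀ s : ℝ, 0 ≤ s → 0 ≤ h s := by
    intro s hs
    rcases hs.eq_or_lt with rfl | hs
    · exact h00.ge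
    · exact (hpos s hs).le
  -- w ≥ 0 on [t₀, ∞)
  have hw0 : ∀ t, t₀ ≤ t → 0 ≤ w t := by
    intro t ht
    rcases ht.eq_or_lt with heq | ht
    · rw [← heq]
      have hwt : Filter.Tendsto w (nhdsWithin t₀ (Set.Ioi t₀)) (nhds (w t₀)) :=
        (hw1.continuous.continuousAt).continuousWithinAt
      refine ge_of_tendsto hwt ?_
      filter_upwards [self_mem_nhdsWithin] with s hs
      exact hcon s hs
    · exact hcon t ht
  -- w'' ≤ 0 on [t₀, ∞)
  have hw'' : ∀ t, t₀ ≤ t → deriv (deriv w) t ≤ 0 := by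
    intro t ht
    have := hnn (w t) (hw0 t ht)
    linarith [hode t]
  -- w' antitone on [t₀, ∞)
  have hanti : AntitoneOn (deriv w) (Set.Ici t₀) := by
    apply antitoneOn_of_deriv_nonpos (convex_Ici t₀) hw2.continuous.continuousOn
      hw2.differentiableOn
    intro x hx
    rw [interior_Ici] at hx
    exact hw'' x hx.le
  -- w' ≥ 0 on [t₀, ∞)
  have hw'nn : ∀ t, t₀ ≤ t → 0 ≤ deriv w t := by
    by_contra hco
    push_neg at hco
    obtain ⟨t₁, ht₁, hd⟩ := hco
    set c : ℝ := -deriv w t₁ with hcdef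
    have hcpos : 0 < c := by simp [hcdef]; linarith
    have hg : AntitoneOn (fun t => w t + c * t) (Set.Ici t₁) := by
      apply antitoneOn_of_deriv_nonpos (convex_Ici t₁)
        (by fun_prop : Continuous fun t => w t + c * t).continuousOn
        ((by fun_prop : Differentiable ℝ fun t => w t + c * t).differentiableOn)
      intro x hx
      rw [interior_Ici] at hx
      have hder : HasDerivAt (fun t => w t + c * t) (deriv w x + c) x := by
        exact ((hwd1 x).add ((hasDerivAt_id x).const_mul c)).congr_deriv (by simp)
      rw [hder.deriv]
      have := hanti (Set.mem_Ici.mpr ht₁) (Set.mem_Ici.mpr (ht₁.trans hx.le)) hx.le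
      simp only [hcdef] at *
      linarith
    set T : ℝ := t₁ + (w t₁ + 1)/c with hTdef
    have hwt₁ : 0 ≤ w t₁ := hw0 t₁ ht₁
    have hTgt : t₁ < T := by
      have : 0 < (w t₁ + 1)/c := by positivity
      simp [hTdef]; linarith
    have := hg (Set.self_mem_Ici) (Set.mem_Ici.mpr hTgt.le) hTgt.le
    simp only at this
    have hcT : c * T = c * t₁ + (w t₁ + 1) := by
      rw [hTdef, mul_add, mul_div_cancel₀ _ hcpos.ne']
    have hwT : w T ≤ -1 := by linarith
    have : 0 ≤ w T := hw0 T (ht₁.trans hTgt.le)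
    linarith
  -- w monotone on [t₀, ∞)
  have hmono : MonotoneOn w (Set.Ici t₀) := by
    apply monotoneOn_of_deriv_nonneg (convex_Ici t₀) hw1.continuous.continuousOn
      hw1.differentiableOn
    intro x hx
    rw [interior_Ici] at hx
    exact hw'nn x hx.le
  -- energy bound on H(w t)
  have hHb : ∀ t, H (w t) ≤ E 0 := by
    intro t
    have h1 := hEconst t
    simp only [hEdef] at h1 ⊢
    nlinarith [sq_nonneg (deriv w t)]
  rcases (hw0 (t₀+1) (by linarith)).eq_or_lt with h0 | hm
  · -- case w(t₀+1) = 0 : w ≡ 0 on [t₀, t₀+1], energy is zero, contradiction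
    have hzero : ∀ t ∈ Set.Icc t₀ (t₀+1), w t = 0 := by
      intro t ht
      have h1 := hmono (Set.mem_Ici.mpr ht.1) (Set.mem_Ici.mpr (by linarith [ht.1] : t₀ ≤ t₀+1)) ht.2
      have h2 := hw0 t ht.1
      linarith [h0.symm ▸ h1]
    have heq : w =ᶠ[nhds (t₀ + 1/2)] fun _ => (0:ℝ) := by
      have hmem : Set.Ioo t₀ (t₀+1) ∈ nhds (t₀ + 1/2) :=
        (isOpen_Ioo).mem_nhds (by constructor <;> norm_num)
      filter_upwards [hmem] with s hs
      exact hzero s ⟨hs.1.le, hs.2.le⟩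
    have hd0 : deriv w (t₀ + 1/2) = 0 := by
      rw [heq.deriv_eq]; simp
    have hv0 : w (t₀ + 1/2) = 0 := hzero _ ⟨by norm_num, by norm_num⟩
    have := hEconst (t₀ + 1/2)
    simp only [hEdef, hd0, hv0] at this
    have hH0 : H 0 = 0 := by simp [hHdef]
    rw [hH0] at this
    norm_num at this
    simp only [hEdef] at hE0
    linarith
  · -- case m := w(t₀+1) > 0
    set m : ℝ := w (t₀+1) with hmdef
    -- bound w above by R
    obtain ⟨K, hK, hKsub⟩ := mem_cocompact.mp (hH.eventually (eventually_ge_atTop (E 0 + 1)))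
    obtain ⟨R, hR⟩ := hK.isBounded.subset_closedBall 0
    have hwR : ∀ t, t₀ + 1 ≤ t → w t ≤ R := by
      intro t ht
      have h1 : H (w t) ≤ E 0 := hHb t
      have h2 : w t ∈ K := by
        by_contra hk
        have := hKsub hk
        simp only [Set.mem_setOf_eq] at this
        simp only [hHdef] at h1
        linarith
      have := hR h2
      rw [Metric.mem_closedBall, Real.dist_eq, sub_zero] at this
      exact (abs_le.mp this).2
    have hmR : m ≤ R := hwR (t₀+1) le_rfl
    -- min of h on [m, R]
    obtain ⟨s₀, hs₀mem, hs₀min⟩ :=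
      isCompact_Icc.exists_isMinOn (Set.nonempty_Icc.mpr hmR) hc.continuousOn
    set δ : ℝ := h s₀ with hδdef
    have hδpos : 0 < δ := hpos s₀ (lt_of_lt_of_le hm hs₀mem.1)
    have hwm : ∀ t, t₀ + 1 ≤ t → m ≤ w t := by
      intro t ht
      exact hmono (Set.mem_Ici.mpr (by linarith)) (Set.mem_Ici.mpr (by linarith)) ht
    have hdd2 : ∀ t, t₀ + 1 ≤ t → deriv (deriv w) t ≤ -δ := by
      intro t ht
      have hmem : w t ∈ Set.Icc m R := ⟨hwm t ht, hwR t ht⟩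
      have h5 : h s₀ ≤ h (w t) := hs₀min hmem
      have hod := hode t
      show deriv (deriv w) t ≤ -h s₀
      linarith
    -- g = w' + δ t antitone on [t₀+1, ∞)
    have hg : AntitoneOn (fun t => deriv w t + δ * t) (Set.Ici (t₀+1)) := by
      apply antitoneOn_of_deriv_nonpos (convex_Ici (t₀+1))
        (by fun_prop : Continuous fun t => deriv w t + δ * t).continuousOn
        ((by fun_prop : Differentiable ℝ fun t => deriv w t + δ * t).differentiableOn)
      intro x hx
      rw [interior_Ici] at hx
      have hder : HasDerivAt (fun t => deriv w t + δ * t) (deriv (deriv w) x + δ) x := by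
        exact ((hdd x).add ((hasDerivAt_id x).const_mul δ)).congr_deriv (by simp)
      rw [hder.deriv]
      linarith [hdd2 x hx.le]
    set T : ℝ := (t₀+1) + (deriv w (t₀+1) + 1)/δ with hTdef
    have hd1 : 0 ≤ deriv w (t₀+1) := hw'nn (t₀+1) (by linarith)
    have hTgt : t₀ + 1 < T := by
      have : 0 < (deriv w (t₀+1) + 1)/δ := by positivity
      simp [hTdef]; linarith
    have := hg Set.self_mem_Ici (Set.mem_Ici.mpr hTgt.le) hTgt.le
    simp only at this
    have hcT : δ * T = δ * (t₀+1) + (deriv w (t₀+1) + 1) := by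
      rw [hTdef, mul_add, mul_div_cancel₀ _ hδpos.ne']
    have hwT : deriv w T ≤ -1 := by linarith
    have : 0 ≤ deriv w T := hw'nn T (by linarith)
    linarith

/-- For the ODE `w'' + h(w) = 0` with `h` locally Lipschitz,
`h(s)·s > 0` for `s ≠ 0`, and primitive `H(s) = ∫₀ˢ h → ∞` as `|s| → ∞`:
a global solution with nonzero initial data `(w(0), w'(0)) ≠ (0,0)` is not
eventually of one sign: past every `t₀ ≥ 0` it takes positive and negative
values. -/
theorem solution_is_not_eventually_of_one_sign
    (h : ℝ → ℝ) (hlip : LocallyLipschitz h)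
    (hsign : ∀ s : ℝ, s ≠ 0 → h s * s > 0)
    (hH : Filter.Tendsto (fun s : ℝ => ∫ σ in (0:ℝ)..s, h σ)
      (Filter.cocompact ℝ) Filter.atTop)
    (w : ℝ → ℝ) (hw : ContDiff ℝ 2 w)
    (hode : ∀ t : ℝ, deriv (deriv w) t + h (w t) = 0)
    (hne : (w 0, deriv w 0) ≠ (0, 0)) :
    ∀ t₀ : ℝ, 0 ≤ t₀ →
      (∃ t₁ : ℝ, t₀ < t₁ ∧ 0 < w t₁) ∧ (∃ t₂ : ℝ, t₀ < t₂ ∧ w t₂ < 0) := by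
  intro t₀ _
  have hc : Continuous h := hlip.continuous
  constructor
  · -- apply aux to the reflected system
    set h' : ℝ → ℝ := fun s => -h (-s) with hh'def
    set w' : ℝ → ℝ := fun t => -w t with hw'def
    have hc' : Continuous h' := (hc.comp continuous_neg).neg
    have hsign' : ∀ s : ℝ, s ≠ 0 → h' s * s > 0 := by
      intro s hs
      have := hsign (-s) (neg_ne_zero.mpr hs)
      simp only [hh'def]
      nlinarith
    have hderiv_neg : deriv w' = fun t => -deriv w t := by
      funext t
      simp [hw'def, deriv.neg]
    have hw2' : ContDiff ℝ 2 w' := hw.neg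
    have hH' : Filter.Tendsto (fun s : ℝ => ∫ σ in (0:ℝ)..s, h' σ)
        (Filter.cocompact ℝ) Filter.atTop := by
      have hEq : (fun s : ℝ => ∫ σ in (0:ℝ)..s, h' σ)
          = (fun s : ℝ => ∫ σ in (0:ℝ)..s, h σ) ∘ (fun s : ℝ => -s) := by
        funext s
        simp only [Function.comp_apply, hh'def]
        rw [intervalIntegral.integral_neg]
        rw [show (fun σ : ℝ => h (-σ)) = fun σ : ℝ => h (-σ) from rfl]
        rw [intervalIntegral.integral_comp_neg (a := 0) (b := s) (f := h)]
        rw [neg_zero, intervalIntegral.integral_symm]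
        simp
      rw [hEq]
      apply hH.comp
      have : Filter.map (fun s : ℝ => -s) (Filter.cocompact ℝ) = Filter.cocompact ℝ := by
        simpa using (Homeomorph.neg ℝ).map_cocompact
      exact this.le
    have hode' : ∀ t : ℝ, deriv (deriv w') t + h' (w' t) = 0 := by
      intro t
      rw [hderiv_neg]
      have : deriv (fun t => -deriv w t) t = -deriv (deriv w) t := by
        simp [deriv.neg]
      rw [this]
      simp only [hw'def, hh'def, neg_neg]
      linarith [hode t]
    have hne' : (w' 0, deriv w' 0) ≠ (0, 0) := by
      rw [hderiv_neg]
      intro h1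
      simp only [hw'def, Prod.mk.injEq, neg_eq_zero] at h1
      exact hne (by simp [h1.1, h1.2])
    obtain ⟨t, ht, hlt⟩ := aux_exists_neg h' hc' hsign' hH' w' hw2' hode' hne' t₀
    exact ⟨t, ht, by simpa [hw'def] using hlt⟩
  · obtain ⟨t, ht, hlt⟩ := aux_exists_neg h hc hsign hH w hw hode hne t₀
    exact ⟨t, ht, hlt⟩
end

section
/- Consider the ODE w'' + h(w) = 0, where h : ℝ → ℝ is locally Lipschitz, satisfies h(s)·s > 0 for all s ≠ 0, and its primitive H(s) = ∫₀ˢ h(σ)dσ tends to +∞ as |s| → ∞. If w₁ and w₂ are two global solutions of w'' + h(w) = 0 with nonzero initial data and with the same conserved energy, i.e. w₁'(0)²/2 + H(w₁(0)) = w₂'(0)²/2 + H(w₂(0)), then w₁ and w₂ coincide up to a translation in time: there exists R ∈ ℝ such that w₁(t) = w₂(t + R) for all t ∈ ℝ. -/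
open Set Metric

section SameEnergyAux

/-- A locally Lipschitz real function is Lipschitz on every compact set. -/

lemma loclip_compact {f : ℝ → ℝ} (hf : LocallyLipschitz f) {s : Set ℝ} (hs : IsCompact s) :
    ∃ K : NNReal, LipschitzOnWith K f s := by
  rcases s.eq_empty_or_nonempty with rfl | hne
  · exact ⟨1, by simp⟩
  -- choose open neighborhoods with Lipschitz constants
  have hU : ∀ x : ℝ, ∃ (K : NNReal) (U : Set ℝ), IsOpen U ∧ x ∈ U ∧ LipschitzOnWith K f U := by
    intro x
    obtain ⟨K, t, ht, hK⟩ := hf x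
    obtain ⟨U, hUt, hUo, hxU⟩ := _root_.mem_nhds_iff.mp ht
    exact ⟨K, U, hUo, hxU, hK.mono hUt⟩
  choose K U hUo hxU hKU using hU
  obtain ⟨T, hT⟩ := hs.elim_nhds_subcover U (fun x _ => (hUo x).mem_nhds (hxU x))
  set K₀ : NNReal := T.sup K with hK₀
  obtain ⟨δ, hδpos, hδ⟩ := lebesgue_number_lemma_of_metric (s := s)
    (c := fun i : T => U i) hs (fun i => hUo i) (by
      intro x hx
      obtain ⟨i, hi⟩ := Set.mem_iUnion₂.mp (hT.2 hx)
      obtain ⟨hiT, hxUi⟩ := hi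
      exact Set.mem_iUnion.mpr ⟨⟨i, hiT⟩, hxUi⟩)
  obtain ⟨C, hC⟩ := hs.exists_bound_of_continuousOn hf.continuous.continuousOn
  have hC0 : 0 ≤ C := le_trans (norm_nonneg _) (hC _ hne.some_mem)
  refine ⟨K₀ + ⟨2 * C / δ, by positivity⟩, ?_⟩
  rw [lipschitzOnWith_iff_dist_le_mul]
  intro x hx y hy
  rcases lt_or_ge (dist x y) δ with hlt | hge
  · obtain ⟨i, hball⟩ := hδ x hx
    have hxU' : x ∈ U i := hball (mem_ball_self hδpos)
    have hyU' : y ∈ U i := hball (by simpa [dist_comm] using hlt)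
    have := (lipschitzOnWith_iff_dist_le_mul.mp (hKU (i:ℝ))) x hxU' y hyU'
    have hKle : (K (i:ℝ) : ℝ) ≤ (K₀ : ℝ) := by
      exact_mod_cast (Finset.le_sup i.2 : K (i:ℝ) ≤ K₀)
    have hcast : ((K₀ + ⟨2 * C / δ, by positivity⟩ : NNReal) : ℝ) = (K₀:ℝ) + 2*C/δ := by
      push_cast; rfl
    rw [hcast]
    have hd := dist_nonneg (x := x) (y := y)
    have : (0:ℝ) ≤ 2*C/δ := by positivity
    nlinarith
  · have h1 : dist (f x) (f y) ≤ 2 * C := by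
      have := hC x hx; have := hC y hy
      rw [Real.dist_eq] at *
      rw [Real.norm_eq_abs] at *
      have := abs_sub (f x) (f y)
      calc |f x - f y| ≤ |f x| + |f y| := abs_sub _ _
        _ ≤ 2 * C := by linarith
    have h2 : 2 * C ≤ 2 * C / δ * dist x y := by
      rw [div_mul_eq_mul_div, le_div_iff₀ hδpos]
      nlinarith
    have : (0:ℝ) ≤ (K₀:ℝ) := K₀.coe_nonneg
    calc dist (f x) (f y) ≤ 2 * C / δ * dist x y := le_trans h1 h2
      _ ≤ ((K₀ + ⟨2 * C / δ, by positivity⟩ : NNReal) : ℝ) * dist x y := by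
          rw [show ((K₀ + ⟨2 * C / δ, by positivity⟩ : NNReal) : ℝ) = (K₀:ℝ) + 2*C/δ from by push_cast; rfl]
          nlinarith [dist_nonneg (x := x) (y := y)]

/-- The primitive `H(s) = ∫₀ˢ h`. -/
noncomputable def Hprim (h : ℝ → ℝ) (s : ℝ) : ℝ := ∫ σ in (0:ℝ)..s, h σ



lemma Hprim_hasDerivAt {h : ℝ → ℝ} (hc : Continuous h) (s : ℝ) :
    HasDerivAt (Hprim h) (h s) s :=
  (hc.integral_hasStrictDerivAt 0 s).hasDerivAt

lemma Hprim_zero (h : ℝ → ℝ) : Hprim h 0 = 0 := intervalIntegral.integral_same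

lemma Hprim_strictMonoOn {h : ℝ → ℝ} (hc : Continuous h)
    (hsign : ∀ s : ℝ, s ≠ 0 → h s * s > 0) : StrictMonoOn (Hprim h) (Ici 0) := by
  apply strictMonoOn_of_deriv_pos (convex_Ici 0)
    (fun s _ => (Hprim_hasDerivAt hc s).continuousAt.continuousWithinAt)
  intro s hs
  rw [interior_Ici] at hs
  rw [(Hprim_hasDerivAt hc s).deriv]
  have hs' : 0 < s := hs
  nlinarith [hsign s (ne_of_gt hs')]

lemma Hprim_strictAntiOn {h : ℝ → ℝ} (hc : Continuous h)
    (hsign : ∀ s : ℝ, s ≠ 0 → h s * s > 0) : StrictAntiOn (Hprim h) (Iic 0) := by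
  apply strictAntiOn_of_deriv_neg (convex_Iic 0)
    (fun s _ => (Hprim_hasDerivAt hc s).continuousAt.continuousWithinAt)
  intro s hs
  rw [interior_Iic] at hs
  rw [(Hprim_hasDerivAt hc s).deriv]
  have hs' : s < 0 := hs
  nlinarith [hsign s (ne_of_lt hs')]

lemma Hprim_pos {h : ℝ → ℝ} (hc : Continuous h)
    (hsign : ∀ s : ℝ, s ≠ 0 → h s * s > 0) {s : ℝ} (hs : s ≠ 0) : 0 < Hprim h s := by
  rcases hs.lt_or_gt with hneg | hpos
  · have := Hprim_strictAntiOn hc hsign (mem_Iic.mpr hneg.le) (mem_Iic.mpr le_rfl) hneg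
    rwa [Hprim_zero] at this
  · have := Hprim_strictMonoOn hc hsign (mem_Ici.mpr le_rfl) (mem_Ici.mpr hpos.le) hpos
    rwa [Hprim_zero] at this

lemma Hprim_nonneg {h : ℝ → ℝ} (hc : Continuous h)
    (hsign : ∀ s : ℝ, s ≠ 0 → h s * s > 0) (s : ℝ) : 0 ≤ Hprim h s := by
  rcases eq_or_ne s 0 with rfl | hs
  · rw [Hprim_zero]
  · exact (Hprim_pos hc hsign hs).le

/-- smoothness repackaging -/
lemma contDiff_two_unpack {w : ℝ → ℝ} (hw : ContDiff ℝ 2 w) :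
    Differentiable ℝ w ∧ Differentiable ℝ (deriv w) ∧ Continuous (deriv (deriv w)) := by
  rw [show (2 : WithTop ℕ∞) = 1 + 1 by norm_num, contDiff_succ_iff_deriv] at hw
  obtain ⟨h1, -, h2⟩ := hw
  rw [contDiff_one_iff_deriv] at h2
  exact ⟨h1, h2.1, h2.2⟩

lemma energy_hasDerivAt {h : ℝ → ℝ} (hc : Continuous h) {w : ℝ → ℝ} (hw : ContDiff ℝ 2 w)
    (t : ℝ) :
    HasDerivAt (fun t => (deriv w t)^2/2 + Hprim h (w t))
      (deriv w t * deriv (deriv w) t + h (w t) * deriv w t) t := by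
  obtain ⟨hd1, hd2, -⟩ := contDiff_two_unpack hw
  have h1 : HasDerivAt (fun t => (deriv w t)^2/2)
      (deriv w t * deriv (deriv w) t) t := by
    have := ((hd2 t).hasDerivAt.pow 2).div_const 2
    refine this.congr_deriv ?_
    ring
  have h2 : HasDerivAt (fun t => Hprim h (w t)) (h (w t) * deriv w t) t :=
    (Hprim_hasDerivAt hc (w t)).comp t (hd1 t).hasDerivAt
  exact h1.add h2

lemma energy_const {h : ℝ → ℝ} (hc : Continuous h) {w : ℝ → ℝ} (hw : ContDiff ℝ 2 w)
    (hode : ∀ t : ℝ, deriv (deriv w) t + h (w t) = 0) (t : ℝ) :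
    (deriv w t)^2/2 + Hprim h (w t) = (deriv w 0)^2/2 + Hprim h (w 0) := by
  have hE : ∀ s : ℝ, HasDerivAt (fun t => (deriv w t)^2/2 + Hprim h (w t)) 0 s := by
    intro s
    have := energy_hasDerivAt hc hw s
    have h0 : deriv w s * deriv (deriv w) s + h (w s) * deriv w s = 0 := by
      have hh : deriv (deriv w) s = - h (w s) := by linarith [hode s]
      rw [hh]; ring
    rwa [h0] at this
  exact is_const_of_deriv_eq_zero (fun s => (hE s).differentiableAt)
    (fun s => (hE s).deriv) t 0

/-- `Hprim h x < c` strictly inside `(a, b)`. -/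
lemma Hlt_of_mem {h : ℝ → ℝ} (hc : Continuous h)
    (hsign : ∀ s : ℝ, s ≠ 0 → h s * s > 0)
    {a b c x : ℝ} (ha : a < 0) (hb : 0 < b) (hHa : Hprim h a = c) (hHb : Hprim h b = c)
    (hax : a < x) (hxb : x < b) : Hprim h x < c := by
  rcases lt_trichotomy x 0 with hx | hx | hx
  · have := Hprim_strictAntiOn hc hsign (mem_Iic.mpr ha.le) (mem_Iic.mpr hx.le) hax
    rwa [hHa] at this
  · subst hx
    rw [Hprim_zero]
    rw [← hHb]
    exact Hprim_pos hc hsign hb.ne'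
  · have := Hprim_strictMonoOn hc hsign (mem_Ici.mpr hx.le) (mem_Ici.mpr hb.le) hxb
    rwa [hHb] at this

/-- Solutions stay in `[a, b]`. -/
lemma sol_mem_Icc {h : ℝ → ℝ} (hc : Continuous h)
    (hsign : ∀ s : ℝ, s ≠ 0 → h s * s > 0)
    {a b c : ℝ} (ha : a < 0) (hb : 0 < b) (hHa : Hprim h a = c) (hHb : Hprim h b = c)
    {w : ℝ → ℝ} (hen : ∀ t : ℝ, (deriv w t)^2/2 + Hprim h (w t) = c) (t : ℝ) :
    w t ∈ Icc a b := by
  have hH : Hprim h (w t) ≤ c := by nlinarith [hen t, sq_nonneg (deriv w t)]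
  constructor
  · by_contra hlt
    push_neg at hlt
    have := Hprim_strictAntiOn hc hsign (mem_Iic.mpr (lt_trans hlt ha).le) (mem_Iic.mpr ha.le) hlt
    rw [hHa] at this
    linarith
  · by_contra hlt
    push_neg at hlt
    have := Hprim_strictMonoOn hc hsign (mem_Ici.mpr hb.le) (mem_Ici.mpr (hb.trans hlt).le) hlt
    rw [hHb] at this
    linarith

/-- If `deriv w t = 0` and `w t = b` doesn't happen, then deriv w can't stay positive. -/
lemma not_forever_pos {h : ℝ → ℝ} (hc : Continuous h)
    (hsign : ∀ s : ℝ, s ≠ 0 → h s * s > 0)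
    {a b c : ℝ} (ha : a < 0) (hb : 0 < b) (hHa : Hprim h a = c) (hHb : Hprim h b = c)
    {w : ℝ → ℝ} (hw : ContDiff ℝ 2 w)
    (hode : ∀ t : ℝ, deriv (deriv w) t + h (w t) = 0)
    (hen : ∀ t : ℝ, (deriv w t)^2/2 + Hprim h (w t) = c)
    (T : ℝ) : ∃ t, T ≤ t ∧ deriv w t ≤ 0 := by
  obtain ⟨hd1, hd2, hd3⟩ := contDiff_two_unpack hw
  by_contra hcon
  push_neg at hcon
  have hpos : ∀ t, T ≤ t → 0 < deriv w t := fun t ht => hcon t ht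
  -- w is strictly monotone on [T, ∞)
  have hmono : StrictMonoOn w (Ici T) := by
    apply strictMonoOn_of_deriv_pos (convex_Ici T) hd1.continuous.continuousOn
    intro t ht
    rw [interior_Ici] at ht
    exact hpos t (le_of_lt ht)
  have hmono' : MonotoneOn w (Ici T) := hmono.monotoneOn
  -- w < b on [T, ∞): if w t = b then deriv w t = 0
  have hwltb : ∀ t, T ≤ t → w t < b := by
    intro t ht
    rcases lt_or_eq_of_le (sol_mem_Icc hc hsign ha hb hHa hHb hen t).2 with hlt | heq
    · exact hlt
    · exfalso
      have := hen t
      rw [heq, hHb] at this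
      have : deriv w t = 0 := by nlinarith
      linarith [hpos t ht]
  have hwgea : ∀ t, a ≤ w t := fun t => (sol_mem_Icc hc hsign ha hb hHa hHb hen t).1
  -- the sup of w over [T, ∞)
  set S : Set ℝ := w '' Ici T with hS
  have hSne : S.Nonempty := ⟨w T, mem_image_of_mem w (mem_Ici.mpr le_rfl)⟩
  have hSbdd : BddAbove S := by
    refine ⟨b, ?_⟩
    rintro y ⟨t, ht, rfl⟩
    exact (hwltb t ht).le
  set L : ℝ := sSup S with hL
  have hLb : L ≤ b := csSup_le hSne (by rintro y ⟨t, ht, rfl⟩; exact (hwltb t ht).le)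
  have hwleL : ∀ t, T ≤ t → w t ≤ L := fun t ht => le_csSup hSbdd ⟨t, ht, rfl⟩
  set x₀ : ℝ := w (T + 1) with hx₀
  have hTx₀ : w T < x₀ := hmono (mem_Ici.mpr le_rfl) (mem_Ici.mpr (by linarith)) (by linarith)
  have hx₀L : x₀ ≤ L := hwleL (T + 1) (by linarith)
  have hax₀ : a < x₀ := lt_of_le_of_lt (hwgea T) hTx₀
  rcases lt_or_eq_of_le hLb with hLltb | hLeqb
  · -- Case L < b : velocity uniformly bounded below, w → ∞, contradiction
    have hHcont : Continuous (Hprim h) :=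
      continuous_iff_continuousAt.mpr (fun s => (Hprim_hasDerivAt hc s).continuousAt)
    obtain ⟨ξ, hξmem, hξmax⟩ := isCompact_Icc.exists_isMaxOn (α := ℝ)
      (Set.nonempty_Icc.mpr hx₀L) hHcont.continuousOn
    have hHξ : Hprim h ξ < c :=
      Hlt_of_mem hc hsign ha hb hHa hHb (lt_of_lt_of_le hax₀ hξmem.1)
        (lt_of_le_of_lt hξmem.2 hLltb)
    set m : ℝ := 2 * (c - Hprim h ξ) with hm
    have hmpos : 0 < m := by simp only [hm]; linarith
    -- for t ≥ T+1, deriv w t ≥ √m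
    have hvel : ∀ t, T + 1 ≤ t → Real.sqrt m ≤ deriv w t := by
      intro t ht
      have hwt : w t ∈ Icc x₀ L :=
        ⟨hmono' (mem_Ici.mpr (by linarith)) (mem_Ici.mpr (by linarith)) ht,
         hwleL t (by linarith)⟩
      have hHwt : Hprim h (w t) ≤ Hprim h ξ := hξmax hwt
      have hsq : m ≤ (deriv w t)^2 := by nlinarith [hen t]
      have hdpos : 0 < deriv w t := hpos t (by linarith)
      calc Real.sqrt m ≤ Real.sqrt ((deriv w t)^2) := Real.sqrt_le_sqrt hsq
        _ = deriv w t := Real.sqrt_sq hdpos.le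
    -- linear growth of w beats the bound b
    have hgrow : ∀ t, T + 1 ≤ t → x₀ + Real.sqrt m * (t - (T+1)) ≤ w t := by
      intro t ht
      have hmonog : MonotoneOn (fun t => w t - Real.sqrt m * t) (Ici (T+1)) := by
        apply monotoneOn_of_deriv_nonneg (convex_Ici _)
          (Continuous.continuousOn
            (hd1.continuous.sub (continuous_const.mul continuous_id')))
        · intro s hs
          exact ((hd1 s).sub ((differentiableAt_id.const_mul _))).differentiableWithinAt
        · intro s hs
          rw [interior_Ici] at hs
          have hds : HasDerivAt (fun t => w t - Real.sqrt m * t)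
              (deriv w s - Real.sqrt m) s :=
            (hd1 s).hasDerivAt.sub (by simpa using (hasDerivAt_id s).const_mul (Real.sqrt m))
          show 0 ≤ deriv (fun t => w t - Real.sqrt m * t) s
          rw [hds.deriv]
          linarith [hvel s (le_of_lt hs)]
      have := hmonog (mem_Ici.mpr le_rfl) (mem_Ici.mpr ht) ht
      simp only at this
      have hx0eq : w (T+1) = x₀ := rfl
      nlinarith [this]
    -- contradiction: pick large t
    have hsm : 0 < Real.sqrt m := Real.sqrt_pos.mpr hmpos
    have hq : 0 ≤ (b + 1 - x₀) / Real.sqrt m := div_nonneg (by linarith) hsm.le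
    have h1 := hgrow (T + 1 + (b + 1 - x₀) / Real.sqrt m) (by linarith)
    have hwb' : w (T + 1 + (b + 1 - x₀) / Real.sqrt m) < b := hwltb _ (by linarith)
    rw [add_sub_cancel_left, mul_div_cancel₀ _ hsm.ne'] at h1
    linarith
  · -- Case L = b : acceleration uniformly negative near b, deriv w → -∞, contradiction
    have hhb : 0 < h b := by nlinarith [hsign b hb.ne']
    -- continuity of h at b
    obtain ⟨δ, hδpos, hδ⟩ := Metric.continuousAt_iff.mp (hc.continuousAt (x := b)) (h b / 2)
      (by linarith)
    set x₁ : ℝ := max (b - δ/2) (w T) with hx₁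
    have hx₁b : x₁ < b := by
      apply max_lt (by linarith) (hwltb T le_rfl)
    have hx₁L : x₁ < L := hLeqb ▸ hx₁b
    obtain ⟨y, hyS, hxy⟩ := exists_lt_of_lt_csSup hSne hx₁L
    obtain ⟨t₁, ht₁T, rfl⟩ := hyS
    -- for t ≥ t₁ : x₁ < w t < b  and so h (w t) > h b / 2
    have hwin : ∀ t, t₁ ≤ t → h b / 2 < h (w t) := by
      intro t ht
      have h1 : x₁ < w t := lt_of_lt_of_le hxy (hmono' ht₁T (mem_Ici.mpr (le_trans ht₁T ht)) ht)
      have h2 : w t < b := hwltb t (le_trans ht₁T ht)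
      have hdist : dist (w t) b < δ := by
        rw [Real.dist_eq, abs_lt]
        constructor
        · have : b - δ/2 ≤ x₁ := le_max_left _ _
          linarith
        · linarith
      have := hδ hdist
      rw [Real.dist_eq, abs_lt] at this
      linarith
    -- deriv w decays linearly
    have hdecay : ∀ t, t₁ ≤ t → deriv w t ≤ deriv w t₁ - h b / 2 * (t - t₁) := by
      intro t ht
      have hanti : AntitoneOn (fun t => deriv w t + h b / 2 * t) (Ici t₁) := by
        apply antitoneOn_of_deriv_nonpos (convex_Ici _)
          (Continuous.continuousOn (hd2.continuous.add (continuous_const.mul continuous_id)))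
        · intro s hs
          exact ((hd2 s).add ((differentiableAt_id.const_mul _))).differentiableWithinAt
        · intro s hs
          rw [interior_Ici] at hs
          have hds : HasDerivAt (fun t => deriv w t + h b / 2 * t)
              (deriv (deriv w) s + h b / 2) s :=
            (hd2 s).hasDerivAt.add (by simpa using (hasDerivAt_id s).const_mul (h b / 2))
          show deriv (fun t => deriv w t + h b / 2 * t) s ≤ 0
          rw [hds.deriv]
          have := hwin s (le_of_lt hs)
          have := hode s
          linarith
      have := hanti (mem_Ici.mpr le_rfl) (mem_Ici.mpr ht) ht
      simp only at this
      linarith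
    have hdw1 : 0 < deriv w t₁ := hpos t₁ ht₁T
    have hq : 0 ≤ deriv w t₁ / (h b / 2) := div_nonneg hdw1.le (by linarith)
    have h1 := hdecay (t₁ + deriv w t₁ / (h b / 2) + 1) (by linarith)
    have h2 : h b / 2 * (t₁ + deriv w t₁ / (h b / 2) + 1 - t₁) = deriv w t₁ + h b / 2 := by
      field_simp
      ring
    rw [h2] at h1
    have hT' : T ≤ t₁ + deriv w t₁ / (h b / 2) + 1 :=
      le_trans (mem_Ici.mp ht₁T) (by linarith)
    linarith [hpos (t₁ + deriv w t₁ / (h b / 2) + 1) hT']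

lemma eq_endpoint {h : ℝ → ℝ} (hc : Continuous h)
    (hsign : ∀ s : ℝ, s ≠ 0 → h s * s > 0)
    {a b c x : ℝ} (ha : a < 0) (hb : 0 < b) (hHa : Hprim h a = c) (hHb : Hprim h b = c)
    (hx : Hprim h x = c) : x = a ∨ x = b := by
  have hcpos : 0 < c := hHb ▸ Hprim_pos hc hsign hb.ne'
  rcases lt_trichotomy x 0 with hx0 | hx0 | hx0
  · left
    exact (Hprim_strictAntiOn hc hsign).injOn (mem_Iic.mpr hx0.le) (mem_Iic.mpr ha.le)
      (by rw [hx, hHa])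
  · exfalso; rw [hx0, Hprim_zero] at hx; linarith
  · right
    exact (Hprim_strictMonoOn hc hsign).injOn (mem_Ici.mpr hx0.le) (mem_Ici.mpr hb.le)
      (by rw [hx, hHb])

lemma exists_deriv_zero {h : ℝ → ℝ} (hc : Continuous h)
    (hsign : ∀ s : ℝ, s ≠ 0 → h s * s > 0)
    {a b c : ℝ} (ha : a < 0) (hb : 0 < b) (hHa : Hprim h a = c) (hHb : Hprim h b = c)
    {w : ℝ → ℝ} (hw : ContDiff ℝ 2 w)
    (hode : ∀ t : ℝ, deriv (deriv w) t + h (w t) = 0)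
    (hen : ∀ t : ℝ, (deriv w t)^2/2 + Hprim h (w t) = c) :
    ∃ t, deriv w t = 0 := by
  obtain ⟨hd1, hd2, hd3⟩ := contDiff_two_unpack hw
  rcases lt_trichotomy (deriv w 0) 0 with hd0 | hd0 | hd0
  · -- time reversal
    set v : ℝ → ℝ := fun t => w (-t) with hv
    have hv2 : ContDiff ℝ 2 v := hw.comp (contDiff_id.neg)
    have hvd : ∀ t, HasDerivAt v (-(deriv w (-t))) t := by
      intro t
      have := ((hd1 (-t)).hasDerivAt.comp t (hasDerivAt_neg t))
      simpa [hv, mul_comm, Function.comp_def] using this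
    have hvderiv : deriv v = fun t => -(deriv w (-t)) := funext fun t => (hvd t).deriv
    have hvdd : ∀ t, deriv (deriv v) t = deriv (deriv w) (-t) := by
      intro t
      rw [hvderiv]
      have : HasDerivAt (fun t => -(deriv w (-t))) (deriv (deriv w) (-t)) t := by
        have := ((hd2 (-t)).hasDerivAt.comp t (hasDerivAt_neg t)).neg
        simpa [mul_comm, Function.comp_def, Pi.neg_def] using this
      exact this.deriv
    have hvode : ∀ t, deriv (deriv v) t + h (v t) = 0 := by
      intro t; rw [hvdd]; exact hode (-t)
    have hven : ∀ t, (deriv v t)^2/2 + Hprim h (v t) = c := by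
      intro t; rw [hvderiv]; simpa using hen (-t)
    obtain ⟨t, ht0, ht⟩ := not_forever_pos hc hsign ha hb hHa hHb hv2 hvode hven 0
    -- deriv w (-t) ≥ 0, deriv w 0 < 0, -t ≤ 0 : IVT on [-t, 0]
    rw [hvderiv] at ht
    simp only [neg_nonpos] at ht
    have hle : -t ≤ 0 := by linarith
    have hmem : (0:ℝ) ∈ Icc (deriv w 0) (deriv w (-t)) := ⟨hd0.le, by linarith⟩
    have := intermediate_value_Icc' hle hd2.continuous.continuousOn hmem
    obtain ⟨s, -, hs⟩ := this
    exact ⟨s, hs⟩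
  · exact ⟨0, hd0⟩
  · obtain ⟨t, ht0, ht⟩ := not_forever_pos hc hsign ha hb hHa hHb hw hode hen 0
    have hmem : (0:ℝ) ∈ Icc (deriv w t) (deriv w 0) := ⟨ht, hd0.le⟩
    have := intermediate_value_Icc' ht0 hd2.continuous.continuousOn hmem
    obtain ⟨s, -, hs⟩ := this
    exact ⟨s, hs⟩

lemma exists_top_hit {h : ℝ → ℝ} (hc : Continuous h)
    (hsign : ∀ s : ℝ, s ≠ 0 → h s * s > 0)
    {a b c : ℝ} (ha : a < 0) (hb : 0 < b) (hHa : Hprim h a = c) (hHb : Hprim h b = c)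
    {w : ℝ → ℝ} (hw : ContDiff ℝ 2 w)
    (hode : ∀ t : ℝ, deriv (deriv w) t + h (w t) = 0)
    (hen : ∀ t : ℝ, (deriv w t)^2/2 + Hprim h (w t) = c) :
    ∃ t, w t = b ∧ deriv w t = 0 := by
  obtain ⟨hd1, hd2, hd3⟩ := contDiff_two_unpack hw
  obtain ⟨t₀, ht₀⟩ := exists_deriv_zero hc hsign ha hb hHa hHb hw hode hen
  have hHt₀ : Hprim h (w t₀) = c := by
    have := hen t₀; rw [ht₀] at this; simpa using this
  rcases eq_endpoint hc hsign ha hb hHa hHb hHt₀ with hwa | hwb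
  swap
  · exact ⟨t₀, hwb, ht₀⟩
  -- w t₀ = a; follow the solution until deriv w vanishes again
  have hha : h a < 0 := by nlinarith [hsign a ha.ne]
  have hddpos : 0 < deriv (deriv w) t₀ := by
    have := hode t₀
    rw [hwa] at this
    linarith
  -- find ε > 0 with deriv (deriv w) > 0 on [t₀, t₀ + ε]
  obtain ⟨δ, hδpos, hδ⟩ := Metric.continuousAt_iff.mp (hd3.continuousAt (x := t₀))
    (deriv (deriv w) t₀) hddpos
  set ε : ℝ := δ / 2 with hε
  have hεpos : 0 < ε := by positivity
  have hddpos' : ∀ s ∈ Icc t₀ (t₀ + ε), 0 < deriv (deriv w) s := by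
    intro s hs
    have : dist s t₀ < δ := by
      rw [Real.dist_eq, abs_lt]
      constructor <;> [linarith [hs.1]; linarith [hs.2]]
    have := hδ this
    rw [Real.dist_eq, abs_lt] at this
    linarith [this.1]
  have hdwmono : StrictMonoOn (deriv w) (Icc t₀ (t₀ + ε)) := by
    apply strictMonoOn_of_deriv_pos (convex_Icc _ _) hd2.continuous.continuousOn
    intro s hs
    rw [interior_Icc] at hs
    exact hddpos' s ⟨hs.1.le, hs.2.le⟩
  have hdwpos : ∀ s, t₀ < s → s ≤ t₀ + ε → 0 < deriv w s := by
    intro s hs1 hs2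
    have := hdwmono (left_mem_Icc.mpr (by linarith)) ⟨hs1.le, hs2⟩ hs1
    rwa [ht₀] at this
  -- find the first zero after t₀ + ε
  obtain ⟨t₂, ht₂ge, ht₂⟩ := not_forever_pos hc hsign ha hb hHa hHb hw hode hen (t₀ + ε)
  set Z : Set ℝ := {t | t₀ + ε ≤ t ∧ deriv w t ≤ 0} with hZ
  have hZclosed : IsClosed Z := by
    have : Z = Ici (t₀ + ε) ∩ (deriv w) ⁻¹' (Iic 0) := by
      ext t
      simp only [hZ, mem_setOf_eq, mem_inter_iff, mem_Ici, mem_preimage, mem_Iic]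
    rw [this]
    exact isClosed_Ici.inter (IsClosed.preimage hd2.continuous isClosed_Iic)
  have hZne : Z.Nonempty := ⟨t₂, ht₂ge, ht₂⟩
  have hZbdd : BddBelow Z := ⟨t₀ + ε, fun t ht => ht.1⟩
  set t₃ : ℝ := sInf Z with ht₃
  have ht₃mem : t₃ ∈ Z := hZclosed.csInf_mem hZne hZbdd
  have ht₃ge : t₀ + ε ≤ t₃ := ht₃mem.1
  have ht₃le : deriv w t₃ ≤ 0 := ht₃mem.2
  -- deriv w > 0 on (t₀, t₃)
  have hdwposmid : ∀ s, t₀ < s → s < t₃ → 0 < deriv w s := by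
    intro s hs1 hs2
    rcases le_or_gt s (t₀ + ε) with hcase | hcase
    · exact hdwpos s hs1 hcase
    · by_contra hns
      push_neg at hns
      have : s ∈ Z := ⟨hcase.le, hns⟩
      have := csInf_le hZbdd this
      linarith
  -- deriv w t₃ = 0 by IVT-minimality
  have ht₃zero : deriv w t₃ = 0 := by
    rcases lt_or_eq_of_le ht₃le with hlt | heq
    · exfalso
      have hT : t₀ + ε ≤ t₃ := ht₃ge
      have hdwT : 0 < deriv w (t₀ + ε) := hdwpos (t₀ + ε) (by linarith) le_rfl
      have hmem : (0:ℝ) ∈ Icc (deriv w t₃) (deriv w (t₀ + ε)) := ⟨hlt.le, hdwT.le⟩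
      obtain ⟨s, hsmem, hs⟩ := intermediate_value_Icc' hT hd2.continuous.continuousOn hmem
      have hsZ : s ∈ Z := ⟨hsmem.1, hs.le⟩
      have hts : t₃ ≤ s := csInf_le hZbdd hsZ
      have hst : s = t₃ := le_antisymm hsmem.2 hts
      rw [hst] at hs
      linarith
    · exact heq
  -- w is strictly increasing on [t₀, t₃], so w t₃ > a
  have hwmono : StrictMonoOn w (Icc t₀ t₃) := by
    apply strictMonoOn_of_deriv_pos (convex_Icc _ _) hd1.continuous.continuousOn
    intro s hs
    rw [interior_Icc] at hs
    exact hdwposmid s hs.1 hs.2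
  have ht₀t₃ : t₀ < t₃ := by linarith
  have hwgt : a < w t₃ := by
    have := hwmono (left_mem_Icc.mpr ht₀t₃.le) (right_mem_Icc.mpr ht₀t₃.le) ht₀t₃
    rwa [hwa] at this
  have hHt₃ : Hprim h (w t₃) = c := by
    have := hen t₃; rw [ht₃zero] at this; simpa using this
  rcases eq_endpoint hc hsign ha hb hHa hHb hHt₃ with hq | hq
  · exfalso; rw [hq] at hwgt; linarith
  · exact ⟨t₃, hq, ht₃zero⟩


end SameEnergyAux

/-- For the ODE `w'' + h(w) = 0` with `h` locally Lipschitz,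
`h(s)·s > 0` for `s ≠ 0`, and primitive `H(s) = ∫₀ˢ h → ∞` as `|s| → ∞`:
two global solutions with nonzero initial data and the same conserved energy
`w'(0)²/2 + H(w(0))` coincide up to a translation in time. -/
theorem solutions_with_same_energy_coincide_up_to_translation
    (h : ℝ → ℝ) (hlip : LocallyLipschitz h)
    (hsign : ∀ s : ℝ, s ≠ 0 → h s * s > 0)
    (hH : Filter.Tendsto (fun s : ℝ => ∫ σ in (0:ℝ)..s, h σ)
      (Filter.cocompact ℝ) Filter.atTop)
    (w₁ w₂ : ℝ → ℝ) (hw₁ : ContDiff ℝ 2 w₁) (hw₂ : ContDiff ℝ 2 w₂)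
    (hode₁ : ∀ t : ℝ, deriv (deriv w₁) t + h (w₁ t) = 0)
    (hode₂ : ∀ t : ℝ, deriv (deriv w₂) t + h (w₂ t) = 0)
    (hne₁ : (w₁ 0, deriv w₁ 0) ≠ (0, 0))
    (hne₂ : (w₂ 0, deriv w₂ 0) ≠ (0, 0))
    (henergy : (deriv w₁ 0) ^ 2 / 2 + ∫ σ in (0:ℝ)..(w₁ 0), h σ
             = (deriv w₂ 0) ^ 2 / 2 + ∫ σ in (0:ℝ)..(w₂ 0), h σ) :
    ∃ R : ℝ, ∀ t : ℝ, w₁ t = w₂ (t + R) := by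
  have hc : Continuous h := hlip.continuous
  set c : ℝ := (deriv w₁ 0) ^ 2 / 2 + Hprim h (w₁ 0) with hcdef
  -- energy conservation for both solutions
  have hen₁ : ∀ t : ℝ, (deriv w₁ t)^2/2 + Hprim h (w₁ t) = c :=
    fun t => energy_const hc hw₁ hode₁ t
  have hen₂ : ∀ t : ℝ, (deriv w₂ t)^2/2 + Hprim h (w₂ t) = c := by
    intro t
    have := energy_const hc hw₂ hode₂ t
    rw [this]
    show _ = (deriv w₁ 0) ^ 2 / 2 + Hprim h (w₁ 0)
    rw [show Hprim h (w₂ 0) = ∫ σ in (0:ℝ)..(w₂ 0), h σ from rfl,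
      show Hprim h (w₁ 0) = ∫ σ in (0:ℝ)..(w₁ 0), h σ from rfl]
    linarith [henergy]
  -- c > 0
  have hcpos : 0 < c := by
    rcases eq_or_ne (deriv w₁ 0) 0 with hd | hd
    · have hw0 : w₁ 0 ≠ 0 := by
        intro hw0
        exact hne₁ (by rw [hw0, hd])
      have := Hprim_pos hc hsign hw0
      rw [hcdef, hd]
      nlinarith
    · have := Hprim_nonneg hc hsign (w₁ 0)
      rw [hcdef]
      have := sq_pos_of_ne_zero hd
      nlinarith
  -- find the endpoints a < 0 < b of the level set
  have hHcont : Continuous (Hprim h) :=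
    continuous_iff_continuousAt.mpr (fun s => (Hprim_hasDerivAt hc s).continuousAt)
  obtain ⟨K₀, hK₀⟩ := (Filter.hasBasis_cocompact.tendsto_left_iff.mp hH) (Ici c)
    (Filter.mem_atTop c)
  obtain ⟨hK₀c, hK₀⟩ := hK₀
  obtain ⟨r, hr⟩ := hK₀c.isBounded.subset_ball 0
  set M : ℝ := max r 0 + 1 with hM
  have hMpos : 0 < M := by positivity
  have hMout : ∀ x : ℝ, M ≤ |x| → x ∉ K₀ := by
    intro x hx hmem
    have := hr hmem
    rw [Metric.mem_ball, Real.dist_eq, sub_zero] at this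
    have : |x| < r := this
    have : r ≤ max r 0 := le_max_left _ _
    linarith
  have hHM : c ≤ Hprim h M := by
    have hnot : M ∉ K₀ := hMout M (by rw [abs_of_pos hMpos])
    have := hK₀ (show M ∈ K₀ᶜ from hnot)
    simpa [Hprim] using this
  have hHnegM : c ≤ Hprim h (-M) := by
    have hnot : -M ∉ K₀ := hMout (-M) (by rw [abs_neg, abs_of_pos hMpos])
    have := hK₀ (show -M ∈ K₀ᶜ from hnot)
    simpa [Hprim] using this
  obtain ⟨b, hbmem, hHb⟩ : ∃ b ∈ Icc (0:ℝ) M, Hprim h b = c := by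
    have : c ∈ Icc (Hprim h 0) (Hprim h M) := by
      rw [Hprim_zero]
      exact ⟨hcpos.le, hHM⟩
    obtain ⟨b, hb1, hb2⟩ := intermediate_value_Icc hMpos.le hHcont.continuousOn this
    exact ⟨b, hb1, hb2⟩
  obtain ⟨a, hamem, hHa⟩ : ∃ a ∈ Icc (-M) (0:ℝ), Hprim h a = c := by
    have : c ∈ Icc (Hprim h 0) (Hprim h (-M)) := by
      rw [Hprim_zero]
      exact ⟨hcpos.le, hHnegM⟩
    obtain ⟨a, ha1, ha2⟩ := intermediate_value_Icc' (by linarith : -M ≤ (0:ℝ))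
      hHcont.continuousOn this
    exact ⟨a, ha1, ha2⟩
  have hbpos : 0 < b := by
    rcases lt_or_eq_of_le hbmem.1 with hb | hb
    · exact hb
    · exfalso; rw [← hb, Hprim_zero] at hHb; linarith
  have haneg : a < 0 := by
    rcases lt_or_eq_of_le hamem.2 with ha | ha
    · exact ha
    · exfalso; rw [ha, Hprim_zero] at hHa; linarith
  -- both solutions hit (b, 0)
  obtain ⟨t₁, hwt₁, hdt₁⟩ := exists_top_hit hc hsign haneg hbpos hHa hHb hw₁ hode₁ hen₁
  obtain ⟨t₂, hwt₂, hdt₂⟩ := exists_top_hit hc hsign haneg hbpos hHa hHb hw₂ hode₂ hen₂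
  -- uniqueness of the ODE
  obtain ⟨hd11, hd12, -⟩ := contDiff_two_unpack hw₁
  obtain ⟨hd21, hd22, -⟩ := contDiff_two_unpack hw₂
  obtain ⟨K, hK⟩ := loclip_compact hlip (isCompact_Icc (a := a) (b := b))
  obtain ⟨g, hg, hgeq⟩ := hK.extend_real
  set v : ℝ → ℝ × ℝ → ℝ × ℝ := fun _ p => (p.2, -g p.1) with hv
  have hvlip : ∀ t : ℝ, LipschitzWith (max 1 K) (v t) := by
    intro t
    have h1 : LipschitzWith 1 (fun p : ℝ × ℝ => p.2) := LipschitzWith.prod_snd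
    have h2 : LipschitzWith K (fun p : ℝ × ℝ => -g p.1) := by
      have h3 : LipschitzWith (K * 1) (fun p : ℝ × ℝ => g p.1) := hg.comp LipschitzWith.prod_fst
      rw [mul_one] at h3
      exact fun x y => by simpa [edist_neg_neg] using h3 x y
    exact h1.prodMk h2
  set R : ℝ := t₂ - t₁ with hR
  refine ⟨R, fun τ => ?_⟩
  set F : ℝ → ℝ × ℝ := fun t => (w₁ t, deriv w₁ t) with hF
  set G : ℝ → ℝ × ℝ := fun t => (w₂ (t + R), deriv w₂ (t + R)) with hG
  have hgh₁ : ∀ t : ℝ, g (w₁ t) = h (w₁ t) :=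
    fun t => (hgeq (sol_mem_Icc hc hsign haneg hbpos hHa hHb hen₁ t)).symm
  have hgh₂ : ∀ t : ℝ, g (w₂ t) = h (w₂ t) :=
    fun t => (hgeq (sol_mem_Icc hc hsign haneg hbpos hHa hHb hen₂ t)).symm
  have hFd : ∀ t : ℝ, HasDerivAt F (v t (F t)) t := by
    intro t
    have h1 : HasDerivAt F (deriv w₁ t, deriv (deriv w₁) t) t :=
      ((hd11 t).hasDerivAt).prodMk ((hd12 t).hasDerivAt)
    have : v t (F t) = (deriv w₁ t, deriv (deriv w₁) t) := by
      simp only [hv, hF]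
      rw [hgh₁ t]
      have := hode₁ t
      simp only [Prod.mk.injEq]
      exact ⟨trivial, by linarith⟩
    rwa [this]
  have hGd : ∀ t : ℝ, HasDerivAt G (v t (G t)) t := by
    intro t
    have hshift1 : HasDerivAt (fun t => w₂ (t + R)) (deriv w₂ (t + R)) t := by
      have := ((hd21 (t + R)).hasDerivAt).comp t ((hasDerivAt_id t).add_const R)
      simpa [Function.comp_def] using this
    have hshift2 : HasDerivAt (fun t => deriv w₂ (t + R)) (deriv (deriv w₂) (t + R)) t := by
      have := ((hd22 (t + R)).hasDerivAt).comp t ((hasDerivAt_id t).add_const R)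
      simpa [Function.comp_def] using this
    have h1 : HasDerivAt G (deriv w₂ (t + R), deriv (deriv w₂) (t + R)) t :=
      hshift1.prodMk hshift2
    have : v t (G t) = (deriv w₂ (t + R), deriv (deriv w₂) (t + R)) := by
      simp only [hv, hG]
      rw [hgh₂ (t + R)]
      have := hode₂ (t + R)
      simp only [Prod.mk.injEq]
      exact ⟨trivial, by linarith⟩
    rwa [this]
  have heq : F t₁ = G t₁ := by
    simp only [hF, hG]
    rw [show t₁ + R = t₂ by rw [hR]; ring]
    rw [hwt₁, hdt₁, hwt₂, hdt₂]
  -- apply uniqueness on a large interval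
  set lo : ℝ := min τ t₁ - 1 with hlo
  set hi : ℝ := max τ t₁ + 1 with hhi
  have ht₁mem : t₁ ∈ Set.Ioo lo hi := by
    constructor
    · have := min_le_right τ t₁; simp only [hlo]; linarith
    · have := le_max_right τ t₁; simp only [hhi]; linarith
  have hτmem : τ ∈ Set.Ioo lo hi := by
    constructor
    · have := min_le_left τ t₁; simp only [hlo]; linarith
    · have := le_max_left τ t₁; simp only [hhi]; linarith
  have := ODE_solution_unique_of_mem_Ioo (s := fun _ => Set.univ)
    (fun t _ => (hvlip t).lipschitzOnWith) ht₁mem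
    (fun t _ => ⟨hFd t, Set.mem_univ _⟩) (fun t _ => ⟨hGd t, Set.mem_univ _⟩) heq
  have := this hτmem
  exact congrArg Prod.fst this
end

section
/- Let m, n ≥ 1 be integers, S > 0 and P, Λₘ, Λₙ ∈ ℝ. Then for any initial data (φ(0), φ'(0), ψ(0), ψ'(0)) ∈ ℝ⁴ the nonlinear system φ'' + m²(Λₘ − P)φ + S m²(m²φ² + n²ψ²)φ = 0, ψ'' + n²(Λₙ − P)ψ + S n²(m²φ² + n²ψ²)ψ = 0 has a unique global C² solution (φ, ψ) : ℝ → ℝ², and the energy E = φ'²/2 + ψ'²/2 + m²(Λₘ − P)φ²/2 + n²(Λₙ − P)ψ²/2 + S(m²φ² + n²ψ²)²/4 is constant along every solution. -/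
open Set

namespace TwoModeAux
noncomputable section
set_option maxHeartbeats 3200000

def F0 (s α β μ ν : ℝ) : (ℝ × ℝ × ℝ × ℝ) → (ℝ × ℝ × ℝ × ℝ) := fun x =>
  (x.2.1, -(α * x.1) - s * μ * (μ * x.1 ^ 2 + ν * x.2.2.1 ^ 2) * x.1,
   x.2.2.2, -(β * x.2.2.1) - s * ν * (μ * x.1 ^ 2 + ν * x.2.2.1 ^ 2) * x.2.2.1)

def Nsq : ℝ × ℝ × ℝ × ℝ → ℝ := fun x => x.1 ^ 2 + x.2.1 ^ 2 + x.2.2.1 ^ 2 + x.2.2.2 ^ 2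

def En (s α β μ ν : ℝ) : ℝ × ℝ × ℝ × ℝ → ℝ := fun x =>
  x.2.1 ^ 2 / 2 + x.2.2.2 ^ 2 / 2 + α * x.1 ^ 2 / 2 + β * x.2.2.1 ^ 2 / 2
    + s * (μ * x.1 ^ 2 + ν * x.2.2.1 ^ 2) ^ 2 / 4

theorem contDiff_F0 (s α β μ ν : ℝ) : ContDiff ℝ 1 (F0 s α β μ ν) := by
  unfold F0; fun_prop

theorem contDiff_Nsq : ContDiff ℝ 1 Nsq := by unfold Nsq; fun_prop

theorem continuous_Nsq : Continuous Nsq := contDiff_Nsq.continuous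

theorem Nsq_nonneg (x : ℝ × ℝ × ℝ × ℝ) : 0 ≤ Nsq x := by
  unfold Nsq; positivity

theorem _root_.HasDerivAt.c1 {x : ℝ → ℝ × ℝ × ℝ × ℝ} {d : ℝ × ℝ × ℝ × ℝ} {t : ℝ}
    (h : HasDerivAt x d t) : HasDerivAt (fun τ => (x τ).1) d.1 t :=
  (hasFDerivAt_fst (p := x t)).comp_hasDerivAt t h

theorem _root_.HasDerivAt.c2 {x : ℝ → ℝ × ℝ × ℝ × ℝ} {d : ℝ × ℝ × ℝ × ℝ} {t : ℝ}
    (h : HasDerivAt x d t) : HasDerivAt (fun τ => (x τ).2.1) d.2.1 t := by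
  have h1 := (hasFDerivAt_snd (p := x t)).comp_hasDerivAt t h
  exact (hasFDerivAt_fst (p := (x t).2)).comp_hasDerivAt t h1

theorem _root_.HasDerivAt.c3 {x : ℝ → ℝ × ℝ × ℝ × ℝ} {d : ℝ × ℝ × ℝ × ℝ} {t : ℝ}
    (h : HasDerivAt x d t) : HasDerivAt (fun τ => (x τ).2.2.1) d.2.2.1 t := by
  have h1 := (hasFDerivAt_snd (p := x t)).comp_hasDerivAt t h
  have h2 := (hasFDerivAt_snd (p := (x t).2)).comp_hasDerivAt t h1
  exact (hasFDerivAt_fst (p := (x t).2.2)).comp_hasDerivAt t h2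

theorem _root_.HasDerivAt.c4 {x : ℝ → ℝ × ℝ × ℝ × ℝ} {d : ℝ × ℝ × ℝ × ℝ} {t : ℝ}
    (h : HasDerivAt x d t) : HasDerivAt (fun τ => (x τ).2.2.2) d.2.2.2 t := by
  have h1 := (hasFDerivAt_snd (p := x t)).comp_hasDerivAt t h
  have h2 := (hasFDerivAt_snd (p := (x t).2)).comp_hasDerivAt t h1
  exact (hasFDerivAt_snd (p := (x t).2.2)).comp_hasDerivAt t h2

/-- the energy is a first integral -/
theorem energy_hasDerivAt (s α β μ ν : ℝ) (x : ℝ → ℝ × ℝ × ℝ × ℝ) (t : ℝ)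
    (hx : HasDerivAt x (F0 s α β μ ν (x t)) t) :
    HasDerivAt (fun τ => En s α β μ ν (x τ)) 0 t := by
  have hu := hx.c1
  have hp := hx.c2
  have hv := hx.c3
  have hq := hx.c4
  have big := ((((hp.pow 2).div_const 2).add ((hq.pow 2).div_const 2)).add
      (((hu.pow 2).const_mul α).div_const 2)).add
      (((hv.pow 2).const_mul β).div_const 2) |>.add
      (((((hu.pow 2).const_mul μ).add ((hv.pow 2).const_mul ν)).pow 2).const_mul s |>.div_const 4)
  convert big using 1
  show (0:ℝ) = _
  simp only [F0, Pi.add_apply, Pi.pow_apply]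
  ring
  all_goals rfl

theorem energy_eq_const (s α β μ ν : ℝ) (y : ℝ → ℝ × ℝ × ℝ × ℝ)
    (hy : ∀ t, HasDerivAt y (F0 s α β μ ν (y t)) t) :
    ∀ t, En s α β μ ν (y t) = En s α β μ ν (y 0) := by
  have hdiff : Differentiable ℝ (fun τ => En s α β μ ν (y τ)) :=
    fun t => (energy_hasDerivAt s α β μ ν y t (hy t)).differentiableAt
  have hz : ∀ t, deriv (fun τ => En s α β μ ν (y τ)) t = 0 :=
    fun t => (energy_hasDerivAt s α β μ ν y t (hy t)).deriv
  exact fun t => is_const_of_deriv_eq_zero hdiff hz t 0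

/-- a priori bound: points on the energy level `E₀` have `Nsq ≤ Mb`. -/
theorem nsq_le_of_energy {s α β μ ν : ℝ} (hs : 0 < s) (hμ : 1 ≤ μ) (hν : 1 ≤ ν)
    (E₀ : ℝ) (p : ℝ × ℝ × ℝ × ℝ)
    (hE : p.2.1 ^ 2 / 2 + p.2.2.2 ^ 2 / 2 + α * p.1 ^ 2 / 2 + β * p.2.2.1 ^ 2 / 2
      + s * (μ * p.1 ^ 2 + ν * p.2.2.1 ^ 2) ^ 2 / 4 = E₀) :
    p.1 ^ 2 + p.2.1 ^ 2 + p.2.2.1 ^ 2 + p.2.2.2 ^ 2 ≤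
      2 * (1 + (8 * E₀ * s + 16 * ((|α| + |β|) / 2) ^ 2) / s ^ 2) + 2 * E₀
        + 2 * ((|α| + |β|) / 2) * (1 + (8 * E₀ * s + 16 * ((|α| + |β|) / 2) ^ 2) / s ^ 2) := by
  obtain ⟨u, pp, v, q⟩ := p
  simp only at hE ⊢
  have hA0 : (0:ℝ) ≤ μ * u ^ 2 + ν * v ^ 2 := by nlinarith [sq_nonneg u, sq_nonneg v]
  have hu2 : u ^ 2 ≤ μ * u ^ 2 + ν * v ^ 2 := by nlinarith [sq_nonneg u, sq_nonneg v]
  have hv2 : v ^ 2 ≤ μ * u ^ 2 + ν * v ^ 2 := by nlinarith [sq_nonneg u, sq_nonneg v]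
  have l1 : -|α| * (μ * u ^ 2 + ν * v ^ 2) ≤ α * u ^ 2 := by
    nlinarith [neg_abs_le α, abs_nonneg α, sq_nonneg u,
      mul_le_mul_of_nonneg_left hu2 (abs_nonneg α),
      mul_nonneg (by linarith [neg_abs_le α] : (0:ℝ) ≤ |α| + α) (sq_nonneg u)]
  have l2 : -|β| * (μ * u ^ 2 + ν * v ^ 2) ≤ β * v ^ 2 := by
    nlinarith [neg_abs_le β, abs_nonneg β, sq_nonneg v,
      mul_le_mul_of_nonneg_left hv2 (abs_nonneg β),
      mul_nonneg (by linarith [neg_abs_le β] : (0:ℝ) ≤ |β| + β) (sq_nonneg v)]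
  have hDA : -(|α| + |β|) * (μ * u ^ 2 + ν * v ^ 2) ≤ α * u ^ 2 + β * v ^ 2 := by
    nlinarith [l1, l2]
  have hD0 : (0:ℝ) ≤ |α| + |β| := by positivity
  obtain ⟨A, hA⟩ : ∃ A, μ * u ^ 2 + ν * v ^ 2 = A := ⟨_, rfl⟩
  rw [hA] at hE hA0 hu2 hv2 hDA
  obtain ⟨D, hD⟩ : ∃ D, |α| + |β| = D := ⟨_, rfl⟩
  rw [hD] at hDA hD0 ⊢
  obtain ⟨X, hX⟩ : ∃ X, α * u ^ 2 + β * v ^ 2 = X := ⟨_, rfl⟩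
  have hE' : pp ^ 2 / 2 + q ^ 2 / 2 + X / 2 + s * A ^ 2 / 4 = E₀ := by
    rw [← hX]; linarith [hE]
  rw [hX] at hDA
  clear hE
  have h1 : s * A ^ 2 / 4 ≤ E₀ + D / 2 * A := by
    nlinarith [sq_nonneg pp, sq_nonneg q]
  have h1' : s * (s * A ^ 2 / 4) ≤ s * (E₀ + D / 2 * A) := mul_le_mul_of_nonneg_left h1 hs.le
  have h2 : s ^ 2 * A ^ 2 ≤ 8 * E₀ * s + 4 * D ^ 2 := by
    nlinarith [sq_nonneg (s * A - 2 * D)]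
  have hs2 : (0:ℝ) < s ^ 2 := by positivity
  have h3 : A ^ 2 ≤ (8 * E₀ * s + 16 * (D / 2) ^ 2) / s ^ 2 := by
    rw [le_div_iff₀ hs2]; nlinarith [h2]
  obtain ⟨B, hB⟩ : ∃ B, (8 * E₀ * s + 16 * (D / 2) ^ 2) / s ^ 2 = B := ⟨_, rfl⟩
  rw [hB] at h3 ⊢
  have h4 : A ≤ 1 + B := by nlinarith [sq_nonneg (A - 1)]
  have h5 : pp ^ 2 + q ^ 2 ≤ 2 * E₀ + D * A := by
    nlinarith [mul_nonneg hs.le (sq_nonneg A)]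
  nlinarith [mul_le_mul_of_nonneg_left h4 hD0, h4, hu2, hv2, h5, hA0]

/-- global solution for a bounded globally Lipschitz vector field -/
theorem global_flow {E : Type*} [NormedAddCommGroup E] [NormedSpace ℝ E] [CompleteSpace E]
    (F : E → E) (K : NNReal) (hK : LipschitzWith K F) {C : ℝ} (hC : ∀ x, ‖F x‖ ≤ C)
    (x₀ : E) : ∃ x : ℝ → E, x 0 = x₀ ∧ ∀ t, HasDerivAt x (F (x t)) t := by
  have hC0 : 0 ≤ C := le_trans (norm_nonneg _) (hC x₀)
  have step : ∀ a : ℝ, 0 < a → ∃ f : ℝ → E, f 0 = x₀ ∧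
      ∀ t ∈ Ioo (-a) a, HasDerivAt f (F (f t)) t := by
    intro a ha
    have hpl : IsPicardLindelof (fun _ => F) (tmin := -a) (tmax := a)
        ⟨0, by constructor <;> linarith⟩ x₀ ⟨C * a, by positivity⟩ 0 ⟨C, hC0⟩ K :=
      IsPicardLindelof.of_time_independent (fun x _ => hC x) hK.lipschitzOnWith (by
        have h : max (a - 0) (0 - -a) = a := by
          rw [sub_zero, zero_sub, neg_neg, max_self]
        simp only [h]; simp; exact le_rfl)
    obtain ⟨f, hf0, hf⟩ := hpl.exists_eq_forall_mem_Icc_hasDerivWithinAt₀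
    exact ⟨f, hf0, fun t ht =>
      (hf t (Ioo_subset_Icc_self ht)).hasDerivAt (Icc_mem_nhds ht.1 ht.2)⟩
  choose sol hsol0 hsol using fun k : ℕ => step (k + 1) (by positivity)
  have agree : ∀ j k : ℕ, j ≤ k → EqOn (sol j) (sol k) (Ioo (-(j + 1 : ℝ)) (j + 1)) := by
    intro j k hjk
    have hjk' : (j : ℝ) ≤ k := by exact_mod_cast hjk
    have hsub : Ioo (-(j + 1 : ℝ)) (j + 1) ⊆ Ioo (-(k + 1 : ℝ)) (k + 1) :=
      Ioo_subset_Ioo (by linarith) (by linarith)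
    have h0mem : (0:ℝ) ∈ Ioo (-(j + 1 : ℝ)) (j + 1) := by
      have hj1 : (0:ℝ) < (j:ℝ) + 1 := by positivity
      exact ⟨by linarith, hj1⟩
    refine ODE_solution_unique_of_mem_Ioo (v := fun _ => F) (s := fun _ => univ)
      (K := K) (fun _ _ => hK.lipschitzOnWith) (t₀ := 0)
      h0mem (fun t ht => ⟨hsol j t ht, trivial⟩)
      (fun t ht => ⟨hsol k t (hsub ht), trivial⟩) ?_
    rw [hsol0 j, hsol0 k]
  refine ⟨fun t => sol ⌊|t|⌋₊ t, ?_, ?_⟩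
  · simpa using hsol0 0
  · intro t
    set k := ⌊|t|⌋₊ + 1 with hk
    have hmem : ∀ u : ℝ, |u| < k → (fun t => sol ⌊|t|⌋₊ t) u = sol k u := by
      intro u hu
      have h1 : ⌊|u|⌋₊ ≤ k := by
        have := Nat.floor_le_floor hu.le
        simpa using this
      have h2 := abs_lt.mp (Nat.lt_floor_add_one |u|)
      exact agree _ k h1 ⟨h2.1, h2.2⟩
    have ht : |t| < (k : ℝ) := by
      have := Nat.lt_floor_add_one |t|
      push_cast [hk]; linarith
    have heq : (fun t => sol ⌊|t|⌋₊ t) =ᶠ[nhds t] sol k := by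
      have hopen : IsOpen {u : ℝ | |u| < (k:ℝ)} := isOpen_lt (by fun_prop) continuous_const
      exact Filter.eventuallyEq_of_mem (hopen.mem_nhds ht) fun u hu => hmem u hu
    have hder : HasDerivAt (sol k) (F (sol k t)) t := by
      apply hsol k t
      have h2 := abs_lt.mp ht
      exact ⟨by linarith [h2.1], by linarith [h2.2]⟩
    rw [show F ((fun t => sol ⌊|t|⌋₊ t) t) = F (sol k t) by rw [hmem t ht]]
    exact hder.congr_of_eventuallyEq heq

/-- lift a C² solution of the 2nd-order system to the 1st-order system -/
theorem lift_sol (s α β μ ν : ℝ) (φ ψ : ℝ → ℝ)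
    (hφ : ContDiff ℝ 2 φ) (hψ : ContDiff ℝ 2 ψ)
    (eq1 : ∀ t, deriv (deriv φ) t + α * φ t
      + s * μ * (μ * (φ t) ^ 2 + ν * (ψ t) ^ 2) * φ t = 0)
    (eq2 : ∀ t, deriv (deriv ψ) t + β * ψ t
      + s * ν * (μ * (φ t) ^ 2 + ν * (ψ t) ^ 2) * ψ t = 0) :
    ∀ t, HasDerivAt (fun τ => (φ τ, deriv φ τ, ψ τ, deriv ψ τ))
      (F0 s α β μ ν (φ t, deriv φ t, ψ t, deriv ψ t)) t := by
  intro t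
  have h2 : (2 : WithTop ℕ∞) = 1 + 1 := by norm_num
  have hφ1 : ContDiff ℝ 1 (deriv φ) := (contDiff_succ_iff_deriv.mp (h2 ▸ hφ)).2.2
  have hψ1 : ContDiff ℝ 1 (deriv ψ) := (contDiff_succ_iff_deriv.mp (h2 ▸ hψ)).2.2
  have hφ' : HasDerivAt φ (deriv φ t) t :=
    ((hφ.differentiable (by norm_num)) t).hasDerivAt
  have hψ' : HasDerivAt ψ (deriv ψ t) t :=
    ((hψ.differentiable (by norm_num)) t).hasDerivAt
  have hφ'' : HasDerivAt (deriv φ) (deriv (deriv φ) t) t :=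
    ((hφ1.differentiable one_ne_zero) t).hasDerivAt
  have hψ'' : HasDerivAt (deriv ψ) (deriv (deriv ψ) t) t :=
    ((hψ1.differentiable one_ne_zero) t).hasDerivAt
  have e1 : deriv (deriv φ) t
      = -(α * φ t) - s * μ * (μ * (φ t) ^ 2 + ν * (ψ t) ^ 2) * φ t := by
    have := eq1 t; linarith
  have e2 : deriv (deriv ψ) t
      = -(β * ψ t) - s * ν * (μ * (φ t) ^ 2 + ν * (ψ t) ^ 2) * ψ t := by
    have := eq2 t; linarith
  exact hφ'.prodMk ((e1 ▸ hφ'') |>.prodMk (hψ'.prodMk (e2 ▸ hψ'')))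

/-- build a C² function from a solution of the first-order system -/
theorem c2_of_flow (f g : ℝ → ℝ) (hfg : ∀ t, HasDerivAt f (g t) t)
    (hg : ContDiff ℝ 1 g) : ContDiff ℝ 2 f ∧ deriv f = g := by
  have hdf : deriv f = g := funext fun t => (hfg t).deriv
  have h2 : (2 : WithTop ℕ∞) = 1 + 1 := by norm_num
  refine ⟨h2 ▸ contDiff_succ_iff_deriv.mpr ⟨fun t => (hfg t).differentiableAt, ?_, hdf ▸ hg⟩, hdf⟩
  intro h; exact absurd h (by norm_num)

theorem c1_of_flow (f g : ℝ → ℝ) (hfg : ∀ t, HasDerivAt f (g t) t)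
    (hg : Continuous g) : ContDiff ℝ 1 f ∧ deriv f = g := by
  have hdf : deriv f = g := funext fun t => (hfg t).deriv
  exact ⟨contDiff_one_iff_deriv.mpr ⟨fun t => (hfg t).differentiableAt, hdf ▸ hg⟩, hdf⟩

theorem setup (s α β μ ν : ℝ) (hs : 0 < s) (hμ : 1 ≤ μ) (hν : 1 ≤ ν) (a₁ b₁ a₂ b₂ : ℝ) :
    ∃ M R1 : ℝ, M + 1 ≤ R1 ∧ 0 < R1 ∧
      (∀ p, En s α β μ ν p = En s α β μ ν (a₁, b₁, a₂, b₂) → Nsq p ≤ M) ∧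
      ∃ Fc : (ℝ × ℝ × ℝ × ℝ) → (ℝ × ℝ × ℝ × ℝ),
        (∀ p, Nsq p ≤ R1 → Fc p = F0 s α β μ ν p) ∧
        HasCompactSupport Fc ∧ ContDiff ℝ 1 Fc := by
  set E₀ := En s α β μ ν (a₁, b₁, a₂, b₂) with hE₀
  set M := 2 * (1 + (8 * E₀ * s + 16 * ((|α| + |β|) / 2) ^ 2) / s ^ 2) + 2 * E₀
      + 2 * ((|α| + |β|) / 2) * (1 + (8 * E₀ * s + 16 * ((|α| + |β|) / 2) ^ 2) / s ^ 2) with hM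
  set R1 := max M 0 + 1 with hR1
  have hMR : M + 1 ≤ R1 := by
    have := le_max_left M 0; rw [hR1]; linarith
  have hR1pos : 0 < R1 := by
    have := le_max_right M 0; rw [hR1]; linarith
  set θ : ContDiffBump (0:ℝ) := ⟨R1, R1 + 1, hR1pos, by linarith⟩ with hθ
  set Fc : (ℝ × ℝ × ℝ × ℝ) → (ℝ × ℝ × ℝ × ℝ) := fun p => θ (Nsq p) • F0 s α β μ ν p with hFc
  refine ⟨M, R1, hMR, hR1pos, fun p hp => nsq_le_of_energy hs hμ hν E₀ p hp, Fc, ?_, ?_, ?_⟩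
  · intro p hp
    have h1 : θ (Nsq p) = 1 := by
      apply θ.one_of_mem_closedBall
      rw [Metric.mem_closedBall, Real.dist_eq, sub_zero, abs_of_nonneg (Nsq_nonneg p)]
      exact hp
    rw [hFc]; simp only [h1, one_smul]
  · have hcomp : IsCompact {p : ℝ × ℝ × ℝ × ℝ | Nsq p ≤ R1 + 1} := by
      apply Metric.isCompact_of_isClosed_isBounded
      · exact isClosed_le continuous_Nsq continuous_const
      · rw [isBounded_iff_forall_norm_le]
        refine ⟨Real.sqrt (R1 + 1), fun p hp => ?_⟩
        have hkey : ∀ z : ℝ, z ^ 2 ≤ R1 + 1 → ‖z‖ ≤ Real.sqrt (R1 + 1) := by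
          intro z hz
          rw [Real.norm_eq_abs, ← Real.sqrt_sq_eq_abs]
          exact Real.sqrt_le_sqrt hz
        have hN : p.1 ^ 2 + p.2.1 ^ 2 + p.2.2.1 ^ 2 + p.2.2.2 ^ 2 ≤ R1 + 1 := hp
        have s1 := sq_nonneg p.1; have s2 := sq_nonneg p.2.1
        have s3 := sq_nonneg p.2.2.1; have s4 := sq_nonneg p.2.2.2
        calc ‖p‖ = max ‖p.1‖ (max ‖p.2.1‖ (max ‖p.2.2.1‖ ‖p.2.2.2‖)) := by
              rw [Prod.norm_def, Prod.norm_def, Prod.norm_def]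
          _ ≤ Real.sqrt (R1 + 1) := by
              apply max_le (hkey _ (by linarith))
              apply max_le (hkey _ (by linarith))
              exact max_le (hkey _ (by linarith)) (hkey _ (by linarith))
    apply HasCompactSupport.intro hcomp
    intro p hp
    simp only [mem_setOf_eq, not_le] at hp
    have h0 : θ (Nsq p) = 0 := by
      apply θ.zero_of_le_dist
      rw [Real.dist_eq, sub_zero, abs_of_nonneg (Nsq_nonneg p)]
      exact le_of_lt hp
    rw [hFc]; simp only [h0, zero_smul]
  · exact (θ.contDiff.comp contDiff_Nsq).smul (contDiff_F0 s α β μ ν)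

end
end TwoModeAux
namespace TwoModeAux
noncomputable section
open Set

theorem main (s α β μ ν : ℝ) (hs : 0 < s) (hμ : 1 ≤ μ) (hν : 1 ≤ ν) (a₁ b₁ a₂ b₂ : ℝ) :
    (∃ φ ψ : ℝ → ℝ,
      (ContDiff ℝ 2 φ ∧ ContDiff ℝ 2 ψ ∧
        φ 0 = a₁ ∧ deriv φ 0 = b₁ ∧ ψ 0 = a₂ ∧ deriv ψ 0 = b₂ ∧
        (∀ t : ℝ, deriv (deriv φ) t + α * φ t
          + s * μ * (μ * (φ t) ^ 2 + ν * (ψ t) ^ 2) * φ t = 0) ∧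
        (∀ t : ℝ, deriv (deriv ψ) t + β * ψ t
          + s * ν * (μ * (φ t) ^ 2 + ν * (ψ t) ^ 2) * ψ t = 0)) ∧
      (∀ φ₂ ψ₂ : ℝ → ℝ,
        (ContDiff ℝ 2 φ₂ ∧ ContDiff ℝ 2 ψ₂ ∧
          φ₂ 0 = a₁ ∧ deriv φ₂ 0 = b₁ ∧ ψ₂ 0 = a₂ ∧ deriv ψ₂ 0 = b₂ ∧
          (∀ t : ℝ, deriv (deriv φ₂) t + α * φ₂ t
            + s * μ * (μ * (φ₂ t) ^ 2 + ν * (ψ₂ t) ^ 2) * φ₂ t = 0) ∧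
          (∀ t : ℝ, deriv (deriv ψ₂) t + β * ψ₂ t
            + s * ν * (μ * (φ₂ t) ^ 2 + ν * (ψ₂ t) ^ 2) * ψ₂ t = 0)) →
        φ₂ = φ ∧ ψ₂ = ψ)) ∧
    (∀ φ ψ : ℝ → ℝ, ContDiff ℝ 2 φ → ContDiff ℝ 2 ψ →
      (∀ t : ℝ, deriv (deriv φ) t + α * φ t
        + s * μ * (μ * (φ t) ^ 2 + ν * (ψ t) ^ 2) * φ t = 0) →
      (∀ t : ℝ, deriv (deriv ψ) t + β * ψ t
        + s * ν * (μ * (φ t) ^ 2 + ν * (ψ t) ^ 2) * ψ t = 0) →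
      ∀ t : ℝ,
        (deriv φ t) ^ 2 / 2 + (deriv ψ t) ^ 2 / 2
          + α * (φ t) ^ 2 / 2 + β * (ψ t) ^ 2 / 2
          + s * (μ * (φ t) ^ 2 + ν * (ψ t) ^ 2) ^ 2 / 4
        = (deriv φ 0) ^ 2 / 2 + (deriv ψ 0) ^ 2 / 2
          + α * (φ 0) ^ 2 / 2 + β * (ψ 0) ^ 2 / 2
          + s * (μ * (φ 0) ^ 2 + ν * (ψ 0) ^ 2) ^ 2 / 4) := by
  constructor
  · -- existence and uniqueness
    obtain ⟨M, R1, hMR, hR1pos, KEY, Fc, hFceq, hFcsupp, hFc1⟩ := setup s α β μ ν hs hμ hν a₁ b₁ a₂ b₂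
    obtain ⟨K, hK⟩ := ContDiff.lipschitzWith_of_hasCompactSupport hFcsupp hFc1 one_ne_zero
    obtain ⟨C, hC⟩ := hFcsupp.exists_bound_of_continuous hFc1.continuous
    obtain ⟨x, hx0, hx⟩ := global_flow Fc K hK hC (a₁, b₁, a₂, b₂)
    have hxcont : Continuous x := continuous_iff_continuousAt.mpr fun t => (hx t).continuousAt
    -- trap region
    have htrap : ∀ t, Nsq (x t) ≤ M := by
      have key0 : Nsq (x 0) ≤ M := by rw [hx0]; exact KEY _ rfl
      suffices h : ∀ b : ℝ, 0 ≤ b → ∀ u, -b ≤ u → u ≤ b → Nsq (x u) ≤ M by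
        intro t; exact h |t| (abs_nonneg t) t (neg_abs_le t) (le_abs_self t)
      intro b hb
      have hgc : Continuous (fun τ => Nsq (x τ)) := continuous_Nsq.comp hxcont
      set 𝒜 : Set ℝ := {t | t ∈ Icc 0 b ∧ ∀ u, -t ≤ u → u ≤ t → Nsq (x u) ≤ M} with h𝒜
      have h0A : (0:ℝ) ∈ 𝒜 := by
        refine ⟨⟨le_refl 0, hb⟩, fun u h1 h2 => ?_⟩
        have hu0 : u = 0 := le_antisymm h2 (by linarith)
        rw [hu0]; exact key0
      have hbddA : BddAbove 𝒜 := ⟨b, fun t ht => ht.1.2⟩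
      have hneA : 𝒜.Nonempty := ⟨0, h0A⟩
      set c := sSup 𝒜 with hc
      have hc0 : 0 ≤ c := le_csSup hbddA h0A
      have hcb : c ≤ b := csSup_le hneA fun t ht => ht.1.2
      have gle : ∀ u, -c ≤ u → u ≤ c → Nsq (x u) ≤ M := by
        intro u h1 h2
        rcases eq_or_lt_of_le hc0 with h | h
        · have hu0 : u = 0 := le_antisymm (h ▸ h2) (by rw [← h] at h1; linarith)
          rw [hu0]; exact key0
        · have hsub : Ioo (-c) c ⊆ {u | Nsq (x u) ≤ M} := by
            intro w hw
            have habs : |w| < c := abs_lt.mpr ⟨hw.1, hw.2⟩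
            obtain ⟨t', ht'A, ht'⟩ := exists_lt_of_lt_csSup hneA habs
            have hw2 := abs_lt.mp ht'
            exact ht'A.2 w (by linarith [hw2.1]) (le_of_lt hw2.2)
          have hclosed : IsClosed {u | Nsq (x u) ≤ M} := isClosed_le hgc continuous_const
          have hIcc : Icc (-c) c ⊆ {u | Nsq (x u) ≤ M} := by
            rw [← closure_Ioo (by linarith : -c ≠ c)]
            exact hclosed.closure_subset_iff.mpr hsub
          exact hIcc ⟨h1, h2⟩
      have hcA : c ∈ 𝒜 := ⟨⟨hc0, hcb⟩, gle⟩
      have hceqb : c = b := by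
        by_contra hne
        have hclt : c < b := lt_of_le_of_ne hcb hne
        have hU1 : (fun τ => Nsq (x τ)) ⁻¹' (Iio (M+1)) ∈ nhds c :=
          hgc.continuousAt.preimage_mem_nhds
            (Iio_mem_nhds (by linarith [gle c (by linarith) (le_refl c)]))
        have hU2 : (fun τ => Nsq (x τ)) ⁻¹' (Iio (M+1)) ∈ nhds (-c) :=
          hgc.continuousAt.preimage_mem_nhds
            (Iio_mem_nhds (by linarith [gle (-c) (le_refl (-c)) (by linarith)]))
        obtain ⟨δ₁, hδ₁, hball1⟩ := Metric.mem_nhds_iff.mp hU1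
        obtain ⟨δ₂, hδ₂, hball2⟩ := Metric.mem_nhds_iff.mp hU2
        set δ := min (min (δ₁/2) (δ₂/2)) (b - c) with hδdef
        have hδpos : 0 < δ := lt_min (lt_min (by linarith) (by linarith)) (by linarith)
        have hδb : δ ≤ b - c := min_le_right _ _
        have hδ1' : δ ≤ δ₁/2 := le_trans (min_le_left _ _) (min_le_left _ _)
        have hδ2' : δ ≤ δ₂/2 := le_trans (min_le_left _ _) (min_le_right _ _)
        have hgJ : ∀ u, -(c+δ) ≤ u → u ≤ c+δ → Nsq (x u) ≤ M + 1 := by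
          intro u h1 h2
          rcases le_or_gt u c with h3 | h3
          · rcases le_or_gt (-c) u with h4 | h4
            · linarith [gle u h4 h3]
            · have hmem : u ∈ Metric.ball (-c) δ₂ := by
                rw [Metric.mem_ball, Real.dist_eq, abs_of_nonpos (by linarith)]
                linarith
              exact le_of_lt (hball2 hmem)
          · have hmem : u ∈ Metric.ball c δ₁ := by
              rw [Metric.mem_ball, Real.dist_eq, abs_of_nonneg (by linarith)]
              linarith
            exact le_of_lt (hball1 hmem)
        have htrueJ : ∀ u, -(c+δ) ≤ u → u ≤ c+δ → HasDerivAt x (F0 s α β μ ν (x u)) u := by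
          intro u h1 h2
          have heq := hFceq (x u) (by linarith [hgJ u h1 h2, hMR])
          rw [← heq]; exact hx u
        have hltJ : -(c+δ) < c+δ := by linarith
        have hdiff : DifferentiableOn ℝ (fun τ => En s α β μ ν (x τ)) (Icc (-(c+δ)) (c+δ)) :=
          fun u hu => ((energy_hasDerivAt s α β μ ν x u
            (htrueJ u hu.1 hu.2)).differentiableAt).differentiableWithinAt
        have hderiv0 : ∀ u ∈ Ico (-(c+δ)) (c+δ),
            derivWithin (fun τ => En s α β μ ν (x τ)) (Icc (-(c+δ)) (c+δ)) u = 0 := by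
          intro u hu
          have h := energy_hasDerivAt s α β μ ν x u (htrueJ u hu.1 (le_of_lt hu.2))
          exact h.hasDerivWithinAt.derivWithin ((uniqueDiffOn_Icc hltJ) u (Ico_subset_Icc_self hu))
        have hconst := constant_of_derivWithin_zero hdiff hderiv0
        have h0J : (0:ℝ) ∈ Icc (-(c+δ)) (c+δ) := ⟨by linarith, by linarith⟩
        have hgM : ∀ u, -(c+δ) ≤ u → u ≤ c+δ → Nsq (x u) ≤ M := by
          intro u h1 h2
          apply KEY
          have e1 : En s α β μ ν (x u) = En s α β μ ν (x (-(c+δ))) := hconst u ⟨h1, h2⟩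
          have e2 : En s α β μ ν (x 0) = En s α β μ ν (x (-(c+δ))) := hconst 0 h0J
          rw [e1, ← e2, hx0]
        have hcδA : c + δ ∈ 𝒜 := ⟨⟨by linarith, by linarith⟩, hgM⟩
        have := le_csSup hbddA hcδA
        rw [← hc] at this
        linarith
      intro u h1 h2
      exact hcA.2 u (by rw [hceqb]; exact h1) (by rw [hceqb]; exact h2)
    have htrue : ∀ t, HasDerivAt x (F0 s α β μ ν (x t)) t := by
      intro t
      rw [← hFceq (x t) (by linarith [htrap t, hMR])]
      exact hx t
    -- components
    have hup : ∀ t, HasDerivAt (fun τ => (x τ).1) ((x t).2.1) t := fun t => (htrue t).c1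
    have hpd : ∀ t, HasDerivAt (fun τ => (x τ).2.1)
        (-(α * (x t).1) - s * μ * (μ * (x t).1 ^ 2 + ν * (x t).2.2.1 ^ 2) * (x t).1) t :=
      fun t => (htrue t).c2
    have hvq : ∀ t, HasDerivAt (fun τ => (x τ).2.2.1) ((x t).2.2.2) t := fun t => (htrue t).c3
    have hqd : ∀ t, HasDerivAt (fun τ => (x τ).2.2.2)
        (-(β * (x t).2.2.1) - s * ν * (μ * (x t).1 ^ 2 + ν * (x t).2.2.1 ^ 2) * (x t).2.2.1) t :=
      fun t => (htrue t).c4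
    have hφcont : Continuous (fun τ => (x τ).1) := by fun_prop
    have hψcont : Continuous (fun τ => (x τ).2.2.1) := by fun_prop
    have hpc1 : ContDiff ℝ 1 (fun τ => (x τ).2.1) ∧
        deriv (fun τ => (x τ).2.1) = fun t =>
          -(α * (x t).1) - s * μ * (μ * (x t).1 ^ 2 + ν * (x t).2.2.1 ^ 2) * (x t).1 :=
      c1_of_flow _ _ hpd (by fun_prop)
    have hqc1 : ContDiff ℝ 1 (fun τ => (x τ).2.2.2) ∧
        deriv (fun τ => (x τ).2.2.2) = fun t =>
          -(β * (x t).2.2.1) - s * ν * (μ * (x t).1 ^ 2 + ν * (x t).2.2.1 ^ 2) * (x t).2.2.1 :=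
      c1_of_flow _ _ hqd (by fun_prop)
    have hφ2 : ContDiff ℝ 2 (fun τ => (x τ).1) ∧
        deriv (fun τ => (x τ).1) = fun τ => (x τ).2.1 :=
      c2_of_flow _ _ hup hpc1.1
    have hψ2 : ContDiff ℝ 2 (fun τ => (x τ).2.2.1) ∧
        deriv (fun τ => (x τ).2.2.1) = fun τ => (x τ).2.2.2 :=
      c2_of_flow _ _ hvq hqc1.1
    have heq1 : ∀ t, deriv (deriv (fun τ => (x τ).1)) t + α * (x t).1
        + s * μ * (μ * ((x t).1) ^ 2 + ν * ((x t).2.2.1) ^ 2) * (x t).1 = 0 := by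
      intro t
      rw [hφ2.2, hpc1.2]
      ring
    have heq2 : ∀ t, deriv (deriv (fun τ => (x τ).2.2.1)) t + β * (x t).2.2.1
        + s * ν * (μ * ((x t).1) ^ 2 + ν * ((x t).2.2.1) ^ 2) * (x t).2.2.1 = 0 := by
      intro t
      rw [hψ2.2, hqc1.2]
      ring
    refine ⟨fun τ => (x τ).1, fun τ => (x τ).2.2.1,
      ⟨hφ2.1, hψ2.1, by show (x 0).1 = a₁; rw [hx0],
        by rw [hφ2.2]; show (x 0).2.1 = b₁; rw [hx0],
        by show (x 0).2.2.1 = a₂; rw [hx0],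
        by rw [hψ2.2]; show (x 0).2.2.2 = b₂; rw [hx0], heq1, heq2⟩, ?_⟩
    -- uniqueness
    rintro φ₂ ψ₂ ⟨h2φ, h2ψ, h20a, h20b, h20c, h20d, h2e1, h2e2⟩
    have hy := lift_sol s α β μ ν φ₂ ψ₂ h2φ h2ψ h2e1 h2e2
    have hy0 : (φ₂ 0, deriv φ₂ 0, ψ₂ 0, deriv ψ₂ 0) = ((a₁, b₁, a₂, b₂) : ℝ × ℝ × ℝ × ℝ) := by
      rw [h20a, h20b, h20c, h20d]
    have hycons := energy_eq_const s α β μ ν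
      (fun τ => (φ₂ τ, deriv φ₂ τ, ψ₂ τ, deriv ψ₂ τ)) hy
    have hyM : ∀ t, Nsq (φ₂ t, deriv φ₂ t, ψ₂ t, deriv ψ₂ t) ≤ M := by
      intro t
      apply KEY
      have := hycons t
      rw [this, hy0]
    have hyc : ∀ t, HasDerivAt (fun τ => (φ₂ τ, deriv φ₂ τ, ψ₂ τ, deriv ψ₂ τ))
        (Fc (φ₂ t, deriv φ₂ t, ψ₂ t, deriv ψ₂ t)) t := by
      intro t
      rw [hFceq _ (by linarith [hyM t, hMR])]
      exact hy t
    have hxy : ∀ t, (φ₂ t, deriv φ₂ t, ψ₂ t, deriv ψ₂ t) = x t := by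
      intro t
      have habs0 : (0:ℝ) ∈ Ioo (-(|t|+1)) (|t|+1) :=
        ⟨by linarith [abs_nonneg t], by linarith [abs_nonneg t]⟩
      have huniq := ODE_solution_unique_of_mem_Ioo (v := fun _ => Fc) (s := fun _ => univ)
        (K := K) (fun _ _ => hK.lipschitzOnWith) (t₀ := (0:ℝ)) habs0
        (fun u _ => ⟨hyc u, trivial⟩) (fun u _ => ⟨hx u, trivial⟩)
        (by show (φ₂ 0, deriv φ₂ 0, ψ₂ 0, deriv ψ₂ 0) = x 0; rw [hy0, hx0])
      exact huniq ⟨by linarith [neg_abs_le t], by linarith [le_abs_self t]⟩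
    constructor
    · funext t; exact congrArg Prod.fst (hxy t)
    · funext t; exact congrArg (fun z : ℝ × ℝ × ℝ × ℝ => z.2.2.1) (hxy t)
  · -- energy conservation
    intro φ ψ hφ hψ heq1 heq2 t
    have hy := lift_sol s α β μ ν φ ψ hφ hψ heq1 heq2
    have hconst := energy_eq_const s α β μ ν
      (fun τ => (φ τ, deriv φ τ, ψ τ, deriv ψ τ)) hy
    exact hconst t

end
end TwoModeAux


/-- The two-mode system
`φ'' + m²(Λₘ − P)φ + S m²(m²φ² + n²ψ²)φ = 0`,
`ψ'' + n²(Λₙ − P)ψ + S n²(m²φ² + n²ψ²)ψ = 0`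
has, for any initial data in `ℝ⁴`, a unique global `C²` solution `(φ, ψ)`, and
the energy
`E = φ'²/2 + ψ'²/2 + m²(Λₘ − P)φ²/2 + n²(Λₙ − P)ψ²/2 + S(m²φ² + n²ψ²)²/4`
is constant along every solution. -/
theorem two_mode_system_wellposed_and_energy_conserved
    (m n : ℕ) (hm : 1 ≤ m) (hn : 1 ≤ n) (S P Λm Λn : ℝ) (hS : 0 < S)
    (a₁ b₁ a₂ b₂ : ℝ) :
    (∃ φ ψ : ℝ → ℝ,
      (ContDiff ℝ 2 φ ∧ ContDiff ℝ 2 ψ ∧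
        φ 0 = a₁ ∧ deriv φ 0 = b₁ ∧ ψ 0 = a₂ ∧ deriv ψ 0 = b₂ ∧
        (∀ t : ℝ, deriv (deriv φ) t + (m : ℝ) ^ 2 * (Λm - P) * φ t
          + S * (m : ℝ) ^ 2 * ((m : ℝ) ^ 2 * (φ t) ^ 2 + (n : ℝ) ^ 2 * (ψ t) ^ 2) * φ t = 0) ∧
        (∀ t : ℝ, deriv (deriv ψ) t + (n : ℝ) ^ 2 * (Λn - P) * ψ t
          + S * (n : ℝ) ^ 2 * ((m : ℝ) ^ 2 * (φ t) ^ 2 + (n : ℝ) ^ 2 * (ψ t) ^ 2) * ψ t = 0)) ∧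
      (∀ φ₂ ψ₂ : ℝ → ℝ,
        (ContDiff ℝ 2 φ₂ ∧ ContDiff ℝ 2 ψ₂ ∧
          φ₂ 0 = a₁ ∧ deriv φ₂ 0 = b₁ ∧ ψ₂ 0 = a₂ ∧ deriv ψ₂ 0 = b₂ ∧
          (∀ t : ℝ, deriv (deriv φ₂) t + (m : ℝ) ^ 2 * (Λm - P) * φ₂ t
            + S * (m : ℝ) ^ 2 * ((m : ℝ) ^ 2 * (φ₂ t) ^ 2 + (n : ℝ) ^ 2 * (ψ₂ t) ^ 2) * φ₂ t = 0) ∧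
          (∀ t : ℝ, deriv (deriv ψ₂) t + (n : ℝ) ^ 2 * (Λn - P) * ψ₂ t
            + S * (n : ℝ) ^ 2 * ((m : ℝ) ^ 2 * (φ₂ t) ^ 2 + (n : ℝ) ^ 2 * (ψ₂ t) ^ 2) * ψ₂ t = 0)) →
        φ₂ = φ ∧ ψ₂ = ψ)) ∧
    (∀ φ ψ : ℝ → ℝ, ContDiff ℝ 2 φ → ContDiff ℝ 2 ψ →
      (∀ t : ℝ, deriv (deriv φ) t + (m : ℝ) ^ 2 * (Λm - P) * φ t
        + S * (m : ℝ) ^ 2 * ((m : ℝ) ^ 2 * (φ t) ^ 2 + (n : ℝ) ^ 2 * (ψ t) ^ 2) * φ t = 0) →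
      (∀ t : ℝ, deriv (deriv ψ) t + (n : ℝ) ^ 2 * (Λn - P) * ψ t
        + S * (n : ℝ) ^ 2 * ((m : ℝ) ^ 2 * (φ t) ^ 2 + (n : ℝ) ^ 2 * (ψ t) ^ 2) * ψ t = 0) →
      ∀ t : ℝ,
        (deriv φ t) ^ 2 / 2 + (deriv ψ t) ^ 2 / 2
          + (m : ℝ) ^ 2 * (Λm - P) * (φ t) ^ 2 / 2
          + (n : ℝ) ^ 2 * (Λn - P) * (ψ t) ^ 2 / 2
          + S * ((m : ℝ) ^ 2 * (φ t) ^ 2 + (n : ℝ) ^ 2 * (ψ t) ^ 2) ^ 2 / 4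
        = (deriv φ 0) ^ 2 / 2 + (deriv ψ 0) ^ 2 / 2
          + (m : ℝ) ^ 2 * (Λm - P) * (φ 0) ^ 2 / 2
          + (n : ℝ) ^ 2 * (Λn - P) * (ψ 0) ^ 2 / 2
          + S * ((m : ℝ) ^ 2 * (φ 0) ^ 2 + (n : ℝ) ^ 2 * (ψ 0) ^ 2) ^ 2 / 4) := by
  have hm' : (1:ℝ) ≤ (m:ℝ) ^ 2 := by
    have : (1:ℝ) ≤ (m:ℝ) := by exact_mod_cast hm
    nlinarith
  have hn' : (1:ℝ) ≤ (n:ℝ) ^ 2 := by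
    have : (1:ℝ) ≤ (n:ℝ) := by exact_mod_cast hn
    nlinarith
  exact TwoModeAux.main S ((m:ℝ)^2 * (Λm - P)) ((n:ℝ)^2 * (Λn - P)) ((m:ℝ)^2) ((n:ℝ)^2)
    hS hm' hn' a₁ b₁ a₂ b₂
end

section
/- Let μ > 0 and α > 0, and let φ_α be the solution of the Duffing equation φ'' + μφ + φ³ = 0 with φ(0) = α, φ'(0) = 0. Then φ_α is periodic; denoting by T its minimal positive period, one has φ_α'(t) < 0 for all t ∈ (0, T/2), φ_α(T/2) = −α, φ_α'(T/2) = 0, and φ_α(t + T/2) = −φ_α(t) for all t ∈ ℝ. In particular t ↦ φ_α(t)² has period T/2. -/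
open Set Metric Filter

lemma duffing_lip (μ R : ℝ) (hμ : 0 ≤ μ) (hR : 0 ≤ R) :
    ∃ K : NNReal, LipschitzOnWith K
      (fun p : ℝ × ℝ => ((p.2, -μ * p.1 - p.1^3) : ℝ × ℝ)) (Metric.closedBall 0 R) := by
  refine ⟨(max 1 (μ + 3*R^2)).toNNReal, lipschitzOnWith_iff_dist_le_mul.mpr ?_⟩
  intro p hp q hq
  rw [Real.coe_toNNReal _ (by positivity)]
  rw [mem_closedBall, Prod.dist_eq, Real.dist_eq, Real.dist_eq] at hp hq
  simp only [Prod.fst_zero, Prod.snd_zero, sub_zero, sup_le_iff] at hp hq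
  rw [Prod.dist_eq, Real.dist_eq, Real.dist_eq, Prod.dist_eq, Real.dist_eq, Real.dist_eq]
  have h1 : |p.1 - q.1| ≤ |p.1 - q.1| ⊔ |p.2 - q.2| := le_max_left _ _
  have h2 : |p.2 - q.2| ≤ |p.1 - q.1| ⊔ |p.2 - q.2| := le_max_right _ _
  apply max_le
  · calc |p.2 - q.2| ≤ 1 * (|p.1 - q.1| ⊔ |p.2 - q.2|) := by linarith
    _ ≤ _ := by
      apply mul_le_mul_of_nonneg_right (le_max_left _ _) (le_trans (abs_nonneg _) h1)
  · have key : |(-μ * p.1 - p.1^3) - (-μ * q.1 - q.1^3)| ≤ (μ + 3*R^2) * |p.1 - q.1| := by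
      have : (-μ * p.1 - p.1^3) - (-μ * q.1 - q.1^3) = -((μ + (p.1^2 + p.1*q.1 + q.1^2)) * (p.1 - q.1)) := by ring
      rw [this, abs_neg, abs_mul]
      apply mul_le_mul_of_nonneg_right _ (abs_nonneg _)
      have hp1 := abs_le.mp hp.1
      have hq1 := abs_le.mp hq.1
      rw [abs_le]
      constructor <;> nlinarith [sq_nonneg (p.1 + q.1), sq_nonneg (p.1 - q.1)]
    calc |(-μ * p.1 - p.1^3) - (-μ * q.1 - q.1^3)| ≤ (μ + 3*R^2) * |p.1 - q.1| := key
    _ ≤ (1 ⊔ (μ + 3*R^2)) * (|p.1 - q.1| ⊔ |p.2 - q.2|) := by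
        apply mul_le_mul (le_max_right _ _) h1 (abs_nonneg _)
        positivity

lemma duffing_unique (μ R : ℝ) (hμ : 0 ≤ μ) (hR : 0 ≤ R) (F G : ℝ → ℝ × ℝ)
    (hF : ∀ t, HasDerivAt F ((F t).2, -μ * (F t).1 - (F t).1^3) t)
    (hG : ∀ t, HasDerivAt G ((G t).2, -μ * (G t).1 - (G t).1^3) t)
    (hFb : ∀ t, F t ∈ Metric.closedBall (0 : ℝ × ℝ) R)
    (hGb : ∀ t, G t ∈ Metric.closedBall (0 : ℝ × ℝ) R)
    (t₀ : ℝ) (heq : F t₀ = G t₀) : ∀ t, F t = G t := by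
  obtain ⟨K, hK⟩ := duffing_lip μ R hμ hR
  intro t
  have h := ODE_solution_unique_of_mem_Ioo
    (v := fun _ p => ((p.2, -μ * p.1 - p.1^3) : ℝ × ℝ))
    (s := fun _ => Metric.closedBall (0 : ℝ × ℝ) R)
    (a := min t t₀ - 1) (b := max t t₀ + 1)
    (fun _ _ => hK)
    (⟨by have := min_le_right t t₀; linarith, by have := le_max_right t t₀; linarith⟩)
    (fun u _ => ⟨hF u, hFb u⟩) (fun u _ => ⟨hG u, hGb u⟩) heq
  apply h
  constructor
  · have := min_le_left t t₀; linarith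
  · have := le_max_left t t₀; linarith


lemma duffing_reflect (μ : ℝ) (hμ : 0 ≤ μ) (φ : ℝ → ℝ)
    (hd1 : Differentiable ℝ φ) (hd2 : Differentiable ℝ (deriv φ))
    (hode : ∀ t, deriv (deriv φ) t = -(μ * φ t + (φ t)^3))
    (R : ℝ) (hR : 0 ≤ R) (hb1 : ∀ t, |φ t| ≤ R) (hb2 : ∀ t, |deriv φ t| ≤ R)
    (c σ : ℝ) (hσ : σ = 1 ∨ σ = -1)
    (h1 : φ (c/2) = σ * φ (c/2)) (h2 : deriv φ (c/2) = -(σ * deriv φ (c/2))) :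
    ∀ t, φ t = σ * φ (c - t) := by
  have hσ2 : σ^2 = 1 := by rcases hσ with h | h <;> rw [h] <;> norm_num
  set F : ℝ → ℝ × ℝ := fun t => (φ t, deriv φ t) with hFdef
  set G : ℝ → ℝ × ℝ := fun t => (σ * φ (c - t), -(σ * deriv φ (c - t))) with hGdef
  have hφc : ∀ t : ℝ, HasDerivAt (fun u => φ (c - u)) (-(deriv φ (c - t))) t := by
    intro t
    have h := ((hd1 (c - t)).hasDerivAt).comp t ((hasDerivAt_id t).const_sub c)
    simpa [Function.comp_def] using h
  have hφ'c : ∀ t : ℝ, HasDerivAt (fun u => deriv φ (c - u)) (-(deriv (deriv φ) (c - t))) t := by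
    intro t
    have h := ((hd2 (c - t)).hasDerivAt).comp t ((hasDerivAt_id t).const_sub c)
    simpa [Function.comp_def] using h
  have hF : ∀ t, HasDerivAt F ((F t).2, -μ * (F t).1 - (F t).1^3) t := by
    intro t
    have h := ((hd1 t).hasDerivAt).prodMk ((hd2 t).hasDerivAt)
    convert h using 2
    rw [hode t]; simp [hFdef]; ring
  have hG : ∀ t, HasDerivAt G ((G t).2, -μ * (G t).1 - (G t).1^3) t := by
    intro t
    have ha := (hφc t).const_mul σ
    have hb := ((hφ'c t).const_mul σ).neg
    have h := ha.prodMk hb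
    convert h using 2
    · simp [hGdef]
    · simp [hGdef]
    · rw [hode (c - t)]; simp only [hGdef]
      linear_combination (-σ * φ (c - t)^3) * hσ2
  have hFb : ∀ t, F t ∈ Metric.closedBall (0 : ℝ × ℝ) R := by
    intro t
    rw [mem_closedBall_zero_iff, Prod.norm_def]
    exact max_le (by simpa [Real.norm_eq_abs] using hb1 t) (by simpa [Real.norm_eq_abs] using hb2 t)
  have hσabs : |σ| = 1 := by rcases hσ with h | h <;> rw [h] <;> norm_num
  have hGb : ∀ t, G t ∈ Metric.closedBall (0 : ℝ × ℝ) R := by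
    intro t
    rw [mem_closedBall_zero_iff, Prod.norm_def]
    apply max_le
    · simpa [hGdef, Real.norm_eq_abs, abs_mul, hσabs] using hb1 (c - t)
    · simpa [hGdef, Real.norm_eq_abs, abs_mul, hσabs] using hb2 (c - t)
  have heq : F (c/2) = G (c/2) := by
    have hc : c - c/2 = c/2 := by ring
    simp only [hFdef, hGdef, hc, Prod.mk.injEq]
    exact ⟨h1, h2⟩
  have := duffing_unique μ R hμ hR F G hF hG hFb hGb (c/2) heq
  intro t
  have ht := congrArg Prod.fst (this t)
  simpa [hFdef, hGdef] using ht

/-- The solution `φ_α` of the Duffing equation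
`φ'' + μφ + φ³ = 0` with `φ(0) = α > 0`, `φ'(0) = 0` is periodic; with `T` its
minimal positive period, `φ_α' < 0` on `(0, T/2)`, `φ_α(T/2) = −α`,
`φ_α'(T/2) = 0`, `φ_α(t + T/2) = −φ_α(t)` for all `t`, and `φ_α²` has period
`T/2`. -/
theorem duffing_periodicity_structure
    (μ α : ℝ) (hμ : 0 < μ) (hα : 0 < α)
    (φ : ℝ → ℝ) (hφ : ContDiff ℝ 2 φ)
    (hode : ∀ t : ℝ, deriv (deriv φ) t + μ * φ t + (φ t) ^ 3 = 0)
    (h0 : φ 0 = α) (h0' : deriv φ 0 = 0) :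
    ∃ T : ℝ, 0 < T ∧ Function.Periodic φ T ∧
      (∀ T' : ℝ, 0 < T' → Function.Periodic φ T' → T ≤ T') ∧
      (∀ t ∈ Set.Ioo 0 (T / 2), deriv φ t < 0) ∧
      φ (T / 2) = -α ∧ deriv φ (T / 2) = 0 ∧
      (∀ t : ℝ, φ (t + T / 2) = -φ t) ∧
      Function.Periodic (fun t : ℝ => (φ t) ^ 2) (T / 2) := by
  -- basic differentiability
  have hd1 : Differentiable ℝ φ := hφ.differentiable (by norm_num)
  have hcd1 : ContDiff ℝ 1 (deriv φ) :=
    ((contDiff_succ_iff_deriv (n := 1)).mp (by exact_mod_cast hφ)).2.2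
  have hd2 : Differentiable ℝ (deriv φ) := hcd1.differentiable (by norm_num)
  have hode' : ∀ t, deriv (deriv φ) t = -(μ * φ t + (φ t)^3) := by
    intro t; have := hode t; linarith
  have hφcont : Continuous φ := hd1.continuous
  have hφ'cont : Continuous (deriv φ) := hd2.continuous
  -- energy conservation
  set E₀ : ℝ := μ * α^2/2 + α^4/4 with hE₀def
  have energy : ∀ t, (deriv φ t)^2/2 + μ * (φ t)^2/2 + (φ t)^4/4 = E₀ := by
    set E : ℝ → ℝ := fun u => (deriv φ u)^2/2 + μ * (φ u)^2/2 + (φ u)^4/4 with hEdef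
    have hE : ∀ t, HasDerivAt E 0 t := by
      intro t
      have h1 : HasDerivAt (fun u => (deriv φ u)^2/2)
          ((2 * deriv φ t ^ 1 * deriv (deriv φ) t) / 2) t :=
        (((hd2 t).hasDerivAt).pow 2).div_const 2
      have h2 : HasDerivAt (fun u => μ * (φ u)^2/2)
          ((μ * (2 * φ t ^ 1 * deriv φ t)) / 2) t :=
        ((((hd1 t).hasDerivAt).pow 2).const_mul μ).div_const 2
      have h3 : HasDerivAt (fun u => (φ u)^4/4)
          ((4 * φ t ^ 3 * deriv φ t) / 4) t :=
        (((hd1 t).hasDerivAt).pow 4).div_const 4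
      have h := (h1.add h2).add h3
      refine h.congr_deriv ?_
      rw [hode' t]; ring
    have hconst : ∀ t, E t = E 0 :=
      fun t => is_const_of_deriv_eq_zero (fun u => (hE u).differentiableAt)
        (fun u => (hE u).deriv) t 0
    intro t
    have := hconst t
    simp only [hEdef, h0, h0'] at this
    rw [this]; ring
  have hE₀pos : 0 < E₀ := by positivity
  clear_value E₀
  -- bounds
  have hsqb : ∀ t, (φ t)^2 ≤ α^2 := by
    intro t
    nlinarith [energy t, sq_nonneg (deriv φ t), sq_nonneg (φ t), sq_nonneg α,
      mul_pos hμ hα, sq_nonneg ((φ t)^2 - α^2), sq_nonneg ((φ t)^2 + α^2)]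
  have hb1 : ∀ t, |φ t| ≤ α := by
    intro t
    rw [← Real.sqrt_sq hα.le, ← Real.sqrt_sq_eq_abs]
    exact Real.sqrt_le_sqrt (hsqb t)
  set B : ℝ := Real.sqrt (2 * E₀) with hBdef
  have hb2 : ∀ t, |deriv φ t| ≤ B := by
    intro t
    rw [hBdef, ← Real.sqrt_sq_eq_abs]
    apply Real.sqrt_le_sqrt
    have h4 : 0 ≤ (φ t)^4 := by positivity
    have h2 : 0 ≤ μ * (φ t)^2 := by positivity
    nlinarith [energy t]
  clear_value B
  set R : ℝ := max α B with hRdef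
  have hR : 0 ≤ R := le_trans hα.le (le_max_left _ _)
  have hb1R : ∀ t, |φ t| ≤ R := fun t => le_trans (hb1 t) (le_max_left _ _)
  have hb2R : ∀ t, |deriv φ t| ≤ R := fun t => le_trans (hb2 t) (le_max_right _ _)
  clear_value R
  -- reflection principle specialized
  have reflect : ∀ c σ : ℝ, (σ = 1 ∨ σ = -1) → φ (c/2) = σ * φ (c/2) →
      deriv φ (c/2) = -(σ * deriv φ (c/2)) → ∀ t, φ t = σ * φ (c - t) :=
    fun c σ hσ ha hb => duffing_reflect μ hμ.le φ hd1 hd2 hode' R hR hb1R hb2R c σ hσ ha hb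
  -- evenness
  have heven : ∀ t, φ t = φ (-t) := by
    have h := reflect 0 1 (Or.inl rfl) (by ring) (by rw [show (0:ℝ)/2 = 0 by norm_num, h0']; ring)
    intro t; simpa using h t
  -- φ eventually hits nonpositive values
  have hhit : ∃ t1 : ℝ, 0 < t1 ∧ φ t1 ≤ 0 := by
    by_contra hcon
    push_neg at hcon
    have hpos : ∀ t : ℝ, 0 ≤ t → 0 < φ t := by
      intro t ht
      rcases eq_or_lt_of_le ht with h | h
      · rw [← h, h0]; exact hα
      · exact hcon t h
    have hSA : StrictAntiOn (deriv φ) (Ici 0) := by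
      apply strictAntiOn_of_deriv_neg (convex_Ici 0) hφ'cont.continuousOn
      intro x hx
      rw [interior_Ici] at hx
      rw [hode']
      have := hpos x (le_of_lt hx)
      nlinarith [mul_pos hμ this, pow_pos this 3]
    have hc : deriv φ 1 < 0 := by
      have := hSA (self_mem_Ici) (by norm_num : (1:ℝ) ∈ Ici 0) one_pos
      rwa [h0'] at this
    set c : ℝ := -(deriv φ 1) with hcdef
    have hcpos : 0 < c := by rw [hcdef]; linarith
    clear_value c
    set g : ℝ → ℝ := fun t => φ t + c * t with hgdef
    clear_value g
    have hdg : ∀ x : ℝ, HasDerivAt g (deriv φ x + c) x := by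
      intro x
      rw [hgdef]
      exact ((hd1 x).hasDerivAt.add ((hasDerivAt_id x).const_mul c)).congr_deriv (by simp)
    have hganti : AntitoneOn g (Ici 1) := by
      apply antitoneOn_of_deriv_nonpos (convex_Ici 1)
      · exact Continuous.continuousOn (by rw [hgdef]; exact hφcont.add (continuous_const.mul continuous_id))
      · intro x _
        exact (hdg x).differentiableAt.differentiableWithinAt
      · intro x hx
        rw [interior_Ici, mem_Ioi] at hx
        rw [(hdg x).deriv]
        have h1x : deriv φ x < deriv φ 1 :=
          hSA (by norm_num) (by simp only [mem_Ici]; linarith) hx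
        rw [hcdef] at *
        linarith
    have hφ1 : 0 < φ 1 := hpos 1 one_pos.le
    set t2 : ℝ := 1 + (φ 1 + 1)/c with ht2def
    clear_value t2
    have ht2 : 1 ≤ t2 := by
      have h9 : 0 ≤ (φ 1 + 1)/c := div_nonneg (by linarith) hcpos.le
      rw [ht2def]; linarith
    have hg := hganti self_mem_Ici (by simp only [mem_Ici]; exact ht2) ht2
    have hct2 : c * t2 = c + (φ 1 + 1) := by
      rw [ht2def]; field_simp
    simp only [hgdef] at hg
    rw [hct2] at hg
    have : φ t2 ≤ -1 := by linarith
    have := hpos t2 (by linarith)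
    linarith
  -- first zero
  obtain ⟨s, hs0, hφs, hpos⟩ : ∃ s : ℝ, 0 < s ∧ φ s = 0 ∧ ∀ t ∈ Ico 0 s, 0 < φ t := by
    obtain ⟨t1, ht1, ht1'⟩ := hhit
    set Z : Set ℝ := Ici 0 ∩ φ ⁻¹' {0} with hZdef
    have hZne : Z.Nonempty := by
      have h0z : (0:ℝ) ∈ Icc (φ t1) (φ 0) := ⟨ht1', by rw [h0]; exact hα.le⟩
      obtain ⟨x, hx, hfx⟩ := intermediate_value_Icc' ht1.le hφcont.continuousOn h0z
      exact ⟨x, hx.1, hfx⟩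
    have hZclosed : IsClosed Z :=
      isClosed_Ici.inter (isClosed_singleton.preimage hφcont)
    have hZbdd : BddBelow Z := ⟨0, fun y hy => hy.1⟩
    set s : ℝ := sInf Z with hsdef
    have hsmem : s ∈ Z := hZclosed.csInf_mem hZne hZbdd
    have hsnn : 0 ≤ s := hsmem.1
    have hφs : φ s = 0 := hsmem.2
    have hspos : 0 < s := by
      rcases eq_or_lt_of_le hsnn with h | h
      · exfalso; rw [← h, h0] at hφs; linarith
      · exact h
    refine ⟨s, hspos, hφs, ?_⟩
    intro t ht
    rcases lt_trichotomy (φ t) 0 with h | h | h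
    · exfalso
      have h0z : (0:ℝ) ∈ Icc (φ t) (φ 0) := ⟨h.le, by rw [h0]; exact hα.le⟩
      obtain ⟨y, hy, hfy⟩ := intermediate_value_Icc' ht.1 hφcont.continuousOn h0z
      have : s ≤ y := csInf_le hZbdd ⟨hy.1, hfy⟩
      linarith [ht.2, hy.2]
    · exfalso
      have : s ≤ t := csInf_le hZbdd ⟨ht.1, h⟩
      linarith [ht.2]
    · exact h
  -- deriv φ negative just after 0
  have hev0 : ∀ᶠ t in nhdsWithin (0:ℝ) (Ioi 0), deriv φ t < 0 := by
    have hdd0 : HasDerivAt (deriv φ) (deriv (deriv φ) 0) 0 := (hd2 0).hasDerivAt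
    have hval : deriv (deriv φ) 0 < 0 := by
      rw [hode' 0, h0]; nlinarith
    have hslope := hasDerivAt_iff_tendsto_slope.mp hdd0
    have hev : ∀ᶠ t in nhdsWithin (0:ℝ) {(0:ℝ)}ᶜ, slope (deriv φ) 0 t < 0 :=
      hslope.eventually_lt_const hval
    have hmono : nhdsWithin (0:ℝ) (Ioi 0) ≤ nhdsWithin (0:ℝ) {(0:ℝ)}ᶜ :=
      nhdsWithin_mono _ (fun x hx => ne_of_gt hx)
    filter_upwards [hmono hev, self_mem_nhdsWithin] with t h1 h2
    simp only [slope_def_field, h0', sub_zero] at h1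
    rw [mem_Ioi] at h2
    rcases div_neg_iff.mp h1 with ⟨h3, h4⟩ | ⟨h3, h4⟩
    · linarith
    · exact h3
  -- deriv φ s < 0
  have hs'sq : (deriv φ s)^2 = 2 * E₀ := by
    have := energy s
    rw [hφs] at this
    nlinarith
  have hs'ne : deriv φ s ≠ 0 := by
    intro h
    rw [h] at hs'sq
    nlinarith
  have hs' : deriv φ s < 0 := by
    rcases lt_trichotomy (deriv φ s) 0 with h | h | h
    · exact h
    · exact absurd h hs'ne
    · exfalso
      have hds : HasDerivAt φ (deriv φ s) s := (hd1 s).hasDerivAt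
      have hslope := hasDerivAt_iff_tendsto_slope.mp hds
      have hev : ∀ᶠ t in nhdsWithin s {s}ᶜ, 0 < slope φ s t :=
        hslope.eventually_const_lt h
      have hmono : nhdsWithin s (Iio s) ≤ nhdsWithin s {s}ᶜ :=
        nhdsWithin_mono _ (fun x hx => ne_of_lt hx)
      have hIoo : Ioo 0 s ∈ nhdsWithin s (Iio s) :=
        Ioo_mem_nhdsLT_of_mem ⟨hs0, le_rfl⟩
      have hIoo' : ∀ᶠ t in nhdsWithin s (Iio s), t ∈ Ioo 0 s := hIoo
      obtain ⟨t, h1, h2⟩ := ((hev.filter_mono hmono).and hIoo').exists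
      rw [slope_def_field, hφs] at h1
      have h3 : t - s < 0 := by linarith [h2.2]
      have h4 : φ t - 0 < 0 := by
        by_contra hc
        push_neg at hc
        have := div_nonpos_of_nonneg_of_nonpos hc h3.le
        linarith
      have := hpos t ⟨h2.1.le, h2.2⟩
      linarith
  -- deriv φ nonzero on (0, s]
  have hnz : ∀ r ∈ Ioc 0 s, deriv φ r ≠ 0 := by
    intro r hr h
    have he := energy r
    rw [h] at he
    have factor : ((φ r)^2 - α^2) * (2*μ + (φ r)^2 + α^2) = 0 := by
      rw [hE₀def] at he
      linear_combination 4 * he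
    have hfac2 : 0 < 2*μ + (φ r)^2 + α^2 := by positivity
    have hsq : (φ r)^2 = α^2 := by
      rcases mul_eq_zero.mp factor with h' | h'
      · linarith
      · linarith
    have hrs : r < s := by
      rcases eq_or_lt_of_le hr.2 with h' | h'
      · exfalso; rw [h', hφs] at hsq; nlinarith
      · exact h'
    have hφr : 0 < φ r := hpos r ⟨hr.1.le, hrs⟩
    have hφrα : φ r = α := by
      have factor2 : (φ r - α) * (φ r + α) = 0 := by linear_combination hsq
      rcases mul_eq_zero.mp factor2 with h' | h'
      · linarith
      · linarith
    have href := reflect (2*r) 1 (Or.inl rfl)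
      (by ring) (by rw [show 2*r/2 = r by ring, h]; ring)
    have hzero : φ (2*r - s) = 0 := by
      have := href s
      rw [one_mul] at this
      rw [← this, hφs]
    rcases le_or_gt 0 (2*r - s) with h' | h'
    · have := hpos (2*r - s) ⟨h', by linarith⟩
      linarith
    · have heq2 : φ (s - 2*r) = 0 := by
        have := heven (s - 2*r)
        rw [show -(s - 2*r) = 2*r - s by ring] at this
        rw [this, hzero]
      have := hpos (s - 2*r) ⟨by linarith, by linarith [hr.1]⟩
      linarith
  -- deriv φ < 0 on (0, s]
  have hneg : ∀ t ∈ Ioc 0 s, deriv φ t < 0 := by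
    intro t ht
    rcases lt_trichotomy (deriv φ t) 0 with h | h | h
    · exact h
    · exact absurd h (hnz t ht)
    · exfalso
      have hIoo : Ioo 0 t ∈ nhdsWithin (0:ℝ) (Ioi 0) :=
        Ioo_mem_nhdsGT_of_mem ⟨le_rfl, ht.1⟩
      obtain ⟨u, hu1, hu2⟩ := (hev0.and hIoo).exists
      have h0m : (0:ℝ) ∈ Icc (deriv φ u) (deriv φ t) := ⟨hu1.le, h.le⟩
      obtain ⟨r, hrmem, hr0⟩ :=
        intermediate_value_Icc (le_of_lt hu2.2) hφ'cont.continuousOn h0m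
      exact hnz r ⟨lt_of_lt_of_le hu2.1 hrmem.1, le_trans hrmem.2 ht.2⟩ hr0
  -- odd reflection about s
  have hodd : ∀ t, φ t = -φ (2*s - t) := by
    have h := reflect (2*s) (-1) (Or.inr rfl)
      (by rw [show 2*s/2 = s by ring, hφs]; ring)
      (by ring)
    intro t
    have := h t
    linarith
  -- antiperiodicity
  have hanti : ∀ t, φ (t + 2*s) = -φ t := by
    intro t
    have h1 := hodd (t + 2*s)
    have h2 := heven t
    rw [show 2*s - (t + 2*s) = -t by ring] at h1
    rw [h1, ← h2]
  have hderiv_anti : ∀ t, deriv φ (t + 2*s) = -(deriv φ t) := by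
    intro t
    have h : (fun u => φ (u + 2*s)) = fun u => -φ u := funext hanti
    have h1 : deriv (fun u => φ (u + 2*s)) t = deriv φ (t + 2*s) := by
      rw [deriv_comp_add_const]
    have h2 : deriv (fun u => -φ u) t = -(deriv φ t) := by
      rw [deriv.fun_neg]
    rw [← h1, h, h2]
  have hderiv_even : ∀ t, deriv φ (-t) = -(deriv φ t) := by
    intro t
    have h : (fun u => φ (-u)) = φ := funext (fun u => (heven u).symm)
    have h1 : deriv (fun u : ℝ => φ (-u)) t = -(deriv φ (-t)) := by
      rw [deriv_comp_neg]
    rw [h] at h1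
    linarith
  have h2s : φ (2*s) = -α := by
    have := hanti 0
    rw [zero_add, h0] at this
    exact this
  -- deriv φ < 0 on (0, 2s)
  have hneg2 : ∀ t ∈ Ioo 0 (2*s), deriv φ t < 0 := by
    intro t ht
    rcases le_or_gt t s with h | h
    · exact hneg t ⟨ht.1, h⟩
    · have h1 := hderiv_anti (t - 2*s)
      rw [show t - 2*s + 2*s = t by ring] at h1
      have h2 := hderiv_even (2*s - t)
      rw [show -(2*s - t) = t - 2*s by ring] at h2
      have h3 : deriv φ (2*s - t) < 0 := hneg _ ⟨by linarith [ht.2], by linarith⟩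
      rw [h1, h2]
      linarith
  -- strict antitonicity on [0, 2s]
  have hSA2 : StrictAntiOn φ (Icc 0 (2*s)) := by
    apply strictAntiOn_of_deriv_neg (convex_Icc _ _) hφcont.continuousOn
    intro x hx
    rw [interior_Icc] at hx
    exact hneg2 x hx
  have hlt_α : ∀ u, 0 < u → u < 4*s → φ u < α := by
    intro u hu1 hu2
    rcases le_or_gt u (2*s) with h | h
    · have := hSA2 ⟨le_rfl, by linarith⟩ ⟨hu1.le, h⟩ hu1
      rwa [h0] at this
    · have h1 := hanti (u - 2*s)
      rw [show u - 2*s + 2*s = u by ring] at h1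
      have h2 : -α < φ (u - 2*s) := by
        have := hSA2 ⟨by linarith, by linarith⟩ ⟨by linarith, le_rfl⟩ (by linarith : u - 2*s < 2*s)
        rwa [h2s] at this
      rw [h1]
      linarith
  refine ⟨4*s, by linarith, ?_, ?_, ?_, ?_, ?_, ?_, ?_⟩
  · -- periodic
    intro t
    have h1 := hanti (t + 2*s)
    have h2 := hanti t
    rw [show t + 2*s + 2*s = t + 4*s by ring] at h1
    rw [show t + 4*s = t + 4 * s by ring] at h1
    rw [h1, h2, neg_neg]
  · -- minimality
    intro T' hT' hper
    by_contra hcon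
    push_neg at hcon
    have hval : φ T' = α := by
      have := hper 0
      rw [zero_add, h0] at this
      exact this
    have := hlt_α T' hT' hcon
    linarith
  · -- deriv φ < 0 on (0, 2s)
    intro t ht
    rw [show (4*s)/2 = 2*s by ring] at ht
    exact hneg2 t ht
  · rw [show (4*s)/2 = 0 + 2*s by ring, hanti 0, h0]
  · have := hderiv_anti 0
    rw [show (4*s)/2 = 0 + 2*s by ring, this, h0']
    ring
  · intro t
    rw [show (4*s)/2 = 2*s by ring]
    exact hanti t
  · intro t
    simp only
    rw [show t + 4*s/2 = t + 2*s by ring, hanti t]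
    ring
end

section
/- Let μ > 0 and α > 0, and let φ_α be the solution of the Duffing equation φ'' + μφ + φ³ = 0 with φ(0) = α, φ'(0) = 0, with conserved energy E = μα²/2 + α⁴/4 and Θ± = √(μ² + 4E) ± μ. Then φ_α is periodic and its minimal positive period T(E) is given by the formula T(E) = 4√2 ∫₀¹ ds / √((Θ₋ s² + Θ₊)(1 − s²)). -/
open Set Filter Topology MeasureTheory intervalIntegral Real

theorem duffing_unique_s14 (μ α : ℝ) (hμ : 0 < μ) (hα : 0 < α)
    (φ ψ χ χd : ℝ → ℝ)
    (hφ1 : ∀ t, HasDerivAt φ (ψ t) t)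
    (hφ2 : ∀ t, HasDerivAt ψ (-(μ * φ t + φ t ^ 3)) t)
    (hφb : ∀ t, |φ t| ≤ α)
    (hχ1 : ∀ t, HasDerivAt χ (χd t) t)
    (hχ2 : ∀ t, HasDerivAt χd (-(μ * χ t + χ t ^ 3)) t)
    (hχb : ∀ t, |χ t| ≤ α)
    (t₁ : ℝ) (h1 : χ t₁ = φ t₁) (h2 : χd t₁ = ψ t₁) :
    ∀ t, χ t = φ t := by
  set K : NNReal := (μ + 3 * α ^ 2 + 1).toNNReal with hK
  have hKcoe : (K : ℝ) = μ + 3 * α ^ 2 + 1 := Real.coe_toNNReal _ (by positivity)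
  set v : ℝ → ℝ × ℝ → ℝ × ℝ := fun _ p => (p.2, -(μ * p.1 + p.1 ^ 3)) with hv_def
  set S : ℝ → Set (ℝ × ℝ) := fun _ => {p : ℝ × ℝ | |p.1| ≤ α} with hS_def
  have hv : ∀ t, LipschitzOnWith K (v t) (S t) := by
    intro t
    apply LipschitzOnWith.of_dist_le_mul
    intro p hp q hq
    have hp1 := abs_le.mp (show |p.1| ≤ α from hp)
    have hq1 := abs_le.mp (show |q.1| ≤ α from hq)
    rw [Prod.dist_eq, Prod.dist_eq]
    simp only [v, Real.dist_eq]
    have key : |(-(μ * p.1 + p.1 ^ 3)) - (-(μ * q.1 + q.1 ^ 3))|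
        ≤ (μ + 3 * α ^ 2) * |p.1 - q.1| := by
      have e : (-(μ * p.1 + p.1 ^ 3)) - (-(μ * q.1 + q.1 ^ 3))
          = -((p.1 - q.1) * (μ + (p.1 ^ 2 + p.1 * q.1 + q.1 ^ 2))) := by ring
      rw [e, abs_neg, abs_mul, mul_comm]
      apply mul_le_mul_of_nonneg_right _ (abs_nonneg _)
      rw [abs_of_nonneg (by nlinarith [sq_nonneg (p.1 + q.1), sq_nonneg (p.1 - q.1)])]
      nlinarith [sq_nonneg (p.1 - q.1), sq_nonneg (p.1 + q.1)]
    have hm1 : |p.1 - q.1| ≤ max |p.1 - q.1| |p.2 - q.2| := le_max_left _ _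
    have hm2 : |p.2 - q.2| ≤ max |p.1 - q.1| |p.2 - q.2| := le_max_right _ _
    have hm0 : (0:ℝ) ≤ max |p.1 - q.1| |p.2 - q.2| := le_trans (abs_nonneg _) hm1
    rw [hKcoe]
    apply max_le
    · nlinarith [abs_nonneg (p.1 - q.1)]
    · calc |(-(μ * p.1 + p.1 ^ 3)) - (-(μ * q.1 + q.1 ^ 3))|
          ≤ (μ + 3 * α ^ 2) * |p.1 - q.1| := key
        _ ≤ (μ + 3 * α ^ 2 + 1) * max |p.1 - q.1| |p.2 - q.2| := by nlinarith
  intro t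
  set a : ℝ := min t t₁ - 1 with ha_def
  set b : ℝ := max t t₁ + 1 with hb_def
  have hta : t ∈ Ioo a b :=
    ⟨by have := min_le_left t t₁; simp only [ha_def]; linarith,
     by have := le_max_left t t₁; simp only [hb_def]; linarith⟩
  have ht₁ : t₁ ∈ Ioo a b :=
    ⟨by have := min_le_right t t₁; simp only [ha_def]; linarith,
     by have := le_max_right t t₁; simp only [hb_def]; linarith⟩
  have := ODE_solution_unique_of_mem_Ioo (fun t _ => hv t) (f := fun t => (χ t, χd t))
    (g := fun t => (φ t, ψ t)) ht₁
    (fun r _ => ⟨(hχ1 r).prodMk (hχ2 r), hχb r⟩)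
    (fun r _ => ⟨(hφ1 r).prodMk (hφ2 r), hφb r⟩)
    (by simp [h1, h2]) hta
  simpa using congrArg Prod.fst this


set_option maxHeartbeats 1000000 in
/-- The solution `φ_α` of the Duffing equation
`φ'' + μφ + φ³ = 0` with `φ(0) = α > 0`, `φ'(0) = 0` is periodic and its
minimal positive period `T(E)` (with `E = μα²/2 + α⁴/4` and
`Θ± = √(μ² + 4E) ± μ`) is given by
`T(E) = 4√2 ∫₀¹ ds / √((Θ₋ s² + Θ₊)(1 − s²))`. -/
theorem duffing_period_formula
    (μ α : ℝ) (hμ : 0 < μ) (hα : 0 < α)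
    (φ : ℝ → ℝ) (hφ : ContDiff ℝ 2 φ)
    (hode : ∀ t : ℝ, deriv (deriv φ) t + μ * φ t + (φ t) ^ 3 = 0)
    (h0 : φ 0 = α) (h0' : deriv φ 0 = 0) :
    ∃ T : ℝ, 0 < T ∧ Function.Periodic φ T ∧
      (∀ T' : ℝ, 0 < T' → Function.Periodic φ T' → T ≤ T') ∧
      T = 4 * Real.sqrt 2 * ∫ s in (0:ℝ)..1,
        1 / Real.sqrt (((Real.sqrt (μ ^ 2 + 4 * (μ * α ^ 2 / 2 + α ^ 4 / 4)) - μ) * s ^ 2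
          + (Real.sqrt (μ ^ 2 + 4 * (μ * α ^ 2 / 2 + α ^ 4 / 4)) + μ)) * (1 - s ^ 2)) := by
  set ψ : ℝ → ℝ := deriv φ with hψdef
  set E : ℝ := μ * α ^ 2 / 2 + α ^ 4 / 4 with hE
  -- basic differentiability
  have hφdiff : Differentiable ℝ φ := hφ.differentiable (by norm_num)
  have hcφ : Continuous φ := hφdiff.continuous
  have hψdiff : Differentiable ℝ ψ := by
    have h2 : ContDiff ℝ (1 + 1 : ℕ) φ := by norm_num [hφ]
    exact ((contDiff_succ_iff_deriv (n := 1)).mp (by exact_mod_cast h2)).2.2.differentiable one_ne_zero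
  have hψcont : Continuous ψ := hψdiff.continuous
  have hφat : ∀ t, HasDerivAt φ (ψ t) t := fun t => (hφdiff t).hasDerivAt
  have hψ'eq : ∀ t, deriv ψ t = -(μ * φ t + φ t ^ 3) := fun t => by
    have := hode t; linarith
  have hψat : ∀ t, HasDerivAt ψ (-(μ * φ t + φ t ^ 3)) t := fun t =>
    hψ'eq t ▸ (hψdiff t).hasDerivAt
  -- energy conservation
  have energy : ∀ t, ψ t ^ 2 / 2 + μ * φ t ^ 2 / 2 + φ t ^ 4 / 4 = E := by
    have hEd : ∀ t, HasDerivAt (fun t => ψ t ^ 2 / 2 + μ * φ t ^ 2 / 2 + φ t ^ 4 / 4) 0 t := by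
      intro t
      have hA := ((hψat t).pow 2).div_const 2
      have hB := (((hφat t).pow 2).const_mul μ).div_const 2
      have hC := ((hφat t).pow 4).div_const 4
      exact ((hA.add hB).add hC).congr_deriv (by ring)
    have hconst := is_const_of_deriv_eq_zero
      (fun t => (hEd t).differentiableAt) (fun t => (hEd t).deriv)
    intro t
    have := hconst t 0
    rw [this]
    simp only [← hψdef, h0, h0', hE]
    norm_num
  have hφle : ∀ t, |φ t| ≤ α := by
    intro t
    have h1 := energy t
    have h2 : φ t ^ 2 ≤ α ^ 2 := by nlinarith [sq_nonneg (ψ t), sq_nonneg (φ t ^ 2 - α ^ 2), sq_nonneg (φ t ^ 2 + α ^ 2), sq_nonneg (φ t)]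
    rw [abs_le]; constructor <;> nlinarith
  have hψ0 : ψ 0 = 0 := h0'
  -- evenness
  have heven : ∀ t, φ (-t) = φ t := by
    intro t
    refine duffing_unique_s14 μ α hμ hα φ ψ (fun t => φ (-t)) (fun t => -ψ (-t))
      hφat hψat hφle ?_ ?_ (fun t => hφle _) 0 (by simp) (by simp [hψ0]) t
    · intro t
      have := (hφat (-t)).comp t (hasDerivAt_neg t)
      exact this.congr_deriv (by ring)
    · intro t
      have := ((hψat (-t)).comp t (hasDerivAt_neg t)).neg
      exact this.congr_deriv (by ring)
  -- generic odd reflection about c/2 given matching data at some point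
  have hreflodd : ∀ c : ℝ, (-φ (c - c/2) = φ (c/2)) → (ψ (c - c/2) = ψ (c/2)) →
      ∀ t, -φ (c - t) = φ t := by
    intro c hc1 hc2 t
    refine duffing_unique_s14 μ α hμ hα φ ψ (fun t => -φ (c - t)) (fun t => ψ (c - t))
      hφat hψat hφle ?_ ?_ (fun t => by simpa using hφle (c - t)) (c/2) hc1 hc2 t
    · intro t
      have := ((hφat (c - t)).comp t ((hasDerivAt_id t).const_sub c)).neg
      exact this.congr_deriv (by ring)
    · intro t
      have := (hψat (c - t)).comp t ((hasDerivAt_id t).const_sub c)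
      exact this.congr_deriv (by ring)
  -- generic even reflection
  have hrefleven : ∀ c : ℝ, (ψ (c/2) = 0) →
      ∀ t, φ (c - t) = φ t := by
    intro c hc2 t
    refine duffing_unique_s14 μ α hμ hα φ ψ (fun t => φ (c - t)) (fun t => -ψ (c - t))
      hφat hψat hφle ?_ ?_ (fun t => hφle _) (c/2)
      (by show φ (c - c/2) = φ (c/2); rw [show c - c/2 = c/2 by ring])
      (by show -ψ (c - c/2) = ψ (c/2); rw [show c - c/2 = c/2 by ring, hc2]; ring) t
    · intro t
      have := (hφat (c - t)).comp t ((hasDerivAt_id t).const_sub c)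
      exact this.congr_deriv (by ring)
    · intro t
      have := ((hψat (c - t)).comp t ((hasDerivAt_id t).const_sub c)).neg
      exact this.congr_deriv (by ring)
  -- existence of a positive zero
  have exzero : ∃ t, 0 < t ∧ φ t = 0 := by
    by_contra hcon
    push_neg at hcon
    have hpos : ∀ t, 0 ≤ t → 0 < φ t := by
      intro t ht
      rcases ht.lt_or_eq with h | h
      · rcases lt_trichotomy (φ t) 0 with h1 | h1 | h1
        · exfalso
          have hmem : (0:ℝ) ∈ uIcc (φ 0) (φ t) :=
            mem_uIcc.mpr (Or.inr ⟨h1.le, by rw [h0]; exact hα.le⟩)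
          obtain ⟨c, hc, hc0⟩ := intermediate_value_uIcc (hcφ.continuousOn) hmem
          rw [uIcc_of_le h.le] at hc
          have hcpos : 0 < c := by
            rcases hc.1.lt_or_eq with h2 | h2
            · exact h2
            · exfalso; rw [← h2, h0] at hc0; linarith
          exact hcon c hcpos hc0
        · exact absurd h1 (hcon t h)
        · exact h1
      · rw [← h, h0]; exact hα
    have hanti : StrictAntiOn ψ (Ici 0) := by
      apply strictAntiOn_of_deriv_neg (convex_Ici 0) hψcont.continuousOn
      intro t ht
      rw [interior_Ici] at ht
      rw [hψ'eq]
      have := hpos t (le_of_lt ht)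
      nlinarith [pow_pos this 3, mul_pos hμ this]
    have hψ1 : ψ 1 < 0 := by
      have := hanti self_mem_Ici (by norm_num : (1:ℝ) ∈ Ici 0) one_pos
      rwa [hψ0] at this
    set τ : ℝ := 1 + (α + 1) / (-ψ 1) with hτdef
    have hτ1 : 1 < τ := by
      have : 0 < (α + 1) / (-ψ 1) := div_pos (by linarith) (by linarith)
      simp only [hτdef]; linarith
    obtain ⟨c, hc, hslope⟩ := exists_deriv_eq_slope φ hτ1 hcφ.continuousOn
      hφdiff.differentiableOn
    have hψc : ψ c < ψ 1 := hanti (by norm_num) (by simp only [mem_Ici]; linarith [hc.1]) hc.1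
    have hφ1le : φ 1 ≤ α := le_trans (le_abs_self _) (hφle 1)
    have hψ1τ : ψ 1 * (τ - 1) = -(α + 1) := by
      simp only [hτdef]
      have hne : -ψ 1 ≠ 0 := by linarith
      rw [add_sub_cancel_left, mul_div_assoc', div_eq_iff hne]; ring
    have h2 : φ τ - φ 1 = ψ c * (τ - 1) := by
      have hd : ψ c = (φ τ - φ 1) / (τ - 1) := hslope
      rw [hd, div_mul_cancel₀ _ (ne_of_gt (sub_pos.mpr hτ1))]
    have hφτ : φ τ < 0 := by
      nlinarith [mul_pos (sub_pos.mpr hψc) (sub_pos.mpr hτ1)]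
    exact absurd hφτ (not_lt.mpr (hpos τ (by linarith)).le)
  -- first zero
  obtain ⟨z, hz0, hzφ⟩ := exzero
  set Z : Set ℝ := Ici 0 ∩ φ ⁻¹' {0} with hZdef
  have hZc : IsClosed Z := isClosed_Ici.inter (isClosed_singleton.preimage hcφ)
  have hZne : Z.Nonempty := ⟨z, hz0.le, hzφ⟩
  have hZbd : BddBelow Z := ⟨0, fun x hx => hx.1⟩
  set t₀ : ℝ := sInf Z with ht₀def
  have ht₀Z : t₀ ∈ Z := hZc.csInf_mem hZne hZbd
  have ht₀0 : φ t₀ = 0 := ht₀Z.2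
  have ht₀pos : 0 < t₀ := by
    rcases (show (0:ℝ) ≤ t₀ from ht₀Z.1).lt_or_eq with h | h
    · exact h
    · exfalso; rw [← h] at ht₀0; rw [h0] at ht₀0; linarith
  have hmin : ∀ t, 0 ≤ t → t < t₀ → φ t ≠ 0 := fun t h1 h2 h3 =>
    absurd (csInf_le hZbd ⟨h1, h3⟩) (not_le.mpr h2)
  -- φ > 0 on [0, t₀)
  have hposlt : ∀ t, 0 ≤ t → t < t₀ → 0 < φ t := by
    intro t h1 h2
    rcases lt_trichotomy (φ t) 0 with h3 | h3 | h3
    · exfalso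
      have hmem : (0:ℝ) ∈ uIcc (φ 0) (φ t) :=
        mem_uIcc.mpr (Or.inr ⟨h3.le, by rw [h0]; exact hα.le⟩)
      obtain ⟨c, hc, hc0⟩ := intermediate_value_uIcc (hcφ.continuousOn) hmem
      rw [uIcc_of_le h1] at hc
      exact hmin c hc.1 (lt_of_le_of_lt hc.2 h2) hc0
    · exact absurd h3 (hmin t h1 h2)
    · exact h3
  -- φ < α on (0, t₀)
  have hltα : ∀ t, 0 < t → t < t₀ → φ t < α := by
    intro t₁ h1 h2
    rcases (le_trans (le_abs_self _) (hφle t₁)).lt_or_eq with h | hq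
    · exact h
    · exfalso
      have hψt₁ : ψ t₁ = 0 := by
        have h3 := energy t₁
        rw [hq] at h3
        have h4 : ψ t₁ ^ 2 = 0 := by simp only [hE] at h3; nlinarith
        exact pow_eq_zero_iff (by norm_num) |>.mp h4
      have hsym := hrefleven (2 * t₁) (by rw [show 2*t₁/2 = t₁ by ring]; exact hψt₁)
      have hper2 : ∀ t, φ (t + 2 * t₁) = φ t := by
        intro t
        have e1 := hsym (t + 2*t₁)
        rw [show 2*t₁ - (t + 2*t₁) = -t by ring, heven t] at e1
        exact e1.symm
      have hr0 : φ (t₀ - 2 * t₁) = 0 := by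
        have h5 := hper2 (t₀ - 2*t₁)
        rw [show t₀ - 2*t₁ + 2*t₁ = t₀ by ring] at h5
        rw [← h5]; exact ht₀0
      rcases le_or_gt 0 (t₀ - 2*t₁) with h4 | h4
      · exact hmin _ h4 (by linarith) hr0
      · have h5 : φ (2*t₁ - t₀) = 0 := by
          rw [show 2*t₁ - t₀ = -(t₀ - 2*t₁) by ring, heven, hr0]
        exact hmin _ (by linarith) (by linarith) h5
  -- ψ < 0 on (0, t₀)
  have hψneg : ∀ t, 0 < t → t < t₀ → ψ t < 0 := by
    have hψne : ∀ t, 0 < t → t < t₀ → ψ t ≠ 0 := by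
      intro t h1 h2 h3
      have h4 := energy t
      have h5 := hposlt t h1.le h2
      have h6 := hltα t h1 h2
      rw [h3] at h4
      simp only [hE] at h4
      norm_num at h4
      have e1 : φ t ^ 2 < α ^ 2 := by nlinarith
      have e2 : φ t ^ 4 < α ^ 4 := by nlinarith [sq_nonneg (φ t), sq_nonneg α]
      nlinarith [mul_pos hμ (sub_pos.mpr e1)]
    set w : ℝ → ℝ := fun t => -(μ * φ t + φ t ^ 3) with hwdef
    have hwcont : Continuous w := ((continuous_const.mul hcφ).add (hcφ.pow 3)).neg
    have hw0 : w 0 < 0 := by simp only [hwdef, h0]; nlinarith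
    obtain ⟨δ, hδpos, hball⟩ := Metric.isOpen_iff.mp (isOpen_Iio.preimage hwcont) 0 hw0
    set c : ℝ := min (δ/2) (t₀/2) with hcdef
    have hcpos : 0 < c := lt_min (by linarith) (by linarith)
    have hclt : c < t₀ := lt_of_le_of_lt (min_le_right _ _) (by linarith)
    have hanti2 : StrictAntiOn ψ (Icc 0 c) := by
      apply strictAntiOn_of_deriv_neg (convex_Icc _ _) hψcont.continuousOn
      intro x hx
      rw [interior_Icc] at hx
      rw [hψ'eq]
      have hxball : x ∈ Metric.ball (0:ℝ) δ := by
        rw [Metric.mem_ball, Real.dist_eq, sub_zero, abs_of_pos hx.1]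
        have : x < c := hx.2
        have : c ≤ δ/2 := min_le_left _ _
        linarith
      exact hball hxball
    have hψc : ψ c < 0 := by
      have := hanti2 (left_mem_Icc.mpr hcpos.le) (right_mem_Icc.mpr hcpos.le) hcpos
      rwa [hψ0] at this
    intro t h1 h2
    rcases lt_trichotomy (ψ t) 0 with h3 | h3 | h3
    · exact h3
    · exact absurd h3 (hψne t h1 h2)
    · exfalso
      have hmem : (0:ℝ) ∈ uIcc (ψ c) (ψ t) := mem_uIcc.mpr (Or.inl ⟨hψc.le, h3.le⟩)
      obtain ⟨r, hr, hr0⟩ := intermediate_value_uIcc (hψcont.continuousOn) hmem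
      have hr1 : 0 < r := by
        have : min c t ≤ r := hr.1
        have := lt_min hcpos h1
        linarith [(show min c t ≤ r from hr.1)]
      have hr2 : r < t₀ := by
        have : r ≤ max c t := hr.2
        have := max_lt hclt h2
        linarith
      exact hψne r hr1 hr2 hr0
  -- φ strictly decreasing on [0, t₀]
  have hφanti : StrictAntiOn φ (Icc 0 t₀) := by
    apply strictAntiOn_of_deriv_neg (convex_Icc _ _) hcφ.continuousOn
    intro t ht
    rw [interior_Icc] at ht
    exact hψneg t ht.1 ht.2
  -- odd symmetry about t₀
  have hodd : ∀ t, -φ (2 * t₀ - t) = φ t := by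
    apply hreflodd (2 * t₀)
    · show -φ (2 * t₀ - 2 * t₀ / 2) = φ (2 * t₀ / 2)
      rw [show 2 * t₀ - 2 * t₀ / 2 = t₀ by ring, show 2 * t₀ / 2 = t₀ by ring, ht₀0]; ring
    · show ψ (2 * t₀ - 2 * t₀ / 2) = ψ (2 * t₀ / 2)
      rw [show 2 * t₀ - 2 * t₀ / 2 = t₀ by ring, show 2 * t₀ / 2 = t₀ by ring]
  -- periodicity
  have hper : Function.Periodic φ (4 * t₀) := by
    intro t
    have e1 := hodd (t + 4 * t₀)
    rw [show 2 * t₀ - (t + 4 * t₀) = -(2 * t₀ + t) by ring, heven (2 * t₀ + t)] at e1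
    have e3 := hodd (2 * t₀ + t)
    rw [show 2 * t₀ - (2 * t₀ + t) = -t by ring, heven t] at e3
    linarith
  -- minimality
  have hminper : ∀ T', 0 < T' → Function.Periodic φ T' → 4 * t₀ ≤ T' := by
    intro T' hT' hp
    by_contra hlt
    push_neg at hlt
    have hTα : φ T' = α := by have := hp 0; rwa [zero_add, h0] at this
    rcases le_or_gt T' t₀ with h1 | h1
    · have := hφanti (left_mem_Icc.mpr ht₀pos.le) ⟨hT'.le, h1⟩ hT'
      rw [h0, hTα] at this; exact lt_irrefl _ this
    rcases le_or_gt T' (3*t₀) with h2 | h2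
    · have e1 := hodd T'
      have hle : 0 ≤ φ (2*t₀ - T') := by
        rcases le_or_gt 0 (2*t₀ - T') with h3 | h3
        · exact (hposlt _ h3 (by linarith)).le
        · rw [show 2*t₀ - T' = -(T' - 2*t₀) by ring, heven]
          rcases (show T' - 2*t₀ ≤ t₀ by linarith).lt_or_eq with h4 | h4
          · exact (hposlt _ (by linarith) h4).le
          · rw [h4, ht₀0]
      rw [← e1] at hTα
      linarith
    · have e1 : φ T' = φ (4*t₀ - T') := by
        rw [show 4*t₀ - T' = -(T' - 4*t₀) by ring, heven]
        have h3 := hper (T' - 4*t₀)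
        rw [show T' - 4*t₀ + 4*t₀ = T' by ring] at h3
        exact h3
      have h4 := hφanti (left_mem_Icc.mpr ht₀pos.le)
        (⟨by linarith, by linarith⟩ : 4*t₀ - T' ∈ Icc 0 t₀) (by linarith : (0:ℝ) < 4*t₀ - T')
      rw [h0, ← e1, hTα] at h4
      exact lt_irrefl _ h4
  -- the integral identity: t₀ = ∫₀¹ g
  set Q : ℝ → ℝ := fun s => (α ^ 2 * s ^ 2 + (α ^ 2 + 2 * μ)) * (1 - s ^ 2) with hQdef
  set g : ℝ → ℝ := fun s => Real.sqrt 2 / Real.sqrt (Q s) with hgdef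
  have hQcont : Continuous Q := by
    apply Continuous.mul
    · exact (continuous_const.mul (continuous_pow 2)).add continuous_const
    · exact continuous_const.sub (continuous_pow 2)
  have hQpos : ∀ s : ℝ, 0 ≤ s → s < 1 → 0 < Q s := by
    intro s h1 h2
    simp only [hQdef]
    have f1 : 0 < α ^ 2 * s ^ 2 + (α ^ 2 + 2 * μ) := by positivity
    have f2 : 0 < 1 - s ^ 2 := by nlinarith
    exact mul_pos f1 f2
  have hgmeas : Measurable g := by
    exact measurable_const.div (hQcont.sqrt.measurable)
  have hInt : IntervalIntegrable g MeasureTheory.volume 0 1 := by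
    have h1 : IntervalIntegrable (fun x : ℝ => x ^ (-(1/2) : ℝ)) MeasureTheory.volume 0 1 :=
      intervalIntegral.intervalIntegrable_rpow' (by norm_num)
    have h2 := h1.comp_sub_left 1
    simp only [sub_self, sub_zero] at h2
    have hmaj := h2.symm.const_mul (Real.sqrt 2 / Real.sqrt (α^2 + 2*μ))
    rw [intervalIntegrable_iff, uIoc_of_le (by norm_num : (0:ℝ) ≤ 1)]
    rw [intervalIntegrable_iff, uIoc_of_le (by norm_num : (0:ℝ) ≤ 1)] at hmaj
    apply MeasureTheory.Integrable.mono' hmaj hgmeas.aestronglyMeasurable.restrict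
    rw [MeasureTheory.ae_restrict_iff' measurableSet_Ioc]
    apply MeasureTheory.ae_of_all
    intro s hs
    obtain ⟨hs0, hs1⟩ := hs
    rcases hs1.lt_or_eq with h1' | h1'
    · have hQp := hQpos s hs0.le h1'
      rw [Real.norm_eq_abs, abs_of_nonneg (by simp only [hgdef]; positivity)]
      have hb1 : (α^2 + 2*μ) * (1 - s) ≤ Q s := by
        simp only [hQdef]
        nlinarith [mul_nonneg (sub_nonneg.mpr h1'.le)
            (mul_nonneg (mul_nonneg (sq_nonneg α) (sq_nonneg s)) (by linarith : (0:ℝ) ≤ 1 + s)),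
          mul_nonneg (sub_nonneg.mpr h1'.le)
            (mul_nonneg (by positivity : (0:ℝ) ≤ α^2 + 2*μ) hs0.le)]
      have hb2 : Real.sqrt ((α^2+2*μ) * (1-s)) ≤ Real.sqrt (Q s) := Real.sqrt_le_sqrt hb1
      rw [Real.sqrt_mul (by positivity)] at hb2
      have hrpow : (1 - s) ^ (-(1/2):ℝ) = (Real.sqrt (1 - s))⁻¹ := by
        rw [Real.sqrt_eq_rpow, ← Real.rpow_neg (by linarith)]
      have hprodpos : 0 < Real.sqrt (α^2+2*μ) * Real.sqrt (1-s) := by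
        apply mul_pos (Real.sqrt_pos.mpr (by positivity)) (Real.sqrt_pos.mpr (by linarith))
      have heq : Real.sqrt 2 / Real.sqrt (α^2+2*μ) * (1-s) ^ (-(1/2):ℝ)
          = Real.sqrt 2 / (Real.sqrt (α^2+2*μ) * Real.sqrt (1-s)) := by
        rw [hrpow]; ring
      rw [heq]
      simp only [hgdef]
      exact div_le_div_of_nonneg_left (by positivity) hprodpos hb2
    · subst h1'
      have hQ1 : Q 1 = 0 := by simp only [hQdef]; ring
      simp only [hgdef, hQ1, Real.sqrt_zero, div_zero, norm_zero, sub_self]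
      rw [Real.zero_rpow (by norm_num)]
      simp
  set H : ℝ → ℝ := fun u => ∫ s in (0:ℝ)..u, g s with hHdef
  have hHcont : ContinuousOn H (Icc 0 1) := by
    have h1 : IntegrableOn g (uIcc 0 1) MeasureTheory.volume := by
      rw [uIcc_of_le (by norm_num : (0:ℝ) ≤ 1)]
      rw [integrableOn_Icc_iff_integrableOn_Ioc]
      have := hInt
      rw [intervalIntegrable_iff, uIoc_of_le (by norm_num : (0:ℝ) ≤ 1)] at this
      exact this
    have := intervalIntegral.continuousOn_primitive_interval h1
    rwa [uIcc_of_le (by norm_num : (0:ℝ) ≤ 1)] at this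
  have hHder : ∀ u, 0 < u → u < 1 → HasDerivAt H (g u) u := by
    intro u h1 h2
    apply intervalIntegral.integral_hasDerivAt_right
      (hInt.mono_set (uIcc_subset_uIcc left_mem_uIcc
        (by rw [uIcc_of_le (by norm_num : (0:ℝ) ≤ 1)]; exact ⟨h1.le, h2.le⟩)))
    · exact (hgmeas.stronglyMeasurable).stronglyMeasurableAtFilter
    · apply ContinuousAt.div continuousAt_const (hQcont.sqrt.continuousAt)
      exact ne_of_gt (Real.sqrt_pos.mpr (hQpos u h1.le h2))
  set B : ℝ → ℝ := fun t => H (φ t / α) with hBdef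
  have hkey : ∀ t, 0 < t → t < t₀ → HasDerivAt B (-1) t := by
    intro t h1 h2
    have hφt0 : 0 < φ t := hposlt t h1.le h2
    have hφtα : φ t < α := hltα t h1 h2
    have hu1 : 0 < φ t / α := div_pos hφt0 hα
    have hu2 : φ t / α < 1 := (div_lt_one hα).mpr hφtα
    have hQu := hQpos _ hu1.le hu2
    have hchain := (hHder _ hu1 hu2).comp t ((hφat t).div_const α)
    have hgoal : g (φ t / α) * (ψ t / α) = -1 := by
      have hW : ψ t ^ 2 = α^2/2 * Q (φ t / α) := by
        have h3 := energy t
        simp only [hQdef, hE] at h3 ⊢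
        have hαne : α ≠ 0 := ne_of_gt hα
        field_simp
        nlinarith [h3]
      have h4 : Real.sqrt (ψ t ^ 2) = -ψ t := by
        rw [Real.sqrt_sq_eq_abs, abs_of_nonpos (hψneg t h1 h2).le]
      have hψt : ψ t = -Real.sqrt (α^2/2 * Q (φ t / α)) := by
        rw [← hW, h4]; ring
      have hsqhalf : Real.sqrt (α^2/2 * Q (φ t / α))
          = α / Real.sqrt 2 * Real.sqrt (Q (φ t / α)) := by
        rw [Real.sqrt_mul (by positivity)]
        congr 1
        rw [show α^2/2 = (α / Real.sqrt 2)^2 by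
          rw [div_pow, Real.sq_sqrt (by norm_num : (0:ℝ) ≤ 2)]]
        exact Real.sqrt_sq (by positivity)
      rw [hψt, hsqhalf]
      have hs2 : Real.sqrt 2 ≠ 0 := by positivity
      have hsQ : Real.sqrt (Q (φ t / α)) ≠ 0 := ne_of_gt (Real.sqrt_pos.mpr hQu)
      have hαne : α ≠ 0 := ne_of_gt hα
      simp only [hgdef]
      field_simp
    rw [← hgoal]
    exact hchain
  have ht₀eq : t₀ = ∫ s in (0:ℝ)..1, g s := by
    set Φ : ℝ → ℝ := fun t => t₀ - t - B t with hΦdef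
    have hBcont : ContinuousOn B (Icc 0 t₀) := by
      apply hHcont.comp (hcφ.continuousOn.div_const α)
      intro t ht
      constructor
      · apply div_nonneg _ hα.le
        rcases ht.2.lt_or_eq with h | h
        · exact (hposlt t ht.1 h).le
        · rw [h, ht₀0]
      · rw [div_le_one hα]
        exact le_trans (le_abs_self _) (hφle t)
    have hΦcont : ContinuousOn Φ (Icc 0 t₀) :=
      (continuousOn_const.sub continuousOn_id).sub hBcont
    have hΦz : ∀ ε, 0 < ε → ε ≤ t₀ → Φ ε = 0 := by
      intro ε hε1 hε2
      have hderiv : ∀ x ∈ Ico ε t₀, HasDerivWithinAt Φ 0 (Ici x) x := by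
        intro x hx
        have hkx := hkey x (lt_of_lt_of_le hε1 hx.1) hx.2
        have hder : HasDerivAt Φ 0 x := by
          have := ((hasDerivAt_const x t₀).sub (hasDerivAt_id x)).sub hkx
          exact this.congr_deriv (by ring)
        exact hder.hasDerivWithinAt
      have hconst := constant_of_has_deriv_right_zero
        (hΦcont.mono (Icc_subset_Icc (by linarith) le_rfl)) hderiv
      have h1 := hconst t₀ (right_mem_Icc.mpr hε2)
      have h2 : Φ t₀ = 0 := by
        simp only [hΦdef, hBdef, ht₀0, zero_div, hHdef, intervalIntegral.integral_same]
        ring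
      rw [h2] at h1; exact h1.symm
    have hΦ0 : Φ 0 = 0 := by
      have hcw : ContinuousWithinAt Φ (Icc 0 t₀) 0 := hΦcont 0 (left_mem_Icc.mpr ht₀pos.le)
      have h2 : Tendsto Φ (𝓝[Ioc 0 t₀] 0) (𝓝 (Φ 0)) :=
        hcw.tendsto.mono_left (nhdsWithin_mono _ Ioc_subset_Icc_self)
      have h3 : Tendsto Φ (𝓝[Ioc 0 t₀] 0) (𝓝 0) := by
        apply Tendsto.congr' _ tendsto_const_nhds
        filter_upwards [self_mem_nhdsWithin] with x hx
        exact (hΦz x hx.1 hx.2).symm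
      have hne : (𝓝[Ioc 0 t₀] 0).NeBot := by
        apply mem_closure_iff_nhdsWithin_neBot.mp
        rw [closure_Ioc (ne_of_lt ht₀pos)]
        exact left_mem_Icc.mpr ht₀pos.le
      exact tendsto_nhds_unique h2 h3
    have h5 : t₀ - 0 - B 0 = 0 := hΦ0
    have hB0 : B 0 = H 1 := by
      simp only [hBdef, h0]
      rw [div_self (ne_of_gt hα)]
    rw [hB0] at h5
    simp only [hHdef] at h5
    linarith
  -- final assembly
  refine ⟨4 * t₀, by linarith, hper, hminper, ?_⟩
  have hsq : Real.sqrt (μ ^ 2 + 4 * E) = μ + α ^ 2 := by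
    rw [show μ ^ 2 + 4 * E = (μ + α ^ 2) ^ 2 by rw [hE]; ring]
    exact Real.sqrt_sq (by positivity)
  rw [hsq, ht₀eq]
  have hfinal : (∫ s in (0:ℝ)..1, g s)
      = Real.sqrt 2 * ∫ s in (0:ℝ)..1,
        1 / Real.sqrt (((μ + α ^ 2 - μ) * s ^ 2 + (μ + α ^ 2 + μ)) * (1 - s ^ 2)) := by
    rw [← intervalIntegral.integral_const_mul]
    apply intervalIntegral.integral_congr
    intro s _
    have hQeq : ((μ + α ^ 2 - μ) * s ^ 2 + (μ + α ^ 2 + μ)) * (1 - s ^ 2) = Q s := by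
      simp only [hQdef]; ring
    show g s = Real.sqrt 2 * (1 / Real.sqrt (((μ + α ^ 2 - μ) * s ^ 2 + (μ + α ^ 2 + μ)) * (1 - s ^ 2)))
    rw [mul_one_div, hQeq]
  rw [hfinal]
  ring
end

section
/- Let μ > 0 and for E > 0 let T(E) = 4√2 ∫₀¹ ds / √((Θ₋(E) s² + Θ₊(E))(1 − s²)) with Θ±(E) = √(μ² + 4E) ± μ, the minimal period of the Duffing solution with energy E. Then, as E → 0⁺, T(E) = (2π/√μ)(1 − 3E/(4μ²)) + o(E) and consequently (2π/T(E))² = μ(1 + 3E/(2μ²)) + o(E); i.e. lim_{E→0⁺} [(2π/T(E))² − μ]/E = 3/(2μ). -/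
open Filter Real Set intervalIntegral MeasureTheory


lemma duffA_int_base : IntervalIntegrable (fun x : ℝ => (1 - x) ^ (-(1/2) : ℝ)) MeasureTheory.volume 0 1 := by
  have h := ((intervalIntegrable_rpow' (a := 0) (b := 1) (r := -(1/2)) (by norm_num)).comp_sub_left 1).symm
  simpa using h

lemma duffA_bound {x : ℝ} (hx : x ∈ Set.Ioc (0:ℝ) 1) {p q : ℝ} (hp : 0 < p) (hq : 0 ≤ q) :
    1 / Real.sqrt ((q * x ^ 2 + p) * (1 - x ^ 2)) ≤ (1 / Real.sqrt p) * (1 - x) ^ (-(1/2) : ℝ) := by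
  have h1x : 0 ≤ 1 - x := by linarith [hx.2]
  rw [Real.rpow_neg h1x, ← Real.sqrt_eq_rpow]
  have hps : 0 < Real.sqrt p := Real.sqrt_pos.2 hp
  rcases eq_or_lt_of_le h1x with h | h
  · have hx1 : x = 1 := by linarith
    simp [hx1]
  · have key : p * (1 - x) ≤ (q * x ^ 2 + p) * (1 - x ^ 2) := by
      nlinarith [mul_nonneg (mul_nonneg hq (sq_nonneg x)) (by nlinarith [hx.2, hx.1] : (0:ℝ) ≤ 1 - x^2),
        mul_nonneg (mul_nonneg hp.le h1x) hx.1.le]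
    have hs : Real.sqrt (p * (1 - x)) ≤ Real.sqrt ((q * x ^ 2 + p) * (1 - x ^ 2)) := Real.sqrt_le_sqrt key
    rw [Real.sqrt_mul hp.le] at hs
    have h2 : 0 < Real.sqrt p * Real.sqrt (1 - x) := mul_pos hps (Real.sqrt_pos.2 h)
    calc 1 / Real.sqrt ((q * x ^ 2 + p) * (1 - x ^ 2)) ≤ 1 / (Real.sqrt p * Real.sqrt (1 - x)) := by
          apply one_div_le_one_div_of_le h2 hs
      _ = (1 / Real.sqrt p) * (Real.sqrt (1 - x))⁻¹ := by field_simp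
  
lemma duff_integrable {p q : ℝ} (hp : 0 < p) (hq : 0 ≤ q) :
    IntervalIntegrable (fun s : ℝ => 1 / Real.sqrt ((q * s ^ 2 + p) * (1 - s ^ 2)))
      MeasureTheory.volume 0 1 := by
  apply IntervalIntegrable.mono_fun' (duffA_int_base.const_mul (1 / Real.sqrt p))
  · exact (measurable_const.div ((Real.continuous_sqrt.comp (by fun_prop)).measurable)).aestronglyMeasurable
  · rw [uIoc_of_le (by norm_num : (0:ℝ) ≤ 1)]
    filter_upwards [MeasureTheory.self_mem_ae_restrict measurableSet_Ioc] with x hx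
    have h0 : 0 ≤ 1 / Real.sqrt ((q * x ^ 2 + p) * (1 - x ^ 2)) := by positivity
    rw [Real.norm_eq_abs, abs_of_nonneg h0]
    exact duffA_bound hx hp hq

lemma duff_int_g1 : IntervalIntegrable (fun s : ℝ => 1 / Real.sqrt (1 - s ^ 2))
    MeasureTheory.volume 0 1 := by
  have := duff_integrable (p := 1) (q := 0) one_pos le_rfl
  simpa using this

lemma duff_int_g2 : IntervalIntegrable (fun s : ℝ => s ^ 2 / Real.sqrt (1 - s ^ 2))
    MeasureTheory.volume 0 1 := by
  apply IntervalIntegrable.mono_fun' duff_int_g1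
  · exact ((continuous_pow 2).measurable.div ((Real.continuous_sqrt.comp (by fun_prop)).measurable)).aestronglyMeasurable
  · rw [uIoc_of_le (by norm_num : (0:ℝ) ≤ 1)]
    filter_upwards [MeasureTheory.self_mem_ae_restrict measurableSet_Ioc] with x hx
    have h0 : 0 ≤ x ^ 2 / Real.sqrt (1 - x ^ 2) := by positivity
    rw [Real.norm_eq_abs, abs_of_nonneg h0]
    rcases eq_or_lt_of_le (by linarith [hx.2] : x ≤ 1) with h | h
    · simp [h]
    · have hw : 0 < Real.sqrt (1 - x ^ 2) := Real.sqrt_pos.2 (by nlinarith [hx.1])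
      rw [div_le_div_iff₀ hw hw]
      nlinarith [hx.1, hx.2, hw, mul_nonneg (by nlinarith [hx.1, hx.2] : (0:ℝ) ≤ 1 - x^2) hw.le]




lemma duff_J0 : ∫ s in (0:ℝ)..1, 1 / Real.sqrt (1 - s ^ 2) = Real.pi / 2 := by
  have h := intervalIntegral.integral_eq_sub_of_hasDeriv_right_of_le (f := Real.arcsin)
    (f' := fun s : ℝ => 1 / Real.sqrt (1 - s ^ 2)) (by norm_num)
    (Real.continuous_arcsin.continuousOn)
    (fun x hx => (Real.hasDerivAt_arcsin (by intro h; rw [h] at hx; exact absurd hx.1 (by norm_num))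
      (ne_of_lt hx.2)).hasDerivWithinAt) duff_int_g1
  rw [h, Real.arcsin_one, Real.arcsin_zero, sub_zero]

lemma duff_J2 : ∫ s in (0:ℝ)..1, s ^ 2 / Real.sqrt (1 - s ^ 2) = Real.pi / 4 := by
  set F : ℝ → ℝ := fun s => (Real.arcsin s - s * Real.sqrt (1 - s ^ 2)) / 2 with hF
  have hcont : ContinuousOn F (Set.Icc 0 1) := by
    apply ContinuousOn.div_const
    exact (Real.continuous_arcsin.continuousOn.sub
      (continuousOn_id.mul ((continuous_const.sub (continuous_pow 2)).continuousOn.sqrt)))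
  have hderiv : ∀ x ∈ Set.Ioo (0:ℝ) 1, HasDerivWithinAt F (x ^ 2 / Real.sqrt (1 - x ^ 2)) (Set.Ioi x) x := by
    intro x hx
    have hx2 : (0:ℝ) < 1 - x ^ 2 := by nlinarith [hx.1, hx.2]
    have hw : 0 < Real.sqrt (1 - x ^ 2) := Real.sqrt_pos.2 hx2
    have h1 : HasDerivAt (fun s : ℝ => 1 - s ^ 2) (-(2 * x)) x := by
      simpa using ((hasDerivAt_pow 2 x).const_sub 1)
    have h2 : HasDerivAt (fun s : ℝ => Real.sqrt (1 - s ^ 2)) (-(2 * x) / (2 * Real.sqrt (1 - x ^ 2))) x :=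
      h1.sqrt (ne_of_gt hx2)
    have h3 : HasDerivAt (fun s : ℝ => s * Real.sqrt (1 - s ^ 2))
        (1 * Real.sqrt (1 - x ^ 2) + x * (-(2 * x) / (2 * Real.sqrt (1 - x ^ 2)))) x :=
      (hasDerivAt_id x).mul h2
    have h4 : HasDerivAt Real.arcsin (1 / Real.sqrt (1 - x ^ 2)) x :=
      Real.hasDerivAt_arcsin (by intro h; rw [h] at hx; exact absurd hx.1 (by norm_num)) (ne_of_lt hx.2)
    have h5 := ((h4.sub h3).div_const 2)
    have heq : (1 / Real.sqrt (1 - x ^ 2) -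
        (1 * Real.sqrt (1 - x ^ 2) + x * (-(2 * x) / (2 * Real.sqrt (1 - x ^ 2))))) / 2
        = x ^ 2 / Real.sqrt (1 - x ^ 2) := by
      have hsq : Real.sqrt (1 - x ^ 2) ^ 2 = 1 - x ^ 2 := Real.sq_sqrt hx2.le
      field_simp
      nlinarith [hsq]
    rw [heq] at h5
    exact h5.hasDerivWithinAt
  have h := intervalIntegral.integral_eq_sub_of_hasDeriv_right_of_le (f := F)
    (f' := fun s : ℝ => s ^ 2 / Real.sqrt (1 - s ^ 2)) (by norm_num) hcont hderiv duff_int_g2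
  rw [h, hF]
  simp [Real.arcsin_one, Real.arcsin_zero]
  ring


lemma duff_key_low {t : ℝ} (ht : 0 ≤ t) : 1 - t / 2 ≤ 1 / Real.sqrt (1 + t) := by
  have h1 : (0:ℝ) < 1 + t := by linarith
  have hw : 0 < Real.sqrt (1 + t) := Real.sqrt_pos.2 h1
  have hsq : Real.sqrt (1 + t) ^ 2 = 1 + t := Real.sq_sqrt h1.le
  rw [le_div_iff₀ hw]
  rcases le_or_gt t 2 with h | h
  · nlinarith [hw, hsq, sq_nonneg (Real.sqrt (1 + t) - 1), sq_nonneg ((1 - t/2) * Real.sqrt (1+t) - 1),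
      mul_nonneg (by linarith : (0:ℝ) ≤ 1 - t/2) hw.le]
  · nlinarith [hw, mul_pos hw (by linarith : (0:ℝ) < t/2 - 1)]

lemma duff_key_high {t : ℝ} (ht : 0 ≤ t) : 1 / Real.sqrt (1 + t) ≤ 1 - t / 2 + 3 / 8 * t ^ 2 := by
  have h1 : (0:ℝ) < 1 + t := by linarith
  have hw : 0 < Real.sqrt (1 + t) := Real.sqrt_pos.2 h1
  have hsq : Real.sqrt (1 + t) ^ 2 = 1 + t := Real.sq_sqrt h1.le
  have hq : (0:ℝ) < 1 - t / 2 + 3 / 8 * t ^ 2 := by nlinarith [sq_nonneg (t - 2/3)]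
  rw [div_le_iff₀ hw]
  have hqw : 0 < (1 - t / 2 + 3 / 8 * t ^ 2) * Real.sqrt (1 + t) := mul_pos hq hw
  have h2 : 1 ≤ ((1 - t / 2 + 3 / 8 * t ^ 2) * Real.sqrt (1 + t)) ^ 2 := by
    have expand : ((1 - t / 2 + 3 / 8 * t ^ 2) * Real.sqrt (1 + t)) ^ 2
        = (1 - t / 2 + 3 / 8 * t ^ 2) ^ 2 * (1 + t) := by
      rw [mul_pow, hsq]
    rw [expand]
    nlinarith [mul_nonneg (mul_nonneg (mul_nonneg ht ht) ht) (sq_nonneg (t - 5/6)),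
      mul_nonneg (mul_nonneg ht ht) ht]
  nlinarith [h2, hqw]









lemma duff_I_bounds (μ δ : ℝ) (hμ : 0 < μ) (hδ : 0 ≤ δ) :
    (1 / Real.sqrt (2*μ)) * ((1 - δ/(4*μ)) * (Real.pi/2) - δ/(4*μ) * (Real.pi/4)) ≤
      (∫ s in (0:ℝ)..1, 1 / Real.sqrt ((δ * s ^ 2 + (2*μ + δ)) * (1 - s ^ 2))) ∧
    (∫ s in (0:ℝ)..1, 1 / Real.sqrt ((δ * s ^ 2 + (2*μ + δ)) * (1 - s ^ 2))) ≤
      (1 / Real.sqrt (2*μ)) * ((1 - δ/(4*μ)) * (Real.pi/2) - δ/(4*μ) * (Real.pi/4)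
        + 3/8 * (δ/μ)^2 * (Real.pi/2)) := by
  set c : ℝ := 1 / Real.sqrt (2*μ) with hc
  have hcpos : 0 < c := by rw [hc]; positivity
  set a : ℝ := c * (1 - δ/(4*μ)) with ha
  set b : ℝ := -(c * δ/(4*μ)) with hb
  set r : ℝ := c * (3/8) * (δ/μ)^2 with hr
  have hr0 : 0 ≤ r := by rw [hr]; positivity
  -- integrability
  have hint_f : IntervalIntegrable (fun s : ℝ => 1 / Real.sqrt ((δ * s ^ 2 + (2*μ + δ)) * (1 - s ^ 2)))
      MeasureTheory.volume 0 1 := duff_integrable (by linarith) hδ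
  have hint_l : IntervalIntegrable (fun s : ℝ => a * (1 / Real.sqrt (1 - s ^ 2)) + b * (s ^ 2 / Real.sqrt (1 - s ^ 2)))
      MeasureTheory.volume 0 1 := (duff_int_g1.const_mul a).add (duff_int_g2.const_mul b)
  have hint_u : IntervalIntegrable (fun s : ℝ => a * (1 / Real.sqrt (1 - s ^ 2)) + b * (s ^ 2 / Real.sqrt (1 - s ^ 2))
      + r * (1 / Real.sqrt (1 - s ^ 2))) MeasureTheory.volume 0 1 := hint_l.add (duff_int_g1.const_mul r)
  -- pointwise bounds
  have key : ∀ s ∈ Set.Icc (0:ℝ) 1,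
      (a * (1 / Real.sqrt (1 - s ^ 2)) + b * (s ^ 2 / Real.sqrt (1 - s ^ 2))
        ≤ 1 / Real.sqrt ((δ * s ^ 2 + (2*μ + δ)) * (1 - s ^ 2))) ∧
      (1 / Real.sqrt ((δ * s ^ 2 + (2*μ + δ)) * (1 - s ^ 2))
        ≤ a * (1 / Real.sqrt (1 - s ^ 2)) + b * (s ^ 2 / Real.sqrt (1 - s ^ 2))
          + r * (1 / Real.sqrt (1 - s ^ 2))) := by
    intro s hs
    have hs2 : (0:ℝ) ≤ 1 - s ^ 2 := by nlinarith [hs.1, hs.2]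
    set t : ℝ := δ * (1 + s^2) / (2*μ) with htdef
    have ht : 0 ≤ t := by rw [htdef]; positivity
    have htle : t ≤ δ/μ := by
      rw [htdef, div_le_div_iff₀ (by linarith) hμ]
      nlinarith [mul_nonneg (mul_nonneg hδ hμ.le) hs2]
    have hA : δ * s ^ 2 + (2*μ + δ) = 2*μ * (1 + t) := by
      rw [htdef]; field_simp; ring
    have hsplit : 1 / Real.sqrt ((δ * s ^ 2 + (2*μ + δ)) * (1 - s ^ 2))
        = (c * (1 / Real.sqrt (1 + t))) * (1 / Real.sqrt (1 - s ^ 2)) := by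
      rw [hA, Real.sqrt_mul (by positivity : (0:ℝ) ≤ 2*μ*(1+t)),
        Real.sqrt_mul (by linarith : (0:ℝ) ≤ 2*μ), hc]
      ring
    have hab : a + b * s ^ 2 = c * (1 - t/2) := by
      rw [ha, hb, htdef]; field_simp; ring
    have hw0 : (0:ℝ) ≤ 1 / Real.sqrt (1 - s ^ 2) := by positivity
    constructor
    · have h1 : a + b * s ^ 2 ≤ c * (1 / Real.sqrt (1 + t)) := by
        rw [hab]
        exact mul_le_mul_of_nonneg_left (duff_key_low ht) hcpos.le
      calc a * (1 / Real.sqrt (1 - s ^ 2)) + b * (s ^ 2 / Real.sqrt (1 - s ^ 2))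
          = (a + b * s ^ 2) * (1 / Real.sqrt (1 - s ^ 2)) := by ring
        _ ≤ (c * (1 / Real.sqrt (1 + t))) * (1 / Real.sqrt (1 - s ^ 2)) :=
            mul_le_mul_of_nonneg_right h1 hw0
        _ = 1 / Real.sqrt ((δ * s ^ 2 + (2*μ + δ)) * (1 - s ^ 2)) := hsplit.symm
    · have h2 : c * (1 / Real.sqrt (1 + t)) ≤ (a + b * s ^ 2) + r := by
        rw [hab, hr]
        have := duff_key_high ht
        have ht2 : t ^ 2 ≤ (δ/μ) ^ 2 := pow_le_pow_left₀ ht htle 2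
        nlinarith [hcpos]
      calc 1 / Real.sqrt ((δ * s ^ 2 + (2*μ + δ)) * (1 - s ^ 2))
          = (c * (1 / Real.sqrt (1 + t))) * (1 / Real.sqrt (1 - s ^ 2)) := hsplit
        _ ≤ ((a + b * s ^ 2) + r) * (1 / Real.sqrt (1 - s ^ 2)) :=
            mul_le_mul_of_nonneg_right h2 hw0
        _ = a * (1 / Real.sqrt (1 - s ^ 2)) + b * (s ^ 2 / Real.sqrt (1 - s ^ 2))
            + r * (1 / Real.sqrt (1 - s ^ 2)) := by ring
  -- integral values of the bounding functions
  have hIl : (∫ s in (0:ℝ)..1, (a * (1 / Real.sqrt (1 - s ^ 2)) + b * (s ^ 2 / Real.sqrt (1 - s ^ 2))))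
      = a * (Real.pi/2) + b * (Real.pi/4) := by
    rw [intervalIntegral.integral_add (duff_int_g1.const_mul a) (duff_int_g2.const_mul b),
      intervalIntegral.integral_const_mul, intervalIntegral.integral_const_mul, duff_J0, duff_J2]
  have hIu : (∫ s in (0:ℝ)..1, (a * (1 / Real.sqrt (1 - s ^ 2)) + b * (s ^ 2 / Real.sqrt (1 - s ^ 2))
      + r * (1 / Real.sqrt (1 - s ^ 2)))) = a * (Real.pi/2) + b * (Real.pi/4) + r * (Real.pi/2) := by
    rw [intervalIntegral.integral_add hint_l (duff_int_g1.const_mul r),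
      intervalIntegral.integral_const_mul, hIl, duff_J0]
  constructor
  · have := intervalIntegral.integral_mono_on (by norm_num : (0:ℝ) ≤ 1) hint_l hint_f
      (fun s hs => (key s hs).1)
    rw [hIl] at this
    refine le_trans (le_of_eq ?_) this
    rw [ha, hb, hc]; ring
  · have := intervalIntegral.integral_mono_on (by norm_num : (0:ℝ) ≤ 1) hint_f hint_u
      (fun s hs => (key s hs).2)
    rw [hIu] at this
    refine le_trans this (le_of_eq ?_)
    rw [ha, hb, hr, hc]; ring






open Filter

/-- With `μ > 0`, `Θ±(E) = √(μ² + 4E) ± μ` and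
`T(E) = 4√2 ∫₀¹ ds / √((Θ₋(E) s² + Θ₊(E))(1 − s²))` (the minimal period of the
Duffing solution with energy `E`), as `E → 0⁺` one has
`T(E) = (2π/√μ)(1 − 3E/(4μ²)) + o(E)` and consequently
`(2π/T(E))² = μ(1 + 3E/(2μ²)) + o(E)`, i.e.
`lim_{E→0⁺} [(2π/T(E))² − μ]/E = 3/(2μ)`. -/
theorem duffing_period_asymptotics
    (μ : ℝ) (hμ : 0 < μ) (T : ℝ → ℝ)
    (hT : ∀ E : ℝ, 0 < E →
      T E = 4 * Real.sqrt 2 * ∫ s in (0:ℝ)..1,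
        1 / Real.sqrt (((Real.sqrt (μ ^ 2 + 4 * E) - μ) * s ^ 2
          + (Real.sqrt (μ ^ 2 + 4 * E) + μ)) * (1 - s ^ 2))) :
    Tendsto (fun E : ℝ =>
        (T E - (2 * Real.pi / Real.sqrt μ) * (1 - 3 * E / (4 * μ ^ 2))) / E)
      (nhdsWithin 0 (Set.Ioi 0)) (nhds 0) ∧
    Tendsto (fun E : ℝ => ((2 * Real.pi / T E) ^ 2 - μ) / E)
      (nhdsWithin 0 (Set.Ioi 0)) (nhds (3 / (2 * μ))) := by
  have hsμ : 0 < Real.sqrt μ := Real.sqrt_pos.2 hμ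
  have hsq : Real.sqrt μ ^ 2 = μ := Real.sq_sqrt hμ.le
  set sμ : ℝ := Real.sqrt μ with hsμdef
  set D : ℝ → ℝ := fun E => Real.sqrt (μ^2 + 4*E) - μ with hD
  set W : ℝ → ℝ := fun E => 4 * D E / (2*μ + D E) with hW
  set P : ℝ → ℝ := fun E => (2 * Real.pi / sμ) * (1 - 3 * E / (4 * μ ^ 2)) with hP
  have key42 : ∀ X : ℝ, 4 * Real.sqrt 2 * ((1 / Real.sqrt (2*μ)) * X) = (4 / sμ) * X := by
    intro X
    rw [show Real.sqrt (2*μ) = Real.sqrt 2 * sμ from by rw [hsμdef, Real.sqrt_mul (by norm_num) μ]]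
    have h2n : Real.sqrt 2 ≠ 0 := by positivity
    field_simp
  -- facts about D for E > 0
  have hDfact : ∀ E : ℝ, 0 < E → 0 < D E ∧ D E * (2*μ + D E) = 4*E := by
    intro E hE
    have h1 : μ^2 < μ^2 + 4*E := by linarith
    have h2 : μ < Real.sqrt (μ^2 + 4*E) := by
      have := Real.sqrt_lt_sqrt (sq_nonneg μ) h1
      rwa [Real.sqrt_sq hμ.le] at this
    have h3 : Real.sqrt (μ^2 + 4*E) ^ 2 = μ^2 + 4*E := Real.sq_sqrt (by positivity)
    refine ⟨by simp only [hD]; linarith, ?_⟩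
    simp only [hD]
    nlinarith [h3]
  -- the two-sided bound for E > 0
  have hbound : ∀ E ∈ Set.Ioi (0:ℝ),
      (3*Real.pi/(8*μ^2*sμ)) * W E ≤ (T E - P E)/E ∧
      (T E - P E)/E ≤ (9*Real.pi/(8*μ^2*sμ)) * W E := by
    intro E hE
    rw [Set.mem_Ioi] at hE
    obtain ⟨hd0, hd4⟩ := hDfact E hE
    have hTE : T E = 4 * Real.sqrt 2 * ∫ s in (0:ℝ)..1,
        1 / Real.sqrt ((D E * s ^ 2 + (2*μ + D E)) * (1 - s ^ 2)) := by
      rw [hT E hE]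
      have him : ∀ s : ℝ, (Real.sqrt (μ ^ 2 + 4 * E) - μ) * s ^ 2
          + (Real.sqrt (μ ^ 2 + 4 * E) + μ) = D E * s ^ 2 + (2*μ + D E) := by
        intro s; simp only [hD]; ring
      simp only [him]
    obtain ⟨hIl, hIu⟩ := duff_I_bounds μ (D E) hμ hd0.le
    set d : ℝ := D E with hd
    clear_value d
    have hEeq : E = d * (2*μ + d) / 4 := by linear_combination (-1/4) * hd4
    have hWE : W E = 4 * d / (2*μ + d) := by simp only [hW]; rw [← hd]
    have h2μd : (0:ℝ) < 2*μ + d := by linarith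
    constructor
    · have hTlow : 4 * Real.sqrt 2 * ((1 / Real.sqrt (2*μ)) * ((1 - d/(4*μ)) * (Real.pi/2)
          - d/(4*μ) * (Real.pi/4))) ≤ T E := by
        rw [hTE]
        exact mul_le_mul_of_nonneg_left hIl (by positivity)
      calc (3*Real.pi/(8*μ^2*sμ)) * W E
          = (4 * Real.sqrt 2 * ((1 / Real.sqrt (2*μ)) * ((1 - d/(4*μ)) * (Real.pi/2)
              - d/(4*μ) * (Real.pi/4))) - P E)/E := by
            rw [key42, hWE, hP, hEeq]
            field_simp
            ring
        _ ≤ (T E - P E)/E := by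
            rw [div_le_div_iff_of_pos_right hE]
            linarith [hTlow]
    · have hTup : T E ≤ 4 * Real.sqrt 2 * ((1 / Real.sqrt (2*μ)) * ((1 - d/(4*μ)) * (Real.pi/2)
          - d/(4*μ) * (Real.pi/4) + 3/8 * (d/μ)^2 * (Real.pi/2))) := by
        rw [hTE]
        exact mul_le_mul_of_nonneg_left hIu (by positivity)
      calc (T E - P E)/E
          ≤ (4 * Real.sqrt 2 * ((1 / Real.sqrt (2*μ)) * ((1 - d/(4*μ)) * (Real.pi/2)
              - d/(4*μ) * (Real.pi/4) + 3/8 * (d/μ)^2 * (Real.pi/2))) - P E)/E := by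
            rw [div_le_div_iff_of_pos_right hE]
            linarith [hTup]
        _ = (9*Real.pi/(8*μ^2*sμ)) * W E := by
            rw [key42, hWE, hP, hEeq]
            field_simp
            ring
  -- W tends to 0
  have hWt : Tendsto W (nhdsWithin 0 (Set.Ioi 0)) (nhds 0) := by
    have hDc : Continuous D := by
      rw [hD]
      exact (Real.continuous_sqrt.comp (continuous_const.add (continuous_const.mul continuous_id))).sub continuous_const
    have hD0 : D 0 = 0 := by
      simp only [hD]
      rw [show μ^2 + 4*0 = μ^2 by ring, Real.sqrt_sq hμ.le]
      ring
    have hWc : ContinuousAt W 0 := by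
      apply ContinuousAt.div
      · exact (continuous_const.mul hDc).continuousAt
      · exact (continuous_const.add hDc).continuousAt
      · rw [hD0]; simp; linarith
    have := hWc.tendsto.mono_left (nhdsWithin_le_nhds (s := Set.Ioi (0:ℝ)))
    rwa [show W 0 = 0 by rw [hW]; simp only; rw [hD0]; simp] at this
  -- Part 1
  have h1 : Tendsto (fun E : ℝ => (T E - P E)/E) (nhdsWithin 0 (Set.Ioi 0)) (nhds 0) := by
    apply tendsto_of_tendsto_of_tendsto_of_le_of_le'
      (g := fun E => (3*Real.pi/(8*μ^2*sμ)) * W E) (h := fun E => (9*Real.pi/(8*μ^2*sμ)) * W E)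
    · simpa using hWt.const_mul (3*Real.pi/(8*μ^2*sμ))
    · simpa using hWt.const_mul (9*Real.pi/(8*μ^2*sμ))
    · exact (eventually_mem_nhdsWithin (α := ℝ) (a := 0) (s := Set.Ioi 0)).mono
        (fun E hE => (hbound E hE).1)
    · exact (eventually_mem_nhdsWithin (α := ℝ) (a := 0) (s := Set.Ioi 0)).mono
        (fun E hE => (hbound E hE).2)
  refine ⟨h1, ?_⟩
  -- Part 2
  have hEne : ∀ᶠ E in nhdsWithin (0:ℝ) (Set.Ioi 0), (0:ℝ) < E :=
    eventually_mem_nhdsWithin.mono (fun E hE => hE)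
  have hPt : Tendsto P (nhdsWithin 0 (Set.Ioi 0)) (nhds (2 * Real.pi / sμ)) := by
    have : ContinuousAt P 0 := by rw [hP]; fun_prop
    have h := this.tendsto.mono_left (nhdsWithin_le_nhds (s := Set.Ioi (0:ℝ)))
    rwa [show P 0 = 2 * Real.pi / sμ by rw [hP]; simp] at h
  have hT0 : Tendsto T (nhdsWithin 0 (Set.Ioi 0)) (nhds (2 * Real.pi / sμ)) := by
    have hid : Tendsto (fun E : ℝ => E) (nhdsWithin 0 (Set.Ioi 0)) (nhds 0) :=
      tendsto_id.mono_left (nhdsWithin_le_nhds (s := Set.Ioi (0:ℝ)))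
    have h2 := hPt.add (hid.mul h1)
    rw [show 2 * Real.pi / sμ + 0 * 0 = 2 * Real.pi / sμ by ring] at h2
    apply h2.congr'
    filter_upwards [hEne] with E hE
    field_simp
    ring
  have hq : Tendsto (fun E : ℝ => (T E - 2 * Real.pi / sμ)/E) (nhdsWithin 0 (Set.Ioi 0))
      (nhds (-(3 * Real.pi / (2 * μ^2 * sμ)))) := by
    have h2 := h1.add (tendsto_const_nhds (x := -(3 * Real.pi / (2 * μ^2 * sμ))))
    rw [zero_add] at h2
    apply h2.congr'
    filter_upwards [hEne] with E hE
    rw [hP]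
    field_simp
    ring
  have hTpos : ∀ᶠ E in nhdsWithin (0:ℝ) (Set.Ioi 0), 0 < T E :=
    hT0.eventually (eventually_gt_nhds (by positivity))
  have hfac : Tendsto (fun E : ℝ => -μ * (T E + 2 * Real.pi / sμ) / (T E)^2)
      (nhdsWithin 0 (Set.Ioi 0))
      (nhds (-μ * (2 * Real.pi / sμ + 2 * Real.pi / sμ) / (2 * Real.pi / sμ)^2)) := by
    apply Tendsto.div
    · exact (hT0.add tendsto_const_nhds).const_mul (-μ)
    · exact hT0.pow 2
    · positivity
  have hfinal := hfac.mul hq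
  have hval : -μ * (2 * Real.pi / sμ + 2 * Real.pi / sμ) / (2 * Real.pi / sμ)^2
      * -(3 * Real.pi / (2 * μ^2 * sμ)) = 3 / (2*μ) := by
    have hπ : Real.pi ≠ 0 := Real.pi_ne_zero
    rw [show μ = sμ^2 from hsq.symm]
    field_simp
    ring
  rw [hval] at hfinal
  apply hfinal.congr'
  filter_upwards [hEne, hTpos] with E hE hTE
  have hTne : T E ≠ 0 := ne_of_gt hTE
  have hEne' : E ≠ 0 := ne_of_gt hE
  rw [show μ = sμ^2 from hsq.symm]
  field_simp
  ring
end
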